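/- arXiv:2002.08359 — 7 statements merged into one kernel-verified Lean document; each statement's English description precedes it below -/
import Mathlib

section
/- The real line can be partitioned into continuum many pairwise disjoint Cantor sets (i.e., nonempty compact subsets of ℝ that are totally disconnected and have no isolated points). -/
/-- A Cantor set in ℝ: nonempty, compact, totally disconnected, with no isolated points. -/
def IsCantorSet (C : Set ℝ) : Prop :=
  C.Nonempty ∧ IsCompact C ∧ IsTotallyDisconnected C ∧ Perfect C

open Set Filter Topology

noncomputable section

namespace CantorPart

/-- the `i`-th gap -/
def gap (y : ℕ → ℕ) (b : ℕ → Bool) (i : ℕ) : ℕ := 2 * y i + (b i).toNat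

/-- positions sequence -/
def qseq (y : ℕ → ℕ) (b : ℕ → Bool) (n : ℕ) : ℕ :=
  n + ∑ i ∈ Finset.range (n + 1), gap y b i

lemma qseq_succ (y : ℕ → ℕ) (b : ℕ → Bool) (n : ℕ) :
    qseq y b (n + 1) = qseq y b n + 1 + gap y b (n + 1) := by
  simp [qseq, Finset.sum_range_succ]; ring

lemma qseq_strictMono (y : ℕ → ℕ) (b : ℕ → Bool) : StrictMono (qseq y b) := by
  apply strictMono_nat_of_lt_succ
  intro n; rw [qseq_succ]; omega

lemma qseq_ge (y : ℕ → ℕ) (b : ℕ → Bool) (n : ℕ) : n ≤ qseq y b n := Nat.le_add_right _ _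

/-- summand -/
def A (q : ℕ → ℕ) (n : ℕ) : ℝ := (1 / 2 : ℝ) ^ (q n + 1)

lemma A_pos (q : ℕ → ℕ) (n : ℕ) : 0 < A q n := by unfold A; positivity

lemma A_le {q : ℕ → ℕ} {n : ℕ} (h : n ≤ q n) : A q n ≤ (1 / 2 : ℝ) ^ (n + 1) := by
  apply pow_le_pow_of_le_one (by norm_num) (by norm_num); omega

lemma summable_geom_half : Summable (fun n : ℕ => (1 / 2 : ℝ) ^ (n + 1)) := by
  have : Summable (fun n : ℕ => (1 / 2 : ℝ) * (1 / 2) ^ n) :=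
    summable_geometric_two.mul_left _
  refine this.congr fun n => ?_
  rw [pow_succ]; ring

lemma summable_A {q : ℕ → ℕ} (hq : ∀ n, n ≤ q n) : Summable (A q) :=
  Summable.of_nonneg_of_le (fun n => (A_pos q n).le) (fun n => A_le (hq n)) summable_geom_half

/-- sum of the series -/
def W (q : ℕ → ℕ) : ℝ := ∑' n, A q n

lemma tail_geom (c : ℕ) : ∑' j : ℕ, (1 / 2 : ℝ) ^ (c + j + 1) = (1 / 2 : ℝ) ^ c := by
  have h : ∀ j : ℕ, (1 / 2 : ℝ) ^ (c + j + 1) = (1 / 2 : ℝ) ^ (c + 1) * (1 / 2) ^ j := by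
    intro j; rw [← pow_add]; ring_nf
  rw [tsum_congr h, tsum_mul_left, tsum_geometric_two]
  rw [pow_succ]; ring

lemma strictMono_add_le {q : ℕ → ℕ} (hq : StrictMono q) (m j : ℕ) : q m + j ≤ q (j + m) := by
  induction j with
  | zero => simp
  | succ j ih =>
    have : q (j + m) < q (j + m + 1) := hq (by omega)
    have : q (j + m + 1) = q (j + 1 + m) := by ring_nf
    omega

lemma summable_A_tail {q : ℕ → ℕ} (hq : StrictMono q) (m : ℕ) :
    Summable (fun j => A q (j + m)) :=
  (summable_nat_add_iff m).2 (summable_A fun n => hq.le_apply)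

lemma tsum_tail_le {q : ℕ → ℕ} (hq : StrictMono q) (m : ℕ) :
    ∑' j : ℕ, A q (j + m) ≤ (1 / 2 : ℝ) ^ q m := by
  have hb : ∀ j, A q (j + m) ≤ (1 / 2 : ℝ) ^ (q m + j + 1) := by
    intro j
    apply pow_le_pow_of_le_one (by norm_num) (by norm_num)
    have := strictMono_add_le hq m j
    omega
  calc ∑' j : ℕ, A q (j + m) ≤ ∑' j : ℕ, (1 / 2 : ℝ) ^ (q m + j + 1) := by
        refine Summable.tsum_le_tsum hb (summable_A_tail hq m) ?_
        have : Summable (fun j : ℕ => (1 / 2 : ℝ) ^ (q m + 1) * (1 / 2) ^ j) :=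
          summable_geometric_two.mul_left _
        refine this.congr fun j => ?_
        rw [← pow_add]; ring_nf
    _ = (1 / 2 : ℝ) ^ q m := tail_geom _

lemma tsum_tail_nonneg (q : ℕ → ℕ) (m : ℕ) : 0 ≤ ∑' j : ℕ, A q (j + m) :=
  tsum_nonneg fun j => (A_pos q _).le

lemma W_pos {q : ℕ → ℕ} (hq : ∀ n, n ≤ q n) : 0 < W q :=
  Summable.tsum_pos (summable_A hq) (fun n => (A_pos q n).le) 0 (A_pos q 0)

lemma W_le_one {q : ℕ → ℕ} (hq : StrictMono q) : W q ≤ 1 := by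
  have h := tsum_tail_le hq 0
  have h2 : ∑' j : ℕ, A q (j + 0) = W q := by simp [W]
  have h3 : (1 / 2 : ℝ) ^ q 0 ≤ 1 := pow_le_one₀ (by norm_num) (by norm_num)
  rw [h2] at h; linarith

lemma W_lt {q q' : ℕ → ℕ} (hq : StrictMono q) (hq' : StrictMono q') {m : ℕ}
    (hpre : ∀ i < m, q i = q' i) (hm : q m < q' m) : W q' < W q := by
  have hsq := summable_A (fun n => hq.le_apply)
  have hsq' := summable_A (fun n => hq'.le_apply)
  rw [W, W, ← Summable.sum_add_tsum_nat_add m hsq, ← Summable.sum_add_tsum_nat_add m hsq']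
  have hprefix : ∑ i ∈ Finset.range m, A q i = ∑ i ∈ Finset.range m, A q' i := by
    refine Finset.sum_congr rfl fun i hi => ?_
    rw [A, A, hpre i (Finset.mem_range.1 hi)]
  rw [hprefix]
  apply add_lt_add_right
  have hup : ∑' j : ℕ, A q' (j + m) ≤ (1 / 2 : ℝ) ^ (q m + 1) := by
    refine (tsum_tail_le hq' m).trans ?_
    apply pow_le_pow_of_le_one (by norm_num) (by norm_num); omega
  have hlow : A q m + A q (1 + m) ≤ ∑' j : ℕ, A q (j + m) := by
    have := Summable.sum_le_tsum (Finset.range 2) (fun j _ => (A_pos q (j + m)).le) (summable_A_tail hq m)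
    simpa [Finset.sum_range_succ] using this
  have : (1 / 2 : ℝ) ^ (q m + 1) = A q m := rfl
  have hpos := A_pos q (1 + m)
  linarith

lemma W_inj {q q' : ℕ → ℕ} (hq : StrictMono q) (hq' : StrictMono q') (h : W q = W q') :
    q = q' := by
  by_contra hne
  have hex : ∃ n, q n ≠ q' n := by
    by_contra hc
    push_neg at hc
    exact hne (funext hc)
  classical
  have hm : q (Nat.find hex) ≠ q' (Nat.find hex) := Nat.find_spec hex
  have hpre : ∀ i < Nat.find hex, q i = q' i := fun i hi =>
    not_not.mp (Nat.find_min hex hi)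
  rcases lt_or_gt_of_ne hm with h1 | h1
  · exact absurd h (W_lt hq hq' hpre h1).ne'
  · exact absurd h (W_lt hq' hq (fun i hi => (hpre i hi).symm) h1).ne

lemma qseq_inj {y y' : ℕ → ℕ} {b b' : ℕ → Bool} (h : qseq y b = qseq y' b') :
    y = y' ∧ b = b' := by
  have hg : ∀ n, gap y b n = gap y' b' n := by
    intro n
    induction n with
    | zero =>
      have := congrFun h 0
      simpa [qseq] using this
    | succ n ih =>
      have h1 := congrFun h n
      have h2 := congrFun h (n + 1)
      rw [qseq_succ, qseq_succ] at h2
      omega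
  refine ⟨funext fun n => ?_, funext fun n => ?_⟩ <;>
    · have := hg n
      unfold gap at this
      revert this
      cases b n <;> cases b' n <;> simp <;> omega

/-- The parametrization of one Cantor set. -/
def Vm (c : ℝ) (y : ℕ → ℕ) (b : ℕ → Bool) : ℝ := c + (1 - W (qseq y b))

/-- One Cantor set of the partition. -/
def T (c : ℝ) (y : ℕ → ℕ) : Set ℝ := Set.range (Vm c y)

lemma Vm_mem (c : ℝ) (y : ℕ → ℕ) (b : ℕ → Bool) : Vm c y b ∈ Ico c (c + 1) := by
  have h1 := W_pos (q := qseq y b) (qseq_ge y b)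
  have h2 := W_le_one (qseq_strictMono y b)
  constructor <;> simp [Vm] <;> linarith

lemma Vm_injective (c : ℝ) (y : ℕ → ℕ) : Function.Injective (Vm c y) := by
  intro b b' h
  have hW : W (qseq y b) = W (qseq y b') := by
    unfold Vm at h; linarith
  exact (qseq_inj (W_inj (qseq_strictMono y b) (qseq_strictMono y b') hW)).2

lemma Vm_eq_args {c : ℝ} {y y' : ℕ → ℕ} {b b' : ℕ → Bool}
    (h : Vm c y b = Vm c y' b') : y = y' ∧ b = b' := by
  have hW : W (qseq y b) = W (qseq y' b') := by
    unfold Vm at h; linarith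
  exact qseq_inj (W_inj (qseq_strictMono y b) (qseq_strictMono y' b') hW)

lemma continuous_Vm (c : ℝ) (y : ℕ → ℕ) : Continuous (Vm c y) := by
  have hW : Continuous fun b : ℕ → Bool => W (qseq y b) := by
    apply continuous_tsum (u := fun n : ℕ => (1 / 2 : ℝ) ^ (n + 1))
    · intro n
      have heq : (fun b : ℕ → Bool => A (qseq y b) n) =
          fun b : ℕ → Bool => (1 / 2 : ℝ) ^ (n + 1) *
            ∏ i ∈ Finset.range (n + 1), (1 / 2 : ℝ) ^ gap y b i := by
        funext b
        rw [A, Finset.prod_pow_eq_pow_sum, ← pow_add]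
        congr 1
        rw [qseq]
        omega
      rw [heq]
      refine continuous_const.mul (continuous_finset_prod _ fun i _ => ?_)
      have hcont : Continuous fun v : Bool => (1 / 2 : ℝ) ^ (2 * y i + v.toNat) :=
        continuous_of_discreteTopology
      exact hcont.comp (continuous_apply i)
    · exact summable_geom_half
    · intro n b
      have := A_le (q := qseq y b) (n := n) (qseq_ge y b n)
      have := (A_pos (qseq y b) n).le
      rw [Real.norm_eq_abs, abs_of_nonneg] <;> assumption
  exact continuous_const.add (continuous_const.sub hW)

lemma isCompact_T (c : ℝ) (y : ℕ → ℕ) : IsCompact (T c y) :=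
  isCompact_range (continuous_Vm c y)

lemma isTotallyDisconnected_T (c : ℝ) (y : ℕ → ℕ) : IsTotallyDisconnected (T c y) := by
  have he : Topology.IsEmbedding (Vm c y) :=
    ((continuous_Vm c y).isClosedEmbedding (Vm_injective c y)).toIsEmbedding
  exact he.isTotallyDisconnected_range.mpr inferInstance

lemma qseq_prefix_eq (y : ℕ → ℕ) (b : ℕ → Bool) (k : ℕ) (v : Bool) :
    ∀ n < k, qseq y (Function.update b k v) n = qseq y b n := by
  intro n hn
  unfold qseq
  congr 1
  refine Finset.sum_congr rfl fun i hi => ?_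
  have hik : i ≠ k := by
    have := Finset.mem_range.1 hi; omega
  unfold gap
  rw [Function.update_of_ne hik]

lemma Vm_update_dist (c : ℝ) (y : ℕ → ℕ) (b : ℕ → Bool) (k : ℕ) (v : Bool) :
    |Vm c y (Function.update b k v) - Vm c y b| ≤ 2 * (1 / 2 : ℝ) ^ k := by
  have hsm := qseq_strictMono y b
  have hsm' := qseq_strictMono y (Function.update b k v)
  have h1 : Vm c y (Function.update b k v) - Vm c y b =
      W (qseq y b) - W (qseq y (Function.update b k v)) := by
    unfold Vm; ring
  rw [h1, W, W, ← Summable.sum_add_tsum_nat_add k (summable_A (fun n => hsm.le_apply)),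
    ← Summable.sum_add_tsum_nat_add k (summable_A (fun n => hsm'.le_apply))]
  have hprefix : ∑ i ∈ Finset.range k, A (qseq y b) i =
      ∑ i ∈ Finset.range k, A (qseq y (Function.update b k v)) i := by
    refine Finset.sum_congr rfl fun i hi => ?_
    rw [A, A, qseq_prefix_eq y b k v i (Finset.mem_range.1 hi)]
  rw [← hprefix]
  have ht1 : ∑' j : ℕ, A (qseq y b) (j + k) ≤ (1 / 2 : ℝ) ^ qseq y b k := tsum_tail_le hsm k
  have ht2 : ∑' j : ℕ, A (qseq y (Function.update b k v)) (j + k) ≤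
      (1 / 2 : ℝ) ^ qseq y (Function.update b k v) k := tsum_tail_le hsm' k
  have hk1 : (1 / 2 : ℝ) ^ qseq y b k ≤ (1 / 2 : ℝ) ^ k :=
    pow_le_pow_of_le_one (by norm_num) (by norm_num) (qseq_ge y b k)
  have hk2 : (1 / 2 : ℝ) ^ qseq y (Function.update b k v) k ≤ (1 / 2 : ℝ) ^ k :=
    pow_le_pow_of_le_one (by norm_num) (by norm_num) (qseq_ge y _ k)
  have hn1 := tsum_tail_nonneg (qseq y b) k
  have hn2 := tsum_tail_nonneg (qseq y (Function.update b k v)) k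
  rw [abs_le]
  constructor <;> · simp only [add_sub_add_left_eq_sub] <;> linarith

lemma perfect_T (c : ℝ) (y : ℕ → ℕ) : Perfect (T c y) := by
  constructor
  · exact (isCompact_T c y).isClosed
  · intro x hx
    rw [accPt_iff_nhds]
    intro U hU
    obtain ⟨b, rfl⟩ := hx
    obtain ⟨ε, hε, hball⟩ := Metric.mem_nhds_iff.mp hU
    obtain ⟨k, hk⟩ : ∃ k : ℕ, (1 / 2 : ℝ) ^ k < ε / 2 := by
      obtain ⟨k, hk⟩ := exists_pow_lt_of_lt_one (by positivity : (0:ℝ) < ε / 2)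
        (by norm_num : (1 / 2 : ℝ) < 1)
      exact ⟨k, hk⟩
    refine ⟨Vm c y (Function.update b k (! b k)), ⟨?_, ⟨_, rfl⟩⟩, ?_⟩
    · apply hball
      rw [Metric.mem_ball, Real.dist_eq]
      have := Vm_update_dist c y b k (! b k)
      linarith
    · intro hcontra
      have hb := (Vm_eq_args hcontra).2
      have : Function.update b k (! b k) k = b k := by rw [hb]
      rw [Function.update_self] at this
      cases b k <;> simp at this

lemma nonempty_T (c : ℝ) (y : ℕ → ℕ) : (T c y).Nonempty :=
  ⟨Vm c y (fun _ => false), ⟨_, rfl⟩⟩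

lemma isCantorSet_T (c : ℝ) (y : ℕ → ℕ) : IsCantorSet (T c y) :=
  ⟨nonempty_T c y, isCompact_T c y, isTotallyDisconnected_T c y, perfect_T c y⟩

lemma T_subset (c : ℝ) (y : ℕ → ℕ) : T c y ⊆ Ico c (c + 1) := by
  rintro x ⟨b, rfl⟩; exact Vm_mem c y b

/-- Greedy expansion: every `t ∈ (0,1]` is `W p` for a strictly monotone `p`. -/
lemma exists_W {t : ℝ} (h0 : 0 < t) (h1 : t ≤ 1) :
    ∃ p : ℕ → ℕ, StrictMono p ∧ W p = t := by
  classical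
  have ex : ∀ r : ℝ, 0 < r → ∃ k : ℕ, (1 / 2 : ℝ) ^ (k + 1) < r := by
    intro r hr
    obtain ⟨k, hk⟩ := exists_pow_lt_of_lt_one hr (by norm_num : (1 / 2 : ℝ) < 1)
    refine ⟨k, lt_of_le_of_lt ?_ hk⟩
    apply pow_le_pow_of_le_one (by norm_num) (by norm_num); omega
  let F : ℕ → {r : ℝ // 0 < r} := fun n => Nat.rec ⟨t, h0⟩
    (fun _ prev => ⟨prev.1 - (1 / 2) ^ (Nat.find (ex prev.1 prev.2) + 1), by
      have := Nat.find_spec (ex prev.1 prev.2); linarith⟩) n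
  let p : ℕ → ℕ := fun n => Nat.find (ex (F n).1 (F n).2)
  have hspec : ∀ n, (1 / 2 : ℝ) ^ (p n + 1) < (F n).1 := fun n => Nat.find_spec (ex (F n).1 (F n).2)
  have hFsucc : ∀ n, (F (n + 1)).1 = (F n).1 - (1 / 2) ^ (p n + 1) := fun n => rfl
  have hdec : ∀ n, (F (n + 1)).1 < (F n).1 := by
    intro n; rw [hFsucc]; have : (0:ℝ) < (1/2:ℝ)^(p n + 1) := by positivity
    linarith
  have hFle1 : ∀ n, (F n).1 ≤ 1 := by
    intro n
    induction n with
    | zero => exact h1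
    | succ n ih => exact le_of_lt (lt_of_lt_of_le (hdec n) ih)
  have hle : ∀ n, (F n).1 ≤ (1 / 2 : ℝ) ^ p n := by
    intro n
    cases hp : p n with
    | zero => simpa using hFle1 n
    | succ m =>
      have hmin : ¬ ((1 / 2 : ℝ) ^ (m + 1) < (F n).1) :=
        Nat.find_min (ex (F n).1 (F n).2) (show m < p n by omega)
      push_neg at hmin
      exact hmin
  have hFsucc_le : ∀ n, (F (n + 1)).1 ≤ (1 / 2 : ℝ) ^ (p n + 1) := by
    intro n
    rw [hFsucc]
    have h2 : (1 / 2 : ℝ) ^ p n = 2 * (1 / 2 : ℝ) ^ (p n + 1) := by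
      rw [pow_succ]; ring
    have := hle n
    linarith
  have hsm : StrictMono p := by
    apply strictMono_nat_of_lt_succ
    intro n
    by_contra hc
    push_neg at hc
    have h2 : (1 / 2 : ℝ) ^ (p n + 1) ≤ (1 / 2 : ℝ) ^ (p (n + 1) + 1) := by
      apply pow_le_pow_of_le_one (by norm_num) (by norm_num); omega
    have h3 := hspec (n + 1)
    have h4 := hFsucc_le n
    linarith
  have hsumF : ∀ n, (F n).1 = t - ∑ i ∈ Finset.range n, (1 / 2 : ℝ) ^ (p i + 1) := by
    intro n
    induction n with
    | zero =>
      simp only [Finset.range_zero, Finset.sum_empty, sub_zero]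
      rfl
    | succ n ih => rw [hFsucc, ih, Finset.sum_range_succ]; ring
  have hF0 : Tendsto (fun n => (F n).1) atTop (𝓝 0) := by
    apply squeeze_zero (fun n => (F n).2.le)
    · intro n
      calc (F n).1 ≤ (1 / 2 : ℝ) ^ p n := hle n
        _ ≤ (1 / 2 : ℝ) ^ n :=
          pow_le_pow_of_le_one (by norm_num) (by norm_num) hsm.le_apply
    · exact tendsto_pow_atTop_nhds_zero_of_lt_one (by norm_num) (by norm_num)
  refine ⟨p, hsm, ?_⟩
  have hsum : Summable (A p) := summable_A (fun n => hsm.le_apply)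
  have htend1 : Tendsto (fun n => ∑ i ∈ Finset.range n, A p i) atTop (𝓝 (W p)) :=
    hsum.hasSum.tendsto_sum_nat
  have htend2 : Tendsto (fun n => ∑ i ∈ Finset.range n, A p i) atTop (𝓝 t) := by
    have heq : ∀ n, ∑ i ∈ Finset.range n, A p i = t - (F n).1 := by
      intro n; rw [hsumF]; simp [A]
    rw [funext heq]
    have := (tendsto_const_nhds (x := t) (f := atTop)).sub hF0
    simpa using this
  exact tendsto_nhds_unique htend1 htend2

/-- every point of `[c, c+1)` lies in some `T c y`. -/
lemma exists_mem_T (c : ℝ) {x : ℝ} (hx : x ∈ Ico c (c + 1)) : ∃ y, x ∈ T c y := by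
  obtain ⟨hx1, hx2⟩ := hx
  obtain ⟨p, hsm, hW⟩ := exists_W (t := 1 - (x - c)) (by linarith) (by linarith)
  classical
  let g : ℕ → ℕ := fun n => Nat.rec (p 0) (fun m _ => p (m + 1) - p m - 1) n
  have hg0 : g 0 = p 0 := rfl
  have hgsucc : ∀ n, g (n + 1) = p (n + 1) - p n - 1 := fun n => rfl
  refine ⟨fun n => g n / 2, ⟨fun n => decide (g n % 2 = 1), ?_⟩⟩
  have hgap : ∀ n, gap (fun n => g n / 2) (fun n => decide (g n % 2 = 1)) n = g n := by
    intro n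
    unfold gap
    rcases Nat.mod_two_eq_zero_or_one (g n) with h | h <;> simp [h] <;> omega
  have hq : qseq (fun n => g n / 2) (fun n => decide (g n % 2 = 1)) = p := by
    funext n
    induction n with
    | zero =>
      show 0 + ∑ i ∈ Finset.range 1, gap _ _ i = p 0
      rw [Finset.sum_range_one, hgap 0, hg0]
      omega
    | succ n ih =>
      have h2 := hsm (show n < n + 1 by omega)
      rw [qseq_succ, ih, hgap (n + 1), hgsucc n]
      omega
  rw [Vm, hq, hW]
  ring

lemma T_eq_args {n n' : ℤ} {y y' : ℕ → ℕ} {x : ℝ}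
    (hx : x ∈ T (n : ℝ) y) (hx' : x ∈ T (n' : ℝ) y') : n = n' ∧ y = y' := by
  obtain ⟨b, rfl⟩ := hx
  obtain ⟨b', hb'⟩ := hx'
  have h1 := Vm_mem (n : ℝ) y b
  have h2 := Vm_mem (n' : ℝ) y' b'
  rw [hb'] at h2
  obtain ⟨ha1, ha2⟩ := h1
  obtain ⟨hb1, hb2⟩ := h2
  have hnn' : n = n' := by
    have c1 : (n' : ℝ) < n + 1 := lt_of_le_of_lt hb1 ha2
    have c2 : (n : ℝ) < n' + 1 := lt_of_le_of_lt ha1 hb2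
    have d1 : (n' : ℝ) < ((n + 1 : ℤ) : ℝ) := by push_cast; linarith
    have d2 : (n : ℝ) < ((n' + 1 : ℤ) : ℝ) := by push_cast; linarith
    have e1 : n' < n + 1 := by exact_mod_cast d1
    have e2 : n < n' + 1 := by exact_mod_cast d2
    omega
  subst hnn'
  exact ⟨rfl, (Vm_eq_args hb'.symm).1⟩

end CantorPart

end

open CantorPart

theorem real_line_partition_into_continuum_cantor_sets :
    ∃ P : Set (Set ℝ), Cardinal.mk P = Cardinal.continuum ∧
      (∀ A ∈ P, IsCantorSet A) ∧ P.PairwiseDisjoint id ∧ ⋃₀ P = Set.univ := by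
  classical
  refine ⟨Set.range (fun p : ℤ × (ℕ → ℕ) => T (p.1 : ℝ) p.2), ?_, ?_, ?_, ?_⟩
  · have hinj : Function.Injective (fun p : ℤ × (ℕ → ℕ) => T (p.1 : ℝ) p.2) := by
      rintro ⟨n, y⟩ ⟨n', y'⟩ h
      simp only at h
      obtain ⟨x, hx⟩ := nonempty_T (n : ℝ) y
      have hx' : x ∈ T (n' : ℝ) y' := h ▸ hx
      obtain ⟨h1, h2⟩ := T_eq_args hx hx'
      simp [h1, h2]
    have hmk : Cardinal.mk ↥(Set.range fun p : ℤ × (ℕ → ℕ) => T (p.1 : ℝ) p.2) =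
        Cardinal.mk (ℤ × (ℕ → ℕ)) := by
      have := Cardinal.mk_range_eq_of_injective hinj
      simpa using this
    rw [hmk]
    have h1 : Cardinal.mk (ℕ → ℕ) = Cardinal.continuum := by
      rw [← Cardinal.power_def, Cardinal.mk_nat, Cardinal.aleph0_power_aleph0]
    rw [Cardinal.mk_prod, Cardinal.mk_int, h1]
    simp [Cardinal.aleph0_mul_continuum]
  · rintro A ⟨⟨n, y⟩, rfl⟩
    exact isCantorSet_T _ _
  · rintro A ⟨⟨n, y⟩, rfl⟩ B ⟨⟨n', y'⟩, rfl⟩ hne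
    simp only [Function.onFun, id_eq]
    rw [Set.disjoint_left]
    intro x hxA hxB
    obtain ⟨h1, h2⟩ := T_eq_args hxA hxB
    exact hne (by simp [h1, h2])
  · ext x
    simp only [Set.mem_sUnion, Set.mem_univ, iff_true, Set.mem_range]
    have hx : x ∈ Set.Ico ((⌊x⌋ : ℝ)) ((⌊x⌋ : ℝ) + 1) :=
      ⟨Int.floor_le x, Int.lt_floor_add_one x⟩
    obtain ⟨y, hy⟩ := CantorPart.exists_mem_T _ hx
    exact ⟨T (⌊x⌋ : ℝ) y, ⟨⟨⌊x⌋, y⟩, rfl⟩, hy⟩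
end

section
/- There exists a family H of pairwise disjoint Cantor sets in ℝ, each of Lebesgue measure zero, such that every nonempty open interval of ℝ contains continuum many members of H. -/
namespace CantorFamily

open Set MeasureTheory Filter Topology ENNReal

/-! ### The digit value function and weights -/

noncomputable def v (b : Bool) : ℝ := if b then 2 else 0

lemma v_nonneg (b : Bool) : 0 ≤ v b := by cases b <;> simp [v]

lemma v_le (b : Bool) : v b ≤ 2 := by cases b <;> simp [v]

noncomputable def w (i : ℕ) : ℝ := (3 : ℝ)⁻¹ ^ (i + 1)

lemma w_pos (i : ℕ) : 0 < w i := by unfold w; positivity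

lemma summable_w : Summable w := by
  have : Summable (fun i : ℕ => (3 : ℝ)⁻¹ ^ i * (3 : ℝ)⁻¹) :=
    (summable_geometric_of_lt_one (by norm_num) (by norm_num)).mul_right _
  refine this.congr fun i => ?_
  rw [w, pow_succ]

lemma tsum_w : ∑' i, w i = 2⁻¹ := by
  have : ∀ i : ℕ, w i = (3 : ℝ)⁻¹ ^ i * (3 : ℝ)⁻¹ := fun i => by rw [w, pow_succ]
  rw [tsum_congr this, tsum_mul_right, tsum_geometric_of_lt_one (by norm_num) (by norm_num)]
  norm_num

lemma tsum_w_add (n : ℕ) : ∑' j, w (j + n) = (3 : ℝ)⁻¹ ^ n * 2⁻¹ := by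
  have : ∀ j : ℕ, w (j + n) = (3 : ℝ)⁻¹ ^ n * w j := fun j => by
    rw [w, w]; ring
  rw [tsum_congr this, tsum_mul_left, tsum_w]

/-! ### The Cantor map -/

noncomputable def e (a : ℕ → Bool) : ℝ := ∑' i, v (a i) * w i

lemma summable_e (a : ℕ → Bool) : Summable (fun i => v (a i) * w i) := by
  refine Summable.of_nonneg_of_le (fun i => mul_nonneg (v_nonneg _) (w_pos i).le)
    (fun i => mul_le_mul_of_nonneg_right (v_le _) (w_pos i).le) (summable_w.mul_left 2)

lemma e_nonneg (a : ℕ → Bool) : 0 ≤ e a :=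
  tsum_nonneg fun i => mul_nonneg (v_nonneg _) (w_pos i).le

lemma e_le_one (a : ℕ → Bool) : e a ≤ 1 := by
  have h : e a ≤ ∑' i, 2 * w i := by
    refine Summable.tsum_le_tsum (fun i => mul_le_mul_of_nonneg_right (v_le _) (w_pos i).le)
      (summable_e a) (summable_w.mul_left 2)
  rw [tsum_mul_left, tsum_w] at h
  linarith

lemma e_sub (a b : ℕ → Bool) :
    e a - e b = ∑' i, (v (a i) - v (b i)) * w i := by
  rw [e, e, ← Summable.tsum_sub (summable_e a) (summable_e b)]
  exact tsum_congr fun i => by ring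

lemma e_sep {a b : ℕ → Bool} {i : ℕ} (hj : ∀ j < i, a j = b j)
    (ha : a i = true) (hb : b i = false) : w i ≤ e a - e b := by
  set d : ℕ → ℝ := fun j => (v (a j) - v (b j)) * w j with hd_def
  have hd : Summable d := ((summable_e a).sub (summable_e b)).congr fun j => by
    simp [hd_def]; ring
  rw [e_sub, ← Summable.sum_add_tsum_nat_add (i + 1) hd]
  have h1 : ∑ j ∈ Finset.range (i + 1), d j = 2 * w i := by
    rw [Finset.sum_eq_single i]
    · simp [hd_def, ha, hb, v]
    · intro j hjmem hjne
      have hji : j < i := by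
        have := Finset.mem_range.1 hjmem; omega
      simp [hd_def, hj j hji]
    · intro h; exact absurd (Finset.self_mem_range_succ i) h
  have h2 : -(w i) ≤ ∑' j, d (j + (i + 1)) := by
    have hsumm : Summable (fun j => d (j + (i + 1))) :=
      (summable_nat_add_iff (f := d) (i + 1)).2 hd
    have hboundS : Summable (fun j : ℕ => -(2 * w (j + (i + 1)))) :=
      (((summable_nat_add_iff (f := w) (i + 1)).2 summable_w).mul_left 2).neg
    have hle : ∀ j : ℕ, -(2 * w (j + (i + 1))) ≤ d (j + (i + 1)) := by
      intro j
      have h1 : (-2 : ℝ) ≤ v (a (j + (i+1))) - v (b (j + (i+1))) := by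
        have := v_nonneg (a (j + (i+1))); have := v_le (b (j + (i+1))); linarith
      have := mul_le_mul_of_nonneg_right h1 (w_pos (j + (i+1))).le
      simpa [hd_def, neg_mul] using this
    have := Summable.tsum_le_tsum hle hboundS hsumm
    have heq : ∑' j : ℕ, -(2 * w (j + (i + 1))) = -(w i) := by
      rw [tsum_neg, tsum_mul_left, tsum_w_add]
      rw [w]; ring
    linarith [heq ▸ this]
  linarith [h1, h2]

lemma e_lt_of_sep {a b : ℕ → Bool} {i : ℕ} (hj : ∀ j < i, a j = b j)
    (ha : a i = true) (hb : b i = false) : e b < e a := by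
  have := e_sep hj ha hb
  have := w_pos i
  linarith

lemma e_injective : Function.Injective e := by
  intro a b hab
  by_contra hne
  have h : ∃ i, a i ≠ b i := Function.ne_iff.mp hne
  have hi : a (Nat.find h) ≠ b (Nat.find h) := Nat.find_spec h
  have hj : ∀ j < Nat.find h, a j = b j := fun j hj' => not_not.mp (Nat.find_min h hj')
  cases ha : a (Nat.find h) <;> cases hb : b (Nat.find h) <;> rw [ha, hb] at hi
  · exact hi rfl
  · have := e_lt_of_sep (fun j hj' => (hj j hj').symm) hb ha
    rw [hab] at this; exact lt_irrefl _ this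
  · have := e_lt_of_sep hj ha hb
    rw [hab] at this; exact lt_irrefl _ this
  · exact hi rfl

lemma e_update (a : ℕ → Bool) (j : ℕ) (c : Bool) :
    e (Function.update a j c) - e a = (v c - v (a j)) * w j := by
  rw [e_sub, tsum_eq_single j]
  · simp
  · intro i hij
    rw [Function.update_of_ne hij]
    ring

lemma continuous_e : Continuous e := by
  refine continuous_tsum (f := fun i (a : ℕ → Bool) => v (a i) * w i)
    (fun i => ?_) (summable_w.mul_left 2) (fun i a => ?_)
  · have h1 : Continuous (v ∘ fun a : ℕ → Bool => a i) :=
      continuous_of_discreteTopology.comp (continuous_apply i)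
    exact h1.mul continuous_const
  · rw [Real.norm_eq_abs, abs_of_nonneg (mul_nonneg (v_nonneg _) (w_pos i).le)]
    exact mul_le_mul_of_nonneg_right (v_le _) (w_pos i).le

/-! ### Affine copies and slices -/

noncomputable def E (c r : ℝ) (a : ℕ → Bool) : ℝ := c + r * e a

lemma continuous_E (c r : ℝ) : Continuous (E c r) :=
  continuous_const.add (continuous_const.mul continuous_e)

lemma E_injective (c : ℝ) {r : ℝ} (hr : r ≠ 0) : Function.Injective (E c r) := by
  intro a b hab
  have : r * e a = r * e b := by
    have := hab
    unfold E at this; linarith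
  exact e_injective (mul_left_cancel₀ hr this)

def S (y : ℕ → Bool) : Set (ℕ → Bool) := {a | ∀ i, a (2 * i) = y i}

lemma isClosed_S (y : ℕ → Bool) : IsClosed (S y) := by
  have : S y = ⋂ i, (fun a : ℕ → Bool => a (2 * i)) ⁻¹' {y i} := by
    ext a; simp [S]
  rw [this]
  exact isClosed_iInter fun i => (isClosed_singleton).preimage (continuous_apply _)

lemma isCompact_S (y : ℕ → Bool) : IsCompact (S y) := (isClosed_S y).isCompact

lemma a0_mem (y : ℕ → Bool) : (fun j => y (j / 2)) ∈ S y := by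
  intro i; simp

noncomputable def KS (c r : ℝ) (y : ℕ → Bool) : Set ℝ := E c r '' S y

lemma KS_nonempty (c r : ℝ) (y : ℕ → Bool) : (KS c r y).Nonempty :=
  ⟨E c r (fun j => y (j / 2)), mem_image_of_mem _ (a0_mem y)⟩

lemma isCompact_KS (c r : ℝ) (y : ℕ → Bool) : IsCompact (KS c r y) :=
  (isCompact_S y).image (continuous_E c r)

lemma KS_subset_range (c r : ℝ) (y : ℕ → Bool) : KS c r y ⊆ Set.range (E c r) :=
  image_subset_range _ _

lemma range_E_subset (c : ℝ) {r : ℝ} (hr : 0 ≤ r) :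
    Set.range (E c r) ⊆ Icc c (c + r) := by
  rintro x ⟨a, rfl⟩
  constructor
  · have := mul_nonneg hr (e_nonneg a); unfold E; linarith
  · have := mul_le_mul_of_nonneg_left (e_le_one a) hr; unfold E; linarith

/-! ### Measure zero -/

lemma volume_range_E (c : ℝ) {r : ℝ} (hr : 0 ≤ r) :
    volume (Set.range (E c r)) = 0 := by
  have key : ∀ n : ℕ, volume (Set.range (E c r)) ≤
      ENNReal.ofReal r * (2 * ENNReal.ofReal 3⁻¹) ^ n := by
    intro n
    set t : ℝ := (3 : ℝ)⁻¹ ^ n with ht_def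
    have ht : 0 ≤ t := by positivity
    set P : (Fin n → Bool) → ℝ := fun s => ∑ i : Fin n, v (s i) * w i with hP_def
    have hcover : Set.range (E c r) ⊆
        ⋃ s : Fin n → Bool, Icc (c + r * P s) (c + r * P s + r * t) := by
      rintro x ⟨a, rfl⟩
      refine Set.mem_iUnion.2 ⟨fun i => a i, ?_⟩
      have hsplit : e a = ∑ i ∈ Finset.range n, v (a i) * w i +
          ∑' j, v (a (j + n)) * w (j + n) :=
        (Summable.sum_add_tsum_nat_add n (summable_e a)).symm
      have hhead : ∑ i ∈ Finset.range n, v (a i) * w i = P (fun i => a i) := by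
        rw [hP_def, Finset.sum_range]
      have htail_summ : Summable (fun j => v (a (j + n)) * w (j + n)) :=
        (summable_nat_add_iff (f := fun i => v (a i) * w i) n).2 (summable_e a)
      have htail0 : 0 ≤ ∑' j, v (a (j + n)) * w (j + n) :=
        tsum_nonneg fun j => mul_nonneg (v_nonneg _) (w_pos _).le
      have htail1 : ∑' j, v (a (j + n)) * w (j + n) ≤ t := by
        have h1 : ∑' j, v (a (j + n)) * w (j + n) ≤ ∑' j, 2 * w (j + n) := by
          refine Summable.tsum_le_tsum (fun j => mul_le_mul_of_nonneg_right (v_le _) (w_pos _).le)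
            htail_summ (((summable_nat_add_iff (f := w) n).2 summable_w).mul_left 2)
        rw [tsum_mul_left, tsum_w_add] at h1
        rw [ht_def]; linarith
      have hexp : E c r a = c + r * P (fun i => a i) +
          r * ∑' j, v (a (j + n)) * w (j + n) := by
        unfold E; rw [hsplit, hhead]; ring
      constructor
      · have h := mul_nonneg hr htail0
        rw [hexp]; linarith
      · have h := mul_le_mul_of_nonneg_left htail1 hr
        rw [hexp]; linarith
    calc volume (Set.range (E c r))
        ≤ ∑' s : (Fin n → Bool), volume (Icc (c + r * P s) (c + r * P s + r * t)) :=
          (measure_mono hcover).trans (measure_iUnion_le _)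
      _ = ∑ s : (Fin n → Bool), ENNReal.ofReal (r * t) := by
          rw [tsum_fintype]
          refine Finset.sum_congr rfl fun s _ => ?_
          rw [Real.volume_Icc]; ring_nf
      _ = (Fintype.card (Fin n → Bool)) • ENNReal.ofReal (r * t) := by
          rw [Finset.sum_const, Finset.card_univ]
      _ = ENNReal.ofReal r * (2 * ENNReal.ofReal 3⁻¹) ^ n := by
          rw [Fintype.card_fun, Fintype.card_bool, Fintype.card_fin,
            ENNReal.ofReal_mul hr, nsmul_eq_mul, ht_def,
            ENNReal.ofReal_pow (by norm_num : (0:ℝ) ≤ 3⁻¹)]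
          push_cast
          ring
  have hlt : (2 * ENNReal.ofReal 3⁻¹ : ℝ≥0∞) < 1 := by
    have h2 : (2 : ℝ≥0∞) = ENNReal.ofReal 2 := by simp
    rw [h2, ← ENNReal.ofReal_mul (by norm_num)]
    rw [show (2 : ℝ) * 3⁻¹ = 2/3 by norm_num]
    exact ENNReal.ofReal_lt_one.2 (by norm_num)
  have htend : Tendsto (fun n : ℕ => ENNReal.ofReal r * (2 * ENNReal.ofReal 3⁻¹) ^ n)
      atTop (𝓝 0) := by
    have := ENNReal.Tendsto.const_mul (a := ENNReal.ofReal r)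
      (ENNReal.tendsto_pow_atTop_nhds_zero_of_lt_one hlt)
      (Or.inr ENNReal.ofReal_ne_top)
    simpa using this
  have := ge_of_tendsto' htend key
  exact le_antisymm this zero_le

/-! ### Total disconnectedness from null -/

lemma isTotallyDisconnected_of_null {s : Set ℝ} (hs : volume s = 0) :
    IsTotallyDisconnected s := by
  intro t hts ht x hx y hy
  by_contra hxy
  have key : ∀ u z : ℝ, u ∈ t → z ∈ t → u < z → False := by
    intro u z hu hz huz
    have hsub : Icc u z ⊆ t := ht.Icc_subset hu hz
    have h1 : volume (Icc u z) ≤ volume s := measure_mono (hsub.trans hts)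
    rw [hs, Real.volume_Icc] at h1
    have h2 : ENNReal.ofReal (z - u) = 0 := le_antisymm h1 zero_le
    rw [ENNReal.ofReal_eq_zero] at h2
    linarith
  rcases lt_or_gt_of_ne hxy with h | h
  · exact key x y hx hy h
  · exact key y x hy hx h

/-! ### Perfectness -/

lemma perfect_KS (c : ℝ) {r : ℝ} (hr : 0 < r) (y : ℕ → Bool) :
    Perfect (KS c r y) := by
  constructor
  · exact (isCompact_KS c r y).isClosed
  · rw [preperfect_iff_nhds]
    rintro x ⟨a, ha, rfl⟩ U hU
    rcases Metric.mem_nhds_iff.1 hU with ⟨ε, hε, hball⟩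
    obtain ⟨n, hn⟩ : ∃ n : ℕ, ((3:ℝ)⁻¹) ^ n < ε / (2 * r) :=
      exists_pow_lt_of_lt_one (by positivity) (by norm_num)
    set b : ℕ → Bool := Function.update a (2 * n + 1) (!(a (2 * n + 1))) with hb_def
    have hbS : b ∈ S y := by
      intro i
      rw [hb_def, Function.update_of_ne (by omega)]
      exact ha i
    have hba : b ≠ a := by
      intro hba
      have : b (2 * n + 1) = a (2 * n + 1) := by rw [hba]
      rw [hb_def, Function.update_self] at this
      exact (Bool.not_ne_self _) this
    have hdiff : e b - e a = (v (!(a (2 * n + 1))) - v (a (2 * n + 1))) * w (2 * n + 1) :=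
      e_update a (2 * n + 1) _
    have habs : |e b - e a| ≤ 2 * w (2 * n + 1) := by
      rw [hdiff, abs_mul, abs_of_pos (w_pos _)]
      refine mul_le_mul_of_nonneg_right ?_ (w_pos _).le
      have h1 := v_nonneg (!(a (2*n+1))); have h2 := v_le (!(a (2*n+1)))
      have h3 := v_nonneg (a (2*n+1)); have h4 := v_le (a (2*n+1))
      rw [abs_le]; constructor <;> linarith
    have hw : w (2 * n + 1) ≤ (3:ℝ)⁻¹ ^ n := by
      rw [w]
      exact pow_le_pow_of_le_one (by norm_num) (by norm_num) (by omega)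
    refine ⟨E c r b, ⟨hball ?_, mem_image_of_mem _ hbS⟩, ?_⟩
    · rw [Metric.mem_ball, Real.dist_eq]
      have : E c r b - E c r a = r * (e b - e a) := by unfold E; ring
      rw [this, abs_mul, abs_of_pos hr]
      calc r * |e b - e a| ≤ r * (2 * w (2 * n + 1)) := by
            exact mul_le_mul_of_nonneg_left habs hr.le
        _ ≤ r * (2 * (3:ℝ)⁻¹ ^ n) := by nlinarith [w_pos (2*n+1)]
        _ = 3⁻¹ ^ n * (2 * r) := by ring
        _ < ε := by
            rw [lt_div_iff₀ (by positivity)] at hn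
            exact hn
    · intro hEq
      exact hba (E_injective c hr.ne' hEq)

/-! ### Pairwise disjointness of slices -/

lemma KS_disjoint_KS (c : ℝ) {r : ℝ} (hr : 0 < r) {y y' : ℕ → Bool} (h : y ≠ y') :
    Disjoint (KS c r y) (KS c r y') := by
  rw [Set.disjoint_left]
  rintro x ⟨p, hp, rfl⟩ ⟨q, hq, hEq⟩
  have hpq : q = p := E_injective c hr.ne' hEq
  apply h
  funext i
  rw [← hp i, ← hq i, hpq]

lemma KS_inj (c : ℝ) {r : ℝ} (hr : 0 < r) : Function.Injective (KS c r) := by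
  intro y y' h
  by_contra hne
  have hd := KS_disjoint_KS c hr hne
  rw [h] at hd
  obtain ⟨x, hx⟩ := KS_nonempty c r y'
  exact (Set.disjoint_left.1 hd) hx hx

lemma isCantorSet_KS (c : ℝ) {r : ℝ} (hr : 0 < r) (y : ℕ → Bool) :
    IsCantorSet (KS c r y) ∧ volume (KS c r y) = 0 := by
  have hnull : volume (KS c r y) = 0 :=
    measure_mono_null (KS_subset_range c r y) (volume_range_E c hr.le)
  exact ⟨⟨KS_nonempty c r y, isCompact_KS c r y,
    isTotallyDisconnected_of_null hnull, perfect_KS c hr y⟩, hnull⟩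

/-! ### The skeleton of disjoint locations -/

noncomputable def ip (n : ℕ) : ℝ × ℝ :=
  match Encodable.decode (α := ℚ × ℚ) n with
  | some pq => if pq.1 < pq.2 then ((pq.1 : ℝ), (pq.2 : ℝ)) else (0, 1)
  | none => (0, 1)

lemma ip_lt (n : ℕ) : (ip n).1 < (ip n).2 := by
  unfold ip
  split
  · split_ifs with h
    · dsimp only; exact_mod_cast h
    · norm_num
  · norm_num

lemma exists_good {F : Set ℝ} (hF : IsClosed F) (h0 : volume F = 0) {p q : ℝ}
    (hpq : p < q) :
    ∃ cr : ℝ × ℝ, 0 < cr.2 ∧ Icc cr.1 (cr.1 + cr.2) ⊆ Ioo p q ∧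
      Disjoint (Icc cr.1 (cr.1 + cr.2)) F := by
  have hopen : IsOpen (Ioo p q \ F) := isOpen_Ioo.sdiff hF
  have hne : (Ioo p q \ F).Nonempty := by
    by_contra h
    rw [Set.not_nonempty_iff_eq_empty, Set.diff_eq_empty] at h
    have h1 : volume (Ioo p q) ≤ volume F := measure_mono h
    rw [h0, Real.volume_Ioo] at h1
    have h2 : ENNReal.ofReal (q - p) = 0 := le_antisymm h1 zero_le
    rw [ENNReal.ofReal_eq_zero] at h2
    linarith
  obtain ⟨x, hx⟩ := hne
  obtain ⟨ε, hε, hballs⟩ := Metric.isOpen_iff.1 hopen x hx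
  have hIcc : Icc (x - ε / 2) (x - ε / 2 + ε) ⊆ Metric.ball x ε := by
    rw [Real.ball_eq_Ioo]
    intro z hz
    rcases hz with ⟨h1, h2⟩
    constructor <;> simp at * <;> linarith
  refine ⟨(x - ε / 2, ε), hε, ?_, ?_⟩
  · exact hIcc.trans (hballs.trans Set.diff_subset)
  · rw [Set.disjoint_left]
    intro z hz hzF
    exact (hballs (hIcc hz)).2 hzF

lemma exists_step (L : List (ℝ × ℝ)) (n : ℕ) :
    ∃ cr : ℝ × ℝ, 0 < cr.2 ∧ Icc cr.1 (cr.1 + cr.2) ⊆ Ioo (ip n).1 (ip n).2 ∧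
      ∀ d ∈ L, Disjoint (Icc cr.1 (cr.1 + cr.2)) (Set.range (E d.1 |d.2|)) := by
  have hF : IsClosed (⋃ d ∈ L, Set.range (E d.1 |d.2|)) := by
    refine Set.Finite.isClosed_biUnion (List.finite_toSet L) fun d _ => ?_
    exact (isCompact_range (continuous_E _ _)).isClosed
  have h0 : volume (⋃ d ∈ L, Set.range (E d.1 |d.2|)) = 0 := by
    refine (measure_biUnion_null_iff (List.finite_toSet L).countable).2 fun d _ => ?_
    exact volume_range_E _ (abs_nonneg _)
  obtain ⟨cr, h1, h2, h3⟩ := exists_good hF h0 (ip_lt n)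
  refine ⟨cr, h1, h2, fun d hd => h3.mono_right ?_⟩
  intro x hx
  exact Set.mem_biUnion hd hx

noncomputable def pickStep (n : ℕ) (L : List (ℝ × ℝ)) : ℝ × ℝ :=
  (exists_step L n).choose

noncomputable def G : ℕ → List (ℝ × ℝ)
  | 0 => []
  | n + 1 => G n ++ [pickStep n (G n)]

noncomputable def f (n : ℕ) : ℝ × ℝ := pickStep n (G n)

lemma f_spec (n : ℕ) : 0 < (f n).2 ∧
    Icc (f n).1 ((f n).1 + (f n).2) ⊆ Ioo (ip n).1 (ip n).2 ∧
    ∀ d ∈ G n, Disjoint (Icc (f n).1 ((f n).1 + (f n).2)) (Set.range (E d.1 |d.2|)) :=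
  (exists_step (G n) n).choose_spec

lemma mem_G {i n : ℕ} (h : i < n) : f i ∈ G n := by
  induction n with
  | zero => omega
  | succ m ih =>
    show f i ∈ G m ++ [pickStep m (G m)]
    rcases Nat.lt_succ_iff_lt_or_eq.1 h with h' | rfl
    · exact List.mem_append_left _ (ih h')
    · exact List.mem_append_right _ (List.mem_singleton_self _)

lemma f_disj {i n : ℕ} (h : i < n) :
    Disjoint (Icc (f n).1 ((f n).1 + (f n).2)) (Set.range (E (f i).1 (f i).2)) := by
  have := (f_spec n).2.2 (f i) (mem_G h)
  rwa [abs_of_pos (f_spec i).1] at this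

lemma KS_subset_Icc (n : ℕ) (y : ℕ → Bool) :
    KS (f n).1 (f n).2 y ⊆ Icc (f n).1 ((f n).1 + (f n).2) :=
  (KS_subset_range _ _ _).trans (range_E_subset _ (f_spec n).1.le)

lemma mk_seq : Cardinal.mk (ℕ → Bool) = Cardinal.continuum := by
  rw [Cardinal.mk_arrow]
  simp only [Cardinal.mk_bool, Cardinal.mk_nat, Cardinal.lift_id, Cardinal.lift_ofNat,
    Cardinal.lift_aleph0]
  exact Cardinal.two_power_aleph0

end CantorFamily

open CantorFamily MeasureTheory Set in
theorem exists_family_of_cantor_null_sets :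
    ∃ H : Set (Set ℝ),
      (∀ C ∈ H, IsCantorSet C ∧ MeasureTheory.volume C = 0) ∧
      H.PairwiseDisjoint id ∧
      ∀ a b : ℝ, a < b →
        Cardinal.mk {C : Set ℝ // C ∈ H ∧ C ⊆ Set.Ioo a b} = Cardinal.continuum := by
  refine ⟨Set.range (fun p : ℕ × (ℕ → Bool) => KS (f p.1).1 (f p.1).2 p.2), ?_, ?_, ?_⟩
  · rintro C ⟨⟨n, y⟩, rfl⟩
    exact isCantorSet_KS _ (f_spec n).1 y
  · rintro C ⟨⟨n, y⟩, rfl⟩ C' ⟨⟨m, y'⟩, rfl⟩ hne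
    simp only [id]
    rcases lt_trichotomy n m with h | rfl | h
    · exact ((f_disj h).mono (KS_subset_Icc m y') (KS_subset_range _ _ _)).symm
    · have hyy : y ≠ y' := fun hy => hne (by rw [hy])
      exact KS_disjoint_KS _ (f_spec n).1 hyy
    · exact (f_disj h).mono (KS_subset_Icc n y) (KS_subset_range _ _ _)
  · intro a b hab
    obtain ⟨p, hap, hpb⟩ := exists_rat_btwn hab
    obtain ⟨q, hpq, hqb⟩ := exists_rat_btwn hpb
    obtain ⟨n, hn⟩ : ∃ n, Encodable.decode (α := ℚ × ℚ) n = some (p, q) :=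
      ⟨Encodable.encode ((p, q) : ℚ × ℚ), Encodable.encodek _⟩
    have hip : ip n = ((p : ℝ), (q : ℝ)) := by
      unfold ip
      rw [hn]
      dsimp only
      rw [if_pos (show ((p,q):ℚ×ℚ).1 < ((p,q):ℚ×ℚ).2 by exact_mod_cast hpq)]
    have hsub : ∀ y : ℕ → Bool, KS (f n).1 (f n).2 y ⊆ Set.Ioo a b := by
      intro y
      refine (KS_subset_Icc n y).trans ((f_spec n).2.1.trans ?_)
      rw [hip]
      exact Set.Ioo_subset_Ioo hap.le hqb.le
    apply le_antisymm
    · calc Cardinal.mk {C : Set ℝ // C ∈ Set.range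
            (fun p : ℕ × (ℕ → Bool) => KS (f p.1).1 (f p.1).2 p.2) ∧ C ⊆ Set.Ioo a b}
          ≤ Cardinal.mk {C : Set ℝ // C ∈ Set.range
            (fun p : ℕ × (ℕ → Bool) => KS (f p.1).1 (f p.1).2 p.2)} :=
            Cardinal.mk_subtype_mono fun C hC => hC.1
        _ ≤ Cardinal.mk (ℕ × (ℕ → Bool)) := Cardinal.mk_range_le
        _ ≤ Cardinal.continuum := by
            rw [Cardinal.mk_prod, Cardinal.mk_nat, mk_seq, Cardinal.lift_aleph0,
              Cardinal.lift_continuum]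
            rw [Cardinal.aleph0_mul_eq Cardinal.aleph0_le_continuum]
    · rw [← mk_seq]
      refine Cardinal.mk_le_of_injective (f := fun y : ℕ → Bool =>
        (⟨KS (f n).1 (f n).2 y, ⟨(n, y), rfl⟩, hsub y⟩ :
          {C : Set ℝ // C ∈ Set.range
            (fun p : ℕ × (ℕ → Bool) => KS (f p.1).1 (f p.1).2 p.2) ∧ C ⊆ Set.Ioo a b})) ?_
      intro y y' h
      exact KS_inj _ (f_spec n).1 (congrArg Subtype.val h)
end

section
/- If S ⊆ ℝ is totally disconnected, C ⊆ ℝ is a Cantor set, s ∈ S, and a ∈ C is a two-sided accumulation point of C (i.e., for every ε > 0 both C ∩ (a, a+ε) and C ∩ (a−ε, a) are nonempty), then there exists a strictly increasing function f : ℝ → C with f(s) = a such that the restriction of f to S is a homeomorphism from S onto the subspace f(S) of C. -/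
/-- `a` is a two-sided accumulation point of `C`. -/
def TwoSidedAcc (C : Set ℝ) (a : ℝ) : Prop :=
  ∀ ε > (0 : ℝ), (C ∩ Set.Ioo a (a + ε)).Nonempty ∧ (C ∩ Set.Ioo (a - ε) a).Nonempty

open Set Filter Topology

namespace CantorEmbed

structure Node where
  P : Set ℝ
  lo : ℝ
  hi : ℝ

variable (C : Set ℝ) (a : ℝ)

/-- node content invariant -/
def GoodS (P : Set ℝ) : Prop := Perfect P ∧ P.Nonempty ∧ P ⊆ C

/-- on-branch invariant -/
def BS (P : Set ℝ) : Prop :=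
  GoodS C P ∧ a ∈ P ∧
    ∀ ε > (0:ℝ), (P ∩ Ioo (a-ε) a).Nonempty ∧ (P ∩ Ioo a (a+ε)).Nonempty

variable {C a}

lemma GoodS.pair {P : Set ℝ} (hP : GoodS C P) : ∃ x ∈ P, ∃ y ∈ P, x < y := by
  obtain ⟨x, hx⟩ := hP.2.1
  have hacc := hP.1.acc x hx
  rw [accPt_iff_nhds] at hacc
  obtain ⟨y, ⟨_, hyP⟩, hyx⟩ := hacc univ univ_mem
  rcases lt_or_gt_of_ne hyx with h | h
  · exact ⟨y, hyP, x, hx, h⟩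
  · exact ⟨x, hx, y, hyP, h⟩

lemma GoodS.shrink {P : Set ℝ} (hP : GoodS C P) {x r : ℝ} (hx : x ∈ P) (hr : 0 < r) :
    GoodS C (closure (Ioo (x-r) (x+r) ∩ P)) ∧ closure (Ioo (x-r) (x+r) ∩ P) ⊆ P ∧
      closure (Ioo (x-r) (x+r) ∩ P) ⊆ Icc (x-r) (x+r) := by
  have hxU : x ∈ Ioo (x-r) (x+r) := by constructor <;> linarith
  have h := hP.1.closure_nhds_inter x hx hxU isOpen_Ioo
  have hsub : closure (Ioo (x-r) (x+r) ∩ P) ⊆ P :=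
    closure_minimal inter_subset_right hP.1.closed
  exact ⟨⟨h.1, h.2, hsub.trans hP.2.2⟩, hsub,
    closure_minimal (inter_subset_left.trans Ioo_subset_Icc_self) isClosed_Icc⟩

lemma BS.shrink {P : Set ℝ} (hP : BS C a P) {r : ℝ} (hr : 0 < r) :
    BS C a (closure (Ioo (a-r) (a+r) ∩ P)) ∧ closure (Ioo (a-r) (a+r) ∩ P) ⊆ P ∧
      closure (Ioo (a-r) (a+r) ∩ P) ⊆ Icc (a-r) (a+r) := by
  obtain ⟨hG, hsub, hIcc⟩ := hP.1.shrink hP.2.1 hr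
  refine ⟨⟨hG, ?_, ?_⟩, hsub, hIcc⟩
  · exact subset_closure ⟨⟨by linarith, by linarith⟩, hP.2.1⟩
  · intro ε hε
    obtain ⟨⟨yl, hyl⟩, ⟨yr, hyr⟩⟩ := hP.2.2 (min ε r) (lt_min hε hr)
    constructor
    · refine ⟨yl, subset_closure ⟨⟨?_, ?_⟩, hyl.1⟩, ?_, hyl.2.2⟩
      · have := hyl.2.1; have : a - min ε r ≤ a - r ∨ True := Or.inr trivial
        have h1 : a - r ≤ a - min ε r := by
          have := min_le_right ε r; linarith
        linarith [hyl.2.1]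
      · linarith [hyl.2.2]
      · have h1 : a - ε ≤ a - min ε r := by have := min_le_left ε r; linarith
        linarith [hyl.2.1]
    · refine ⟨yr, subset_closure ⟨⟨?_, ?_⟩, hyr.1⟩, hyr.2.1, ?_⟩
      · linarith [hyr.2.1]
      · have h1 : a + min ε r ≤ a + r := by have := min_le_right ε r; linarith
        linarith [hyr.2.2]
      · have h1 : a + min ε r ≤ a + ε := by have := min_le_left ε r; linarith
        linarith [hyr.2.2]

variable (C a) in
/-- What a valid split of `P` must satisfy. -/
def SplitOK (P : Set ℝ) (onb c : Bool) (δ : ℝ) (Q : Node × Node) : Prop :=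
  Q.1.P ⊆ P ∧ Q.2.P ⊆ P ∧ GoodS C Q.1.P ∧ GoodS C Q.2.P ∧
  Q.1.P ⊆ Icc Q.1.lo Q.1.hi ∧ Q.2.P ⊆ Icc Q.2.lo Q.2.hi ∧
  Q.1.hi < Q.2.lo ∧ Q.1.hi - Q.1.lo ≤ δ ∧ Q.2.hi - Q.2.lo ≤ δ ∧
  (onb = true → BS C a (cond c Q.2.P Q.1.P))

lemma split_exists (P : Set ℝ) (onb c : Bool) (δ : ℝ) :
    ∃ Q : Node × Node,
      (0 < δ ∧ GoodS C P ∧ (onb = true → BS C a P)) → SplitOK C a P onb c δ Q := by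
  by_cases H : 0 < δ ∧ GoodS C P ∧ (onb = true → BS C a P)
  swap
  · exact ⟨⟨⟨∅,0,0⟩,⟨∅,0,0⟩⟩, fun h => absurd h H⟩
  obtain ⟨hδ, hG, hB⟩ := H
  -- choose two anchor points x < y with appropriate branch data
  have key : ∃ x ∈ P, ∃ y ∈ P, x < y ∧
      (onb = true → (c = true → y = a ∧ BS C a P) ∧ (c = false → x = a ∧ BS C a P)) := by
    cases onb with
    | false =>
        obtain ⟨x, hx, y, hy, hxy⟩ := hG.pair
        exact ⟨x, hx, y, hy, hxy, fun h => by simp at h⟩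
    | true =>
        have hBP := hB rfl
        cases c with
        | true =>
            obtain ⟨⟨x, hx1, hx2⟩, _⟩ := hBP.2.2 1 one_pos
            exact ⟨x, hx1, a, hBP.2.1, hx2.2, fun _ =>
              ⟨fun _ => ⟨rfl, hBP⟩, fun h => by simp at h⟩⟩
        | false =>
            obtain ⟨_, ⟨y, hy1, hy2⟩⟩ := hBP.2.2 1 one_pos
            exact ⟨a, hBP.2.1, y, hy1, hy2.1, fun _ =>
              ⟨fun h => by simp at h, fun _ => ⟨rfl, hBP⟩⟩⟩
  obtain ⟨x, hxP, y, hyP, hxy, hbr⟩ := key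
  set r : ℝ := min (δ/2) ((y - x)/3) with hrdef
  have hr : 0 < r := lt_min (by linarith) (by linarith)
  have hr2 : r ≤ δ/2 := min_le_left _ _
  have hr3 : r ≤ (y-x)/3 := min_le_right _ _
  obtain ⟨hG0, hsub0, hIcc0⟩ := hG.shrink hxP hr
  obtain ⟨hG1, hsub1, hIcc1⟩ := hG.shrink hyP hr
  refine ⟨⟨⟨closure (Ioo (x-r) (x+r) ∩ P), x-r, x+r⟩,
          ⟨closure (Ioo (y-r) (y+r) ∩ P), y-r, y+r⟩⟩,
         fun _ => ⟨hsub0, hsub1, hG0, hG1, hIcc0, hIcc1, by simp; linarith,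
           by simp; linarith, by simp; linarith, ?_⟩⟩
  intro honb
  obtain ⟨hc1, hc0⟩ := hbr honb
  cases c with
  | true =>
      obtain ⟨rfl, hBP⟩ := hc1 rfl
      exact (hBP.shrink hr).1
  | false =>
      obtain ⟨rfl, hBP⟩ := hc0 rfl
      exact (hBP.shrink hr).1

variable (C a) in
noncomputable def splitN (P : Set ℝ) (onb c : Bool) (δ : ℝ) : Node × Node :=
  (split_exists (C := C) (a := a) P onb c δ).choose

lemma splitN_spec {P : Set ℝ} {onb c : Bool} {δ : ℝ}
    (h : 0 < δ ∧ GoodS C P ∧ (onb = true → BS C a P)) :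
    SplitOK C a P onb c δ (splitN C a P onb c δ) :=
  (split_exists (C := C) (a := a) P onb c δ).choose_spec h

/-- the branch word of length n (digits reversed: head is digit n-1) -/
def brW (σ : ℕ → Bool) : ℕ → List Bool
  | 0 => []
  | n+1 => σ n :: brW σ n

variable (C a) in
noncomputable def tree (σ : ℕ → Bool) : List Bool → Node
  | [] => ⟨C, sInf C, sSup C⟩
  | b :: w =>
      let Q := splitN C a (tree σ w).P (decide (w = brW σ w.length)) (σ w.length)
        ((1/2 : ℝ)^w.length)
      cond b Q.2 Q.1

lemma brW_succ (σ : ℕ → Bool) (n : ℕ) : brW σ (n+1) = σ n :: brW σ n := rfl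

variable {σ : ℕ → Bool}
variable (hCperf : Perfect C) (hCcomp : IsCompact C) (haC : a ∈ C)
  (hacc : ∀ ε > (0:ℝ), (C ∩ Ioo (a-ε) a).Nonempty ∧ (C ∩ Ioo a (a+ε)).Nonempty)

include hCperf hCcomp haC hacc in
lemma tree_inv : ∀ w : List Bool,
    GoodS C (tree C a σ w).P ∧ (tree C a σ w).P ⊆ Icc (tree C a σ w).lo (tree C a σ w).hi ∧
      (w = brW σ w.length → BS C a (tree C a σ w).P) := by
  intro w
  induction w with
  | nil =>
      refine ⟨⟨hCperf, ⟨a, haC⟩, subset_rfl⟩, ?_, ?_⟩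
      · intro x hx
        exact ⟨csInf_le hCcomp.bddBelow hx, le_csSup hCcomp.bddAbove hx⟩
      · intro _
        exact ⟨⟨hCperf, ⟨a, haC⟩, subset_rfl⟩, haC, hacc⟩
  | cons b w ih =>
      obtain ⟨hG, hIcc, hBr⟩ := ih
      have hδ : (0:ℝ) < (1/2)^w.length := by positivity
      have hyp : 0 < ((1/2:ℝ))^w.length ∧ GoodS C (tree C a σ w).P ∧
          ((decide (w = brW σ w.length)) = true → BS C a (tree C a σ w).P) := by
        refine ⟨hδ, hG, fun h => hBr (of_decide_eq_true h)⟩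
      have spec := splitN_spec (c := σ w.length) hyp
      obtain ⟨h1, h2, h3, h4, h5, h6, h7, h8, h9, h10⟩ := spec
      have htree : tree C a σ (b :: w) =
          cond b (splitN C a (tree C a σ w).P (decide (w = brW σ w.length)) (σ w.length)
            ((1/2:ℝ)^w.length)).2
            (splitN C a (tree C a σ w).P (decide (w = brW σ w.length)) (σ w.length)
            ((1/2:ℝ)^w.length)).1 := rfl
      cases b with
      | false =>
          refine ⟨by rwa [htree], by rwa [htree], ?_⟩
          intro heq
          have heq' : false :: w = σ w.length :: brW σ w.length := heq
          obtain ⟨hb, hw⟩ := List.cons_eq_cons.mp heq'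
          rw [htree]
          have := h10 (decide_eq_true hw)
          rw [← hb] at this ⊢
          simpa using this
      | true =>
          refine ⟨by rwa [htree], by rwa [htree], ?_⟩
          intro heq
          have heq' : true :: w = σ w.length :: brW σ w.length := heq
          obtain ⟨hb, hw⟩ := List.cons_eq_cons.mp heq'
          rw [htree]
          have := h10 (decide_eq_true hw)
          rw [← hb] at this ⊢
          simpa using this

include hCperf hCcomp haC hacc in
lemma tree_step (b : Bool) (w : List Bool) :
    (tree C a σ (b :: w)).P ⊆ (tree C a σ w).P ∧
    (tree C a σ (false :: w)).hi < (tree C a σ (true :: w)).lo ∧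
    (tree C a σ (b :: w)).hi - (tree C a σ (b :: w)).lo ≤ (1/2:ℝ)^w.length := by
  obtain ⟨hG, hIcc, hBr⟩ := tree_inv (σ := σ) hCperf hCcomp haC hacc w
  have hδ : (0:ℝ) < (1/2)^w.length := by positivity
  have spec := splitN_spec (c := σ w.length)
    ⟨hδ, hG, fun h => hBr (of_decide_eq_true h)⟩
  obtain ⟨h1, h2, h3, h4, h5, h6, h7, h8, h9, h10⟩ := spec
  cases b with
  | false => exact ⟨h1, h7, h8⟩
  | true => exact ⟨h2, h7, h9⟩


lemma tree_nil {σ : ℕ → Bool} : tree C a σ [] = ⟨C, sInf C, sSup C⟩ := rfl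

/-- The word of `x` of length `n` determined by the dense sequence `d`. -/
noncomputable def Wrd (d : ℕ → ℝ) : ℕ → ℝ → List Bool
  | 0 => fun _ => []
  | n+1 => fun x => decide (d n < x) :: Wrd d n x

lemma Wrd_succ (d : ℕ → ℝ) (n : ℕ) (x : ℝ) :
    Wrd d (n+1) x = decide (d n < x) :: Wrd d n x := rfl

lemma Wrd_length (d : ℕ → ℝ) (n : ℕ) (x : ℝ) : (Wrd d n x).length = n := by
  induction n with
  | zero => rfl
  | succ n ih => simp [Wrd_succ, ih]

lemma Wrd_s (d : ℕ → ℝ) (s : ℝ) (n : ℕ) :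
    Wrd d n s = brW (fun k => decide (d k < s)) n := by
  induction n with
  | zero => rfl
  | succ n ih => simp [Wrd_succ, brW, ih]

variable (C a) in
/-- The embedding function. -/
noncomputable def ff (d : ℕ → ℝ) (s : ℝ) (x : ℝ) : ℝ :=
  sSup (⋂ n, (tree C a (fun k => decide (d k < s)) (Wrd d n x)).P)

variable (C a) in
def TN (d : ℕ → ℝ) (s x : ℝ) (n : ℕ) : Set ℝ :=
  (tree C a (fun k => decide (d k < s)) (Wrd d n x)).P

variable {d : ℕ → ℝ} {s : ℝ}

section facts

include hCperf hCcomp haC hacc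

lemma TN_antitone (x : ℝ) (n : ℕ) : TN C a d s x (n+1) ⊆ TN C a d s x n := by
  unfold TN
  rw [Wrd_succ]
  exact (tree_step hCperf hCcomp haC hacc (decide (d n < x)) (Wrd d n x)).1

lemma ff_mem_iInter (x : ℝ) : ff C a d s x ∈ ⋂ n, TN C a d s x n := by
  have hne : ∀ n, (TN C a d s x n).Nonempty := fun n =>
    (tree_inv hCperf hCcomp haC hacc (Wrd d n x)).1.2.1
  have hcl : ∀ n, IsClosed (TN C a d s x n) := fun n =>
    (tree_inv hCperf hCcomp haC hacc (Wrd d n x)).1.1.closed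
  have h0 : TN C a d s x 0 = C := by
    unfold TN
    rw [show Wrd d 0 x = [] from rfl, tree_nil]
  have hnonempty : (⋂ n, TN C a d s x n).Nonempty := by
    apply IsCompact.nonempty_iInter_of_sequence_nonempty_isCompact_isClosed
      _ (TN_antitone hCperf hCcomp haC hacc x) hne
    · rw [h0]; exact hCcomp
    · exact hcl
  have hclosed : IsClosed (⋂ n, TN C a d s x n) := isClosed_iInter hcl
  have hsubC : (⋂ n, TN C a d s x n) ⊆ C := by
    intro z hz
    have := mem_iInter.mp hz 0
    rwa [h0] at this
  have hcomp : IsCompact (⋂ n, TN C a d s x n) := hCcomp.of_isClosed_subset hclosed hsubC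
  exact hcomp.sSup_mem hnonempty

lemma ff_mem_TN (x : ℝ) (n : ℕ) : ff C a d s x ∈ TN C a d s x n := by
  have := ff_mem_iInter hCperf hCcomp haC hacc (d := d) (s := s) x
  exact mem_iInter.mp this n

lemma ff_mem_C (x : ℝ) : ff C a d s x ∈ C := by
  have := ff_mem_TN hCperf hCcomp haC hacc (d := d) (s := s) x 0
  unfold TN at this
  rwa [show Wrd d 0 x = [] from rfl, tree_nil] at this

lemma TN_close {x : ℝ} {n : ℕ} {u v : ℝ} (hu : u ∈ TN C a d s x (n+1)) (hv : v ∈ TN C a d s x (n+1)) :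
    |u - v| ≤ (1/2:ℝ)^n := by
  unfold TN at hu hv
  have hIcc := (tree_inv (σ := fun k => decide (d k < s)) hCperf hCcomp haC hacc
    (Wrd d (n+1) x)).2.1
  have hw : Wrd d (n+1) x = decide (d n < x) :: Wrd d n x := Wrd_succ d n x
  have hwidth := (tree_step hCperf hCcomp haC hacc (σ := (fun k => decide (d k < s))) (decide (d n < x)) (Wrd d n x)).2.2
  rw [Wrd_length] at hwidth
  rw [hw] at hIcc hu hv
  obtain ⟨hu1, hu2⟩ := hIcc hu
  obtain ⟨hv1, hv2⟩ := hIcc hv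
  rw [abs_sub_le_iff]
  constructor <;> linarith

lemma ff_s : ff C a d s s = a := by
  have haT : ∀ n, a ∈ TN C a d s s n := by
    intro n
    have hon : Wrd d n s = brW (fun k => decide (d k < s)) (Wrd d n s).length := by
      rw [Wrd_length]; exact Wrd_s d s n
    show a ∈ (tree C a (fun k => decide (d k < s)) (Wrd d n s)).P
    exact ((tree_inv hCperf hCcomp haC hacc (Wrd d n s)).2.2 hon).2.1
  by_contra hne
  have hpos : 0 < |ff C a d s s - a| := by
    rw [abs_pos]; intro h; exact hne (by linarith [sub_eq_zero.mp h])
  obtain ⟨n, hn⟩ := exists_pow_lt_of_lt_one hpos (by norm_num : (1/2:ℝ) < 1)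
  have := TN_close hCperf hCcomp haC hacc
    (ff_mem_TN hCperf hCcomp haC hacc (d := d) (s := s) s (n+1)) (haT (n+1))
  linarith

lemma ff_strictMono (hd : DenseRange d) : StrictMono (ff C a d s) := by
  intro x y hxy
  have hex : ∃ n, decide (d n < x) ≠ decide (d n < y) := by
    obtain ⟨n, hn⟩ := hd.exists_mem_open isOpen_Ioo (nonempty_Ioo.mpr hxy)
    exact ⟨n, by simp [decide_eq_true hn.2, not_lt.mpr hn.1.le,
      show ¬ (d n < x) from not_lt.mpr hn.1.le]⟩
  classical
  let n₀ := Nat.find hex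
  have hdiff : decide (d n₀ < x) ≠ decide (d n₀ < y) := Nat.find_spec hex
  have hmin : ∀ m < n₀, decide (d m < x) = decide (d m < y) := fun m hm => by
    have := Nat.find_min hex hm; simpa using this
  have hWeq : Wrd d n₀ x = Wrd d n₀ y := by
    have : ∀ k, k ≤ n₀ → Wrd d k x = Wrd d k y := by
      intro k hk
      induction k with
      | zero => rfl
      | succ k ih =>
          rw [show Wrd d (k+1) x = decide (d k < x) :: Wrd d k x from rfl,
              show Wrd d (k+1) y = decide (d k < y) :: Wrd d k y from rfl,
              hmin k (by omega), ih (by omega)]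
    exact this n₀ le_rfl
  have hxd : decide (d n₀ < x) = false := by
    by_contra h
    have hx' : d n₀ < x := of_decide_eq_true (by simpa using h)
    have hy' : d n₀ < y := lt_trans hx' hxy
    exact hdiff (by simp [hx', hy'])
  have hyd : decide (d n₀ < y) = true := by
    by_contra h
    have hy' : ¬ d n₀ < y := of_decide_eq_false (by simpa using h)
    have hx' : ¬ d n₀ < x := fun h' => hy' (lt_trans h' hxy)
    exact hdiff (by simp [hx', hy'])
  have hfx := ff_mem_TN hCperf hCcomp haC hacc (d := d) (s := s) x (n₀+1)
  have hfy := ff_mem_TN hCperf hCcomp haC hacc (d := d) (s := s) y (n₀+1)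
  have hx2 : ff C a d s x ∈ (tree C a (fun k => decide (d k < s)) (false :: Wrd d n₀ x)).P := by
    unfold TN at hfx
    rwa [Wrd_succ, hxd] at hfx
  have hy2 : ff C a d s y ∈ (tree C a (fun k => decide (d k < s)) (true :: Wrd d n₀ x)).P := by
    unfold TN at hfy
    rwa [Wrd_succ, hyd, ← hWeq] at hfy
  have hsep := (tree_step hCperf hCcomp haC hacc (σ := (fun k => decide (d k < s))) true (Wrd d n₀ x)).2.1
  have hIccF := (tree_inv hCperf hCcomp haC hacc (σ := (fun k => decide (d k < s))) (false :: Wrd d n₀ x)).2.1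
  have hIccT := (tree_inv hCperf hCcomp haC hacc (σ := (fun k => decide (d k < s))) (true :: Wrd d n₀ x)).2.1
  have h1 := (hIccF hx2).2
  have h2 := (hIccT hy2).1
  calc ff C a d s x ≤ _ := h1
    _ < _ := hsep
    _ ≤ ff C a d s y := h2

lemma ff_continuousAt {t : ℝ} (ht : ∀ n, d n ≠ t) : ContinuousAt (ff C a d s) t := by
  rw [Metric.continuousAt_iff']
  intro ε hε
  obtain ⟨n, hn⟩ := exists_pow_lt_of_lt_one hε (by norm_num : (1/2:ℝ) < 1)
  have hevW : ∀ m : ℕ, ∀ᶠ u in 𝓝 t, Wrd d m u = Wrd d m t := by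
    intro m
    induction m with
    | zero => exact Eventually.of_forall fun _ => rfl
    | succ m ih =>
        have hdig : ∀ᶠ u in 𝓝 t, decide (d m < u) = decide (d m < t) := by
          rcases lt_or_gt_of_ne (ht m) with h | h
          · filter_upwards [eventually_gt_nhds h] with u hu
            simp [hu, h]
          · filter_upwards [eventually_lt_nhds h] with u hu
            simp [not_lt.mpr hu.le, not_lt.mpr h.le]
        filter_upwards [hdig, ih] with u h1 h2
        rw [Wrd_succ, h1, h2, Wrd_succ]
  filter_upwards [hevW (n+1)] with u hu
  have hfu : ff C a d s u ∈ TN C a d s t (n+1) := by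
    have := ff_mem_TN hCperf hCcomp haC hacc (d := d) (s := s) u (n+1)
    unfold TN at this ⊢
    rwa [hu] at this
  have hft := ff_mem_TN hCperf hCcomp haC hacc (d := d) (s := s) t (n+1)
  have := TN_close hCperf hCcomp haC hacc hfu hft
  calc dist (ff C a d s u) (ff C a d s t) = |ff C a d s u - ff C a d s t| := Real.dist_eq _ _
    _ ≤ (1/2:ℝ)^n := this
    _ < ε := hn

end facts
/-- A strictly monotone map restricted to a set on which it is continuous is a homeomorphism
onto its image. -/
noncomputable def homeoOfStrictMono (f : ℝ → ℝ) (S : Set ℝ) (hf : StrictMono f)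
    (hcont : ∀ t ∈ S, ContinuousAt f t) : ↥S ≃ₜ ↥(f '' S) := by
  refine Homeomorph.mk (Equiv.ofBijective (fun x : S => (⟨f x, mem_image_of_mem f x.2⟩ : f '' S))
    ⟨fun x y hxy => Subtype.ext (hf.injective (congrArg Subtype.val hxy)), ?_⟩) ?_ ?_
  · rintro ⟨_, ⟨x, hx, rfl⟩⟩
    exact ⟨⟨x, hx⟩, rfl⟩
  · exact Continuous.subtype_mk
      (ContinuousOn.restrict (fun t ht => (hcont t ht).continuousWithinAt)) _
  · set e := Equiv.ofBijective (fun x : S => (⟨f x, mem_image_of_mem f x.2⟩ : f '' S))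
      ⟨fun x y hxy => Subtype.ext (hf.injective (congrArg Subtype.val hxy)),
       by rintro ⟨_, ⟨x, hx, rfl⟩⟩; exact ⟨⟨x, hx⟩, rfl⟩⟩ with he
    rw [continuous_iff_continuousAt]
    intro p
    rw [Metric.continuousAt_iff]
    intro ε hε
    set x₀ : ↥S := e.symm p with hx₀
    have hfx₀ : f ↑x₀ = ↑p := congrArg Subtype.val (e.apply_symm_apply p)
    have hδ1 : 0 < f (↑x₀ + ε/2) - f ↑x₀ := sub_pos.mpr (hf (by linarith))
    have hδ2 : 0 < f ↑x₀ - f (↑x₀ - ε/2) := sub_pos.mpr (hf (by linarith))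
    refine ⟨min (f (↑x₀ + ε/2) - f ↑x₀) (f ↑x₀ - f (↑x₀ - ε/2)), lt_min hδ1 hδ2, ?_⟩
    intro q hq
    set x : ↥S := e.symm q with hx
    have hfx : f ↑x = ↑q := congrArg Subtype.val (e.apply_symm_apply q)
    rw [Subtype.dist_eq, Real.dist_eq] at hq ⊢
    rw [← hfx, ← hfx₀] at hq
    by_contra hcon
    push_neg at hcon
    have hcon' : ε ≤ |(↑x : ℝ) - ↑x₀| := hcon
    have habs := abs_lt.mp hq
    have hmin1 : min (f (↑x₀ + ε/2) - f ↑x₀) (f ↑x₀ - f (↑x₀ - ε/2)) ≤ f (↑x₀ + ε/2) - f ↑x₀ :=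
      min_le_left _ _
    have hmin2 : min (f (↑x₀ + ε/2) - f ↑x₀) (f ↑x₀ - f (↑x₀ - ε/2)) ≤ f ↑x₀ - f (↑x₀ - ε/2) :=
      min_le_right _ _
    rcases le_abs.mp hcon' with h | h
    · have : f (↑x₀ + ε/2) ≤ f ↑x := hf.monotone (by linarith)
      linarith
    · have : f ↑x ≤ f (↑x₀ - ε/2) := hf.monotone (by linarith)
      linarith

lemma exists_dense_seq_avoiding (S : Set ℝ) (hS : IsTotallyDisconnected S) :
    ∃ d : ℕ → ℝ, DenseRange d ∧ ∀ n, d n ∉ S := by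
  have hint : interior S = ∅ := by
    by_contra h
    obtain ⟨x, hx⟩ := nonempty_iff_ne_empty.mpr h
    rw [mem_interior_iff_mem_nhds, Metric.mem_nhds_iff] at hx
    obtain ⟨ε, hε, hball⟩ := hx
    rw [Real.ball_eq_Ioo] at hball
    have hsub : Ioo (x-ε) (x+ε) ⊆ S := hball
    have := hS _ hsub isPreconnected_Ioo
    have h1 : x ∈ Ioo (x-ε) (x+ε) := by constructor <;> linarith
    have h2 : x + ε/2 ∈ Ioo (x-ε) (x+ε) := by constructor <;> linarith
    have := this h1 h2
    linarith
  have hdense : Dense Sᶜ := interior_eq_empty_iff_dense_compl.mp hint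
  obtain ⟨t, htc, htd⟩ := TopologicalSpace.exists_countable_dense ↥(Sᶜ)
  have hD : Dense ((↑) '' t : Set ℝ) := hdense.denseRange_val.dense_image
    continuous_subtype_val htd
  obtain ⟨d, hd⟩ := (htc.image _).exists_eq_range hD.nonempty
  refine ⟨d, ?_, ?_⟩
  · rwa [denseRange_iff_closure_range, ← hd, ← dense_iff_closure_eq]
  · intro n hn
    have : d n ∈ ((↑) '' t : Set ℝ) := hd ▸ mem_range_self n
    obtain ⟨y, _, hy⟩ := this
    exact y.2 (hy ▸ hn)

end CantorEmbed

theorem exists_strictMono_into_cantor_set (S C : Set ℝ) (s a : ℝ)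
    (hS : IsTotallyDisconnected S) (hC : IsCantorSet C) (hs : s ∈ S)
    (ha : a ∈ C) (hacc : TwoSidedAcc C a) :
    ∃ f : ℝ → ℝ, StrictMono f ∧ (∀ x, f x ∈ C) ∧ f s = a ∧
      ∃ h : ↥S ≃ₜ ↥(f '' S), ∀ x : ↥S, (h x : ℝ) = f x := by
  obtain ⟨hCne, hCcomp, hCtd, hCperf⟩ := hC
  have hacc' : ∀ ε > (0:ℝ), (C ∩ Set.Ioo (a-ε) a).Nonempty ∧ (C ∩ Set.Ioo a (a+ε)).Nonempty :=
    fun ε hε => ⟨(hacc ε hε).2, (hacc ε hε).1⟩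
  obtain ⟨d, hd, hdS⟩ := CantorEmbed.exists_dense_seq_avoiding S hS
  set f := CantorEmbed.ff C a d s with hf
  have hmono : StrictMono f := CantorEmbed.ff_strictMono hCperf hCcomp ha hacc' hd
  have hcont : ∀ t ∈ S, ContinuousAt f t := fun t ht =>
    CantorEmbed.ff_continuousAt hCperf hCcomp ha hacc'
      (fun n h => hdS n (h ▸ ht))
  refine ⟨f, hmono, fun x => CantorEmbed.ff_mem_C hCperf hCcomp ha hacc' x,
    CantorEmbed.ff_s hCperf hCcomp ha hacc',
    CantorEmbed.homeoOfStrictMono f S hmono hcont, fun x => rfl⟩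
end

section
/- If C₁ and C₂ are Cantor sets in ℝ and aᵢ ∈ Cᵢ is a two-sided accumulation point of Cᵢ for i = 1, 2, then there exists an increasing homeomorphism g : ℝ → ℝ with g(a₁) = a₂ and g(C₁) = C₂. -/
open Set

namespace CantorHomeo

/-- A maximal open interval in the complement of `C`, with endpoints in `C`. -/
def IsGap (C : Set ℝ) (p q : ℝ) : Prop :=
  p ∈ C ∧ q ∈ C ∧ p < q ∧ Set.Ioo p q ∩ C = ∅

/-- The type of gaps of `C`. -/
def Gap (C : Set ℝ) : Type := {g : ℝ × ℝ // IsGap C g.1 g.2}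

variable {C : Set ℝ}

lemma IsGap.notMem_Ioo {p q c : ℝ} (h : IsGap C p q) (hc : c ∈ C) : c ∉ Set.Ioo p q := by
  intro hmem
  have : c ∈ Set.Ioo p q ∩ C := ⟨hmem, hc⟩
  rw [h.2.2.2] at this
  exact this

lemma gap_right_unique {p q q' : ℝ} (h : IsGap C p q) (h' : IsGap C p q') : q = q' := by
  rcases lt_trichotomy q q' with hlt | he | hlt
  · exact absurd ⟨h.2.2.1, hlt⟩ (h'.notMem_Ioo h.2.1)
  · exact he
  · exact absurd ⟨h'.2.2.1, hlt⟩ (h.notMem_Ioo h'.2.1)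

lemma gap_fst_injective : Function.Injective (fun g : Gap C => g.val.1) := by
  rintro ⟨⟨p, q⟩, hg⟩ ⟨⟨p', q'⟩, hg'⟩ h
  simp only at h
  subst h
  have := gap_right_unique hg hg'
  subst this
  rfl

noncomputable instance : LinearOrder (Gap C) :=
  LinearOrder.lift' (fun g : Gap C => g.val.1) gap_fst_injective

lemma Gap.le_iff {g g' : Gap C} : g ≤ g' ↔ g.val.1 ≤ g'.val.1 := Iff.rfl

lemma Gap.lt_iff {g g' : Gap C} : g < g' ↔ g.val.1 < g'.val.1 := by
  rw [lt_iff_le_not_ge, Gap.le_iff, Gap.le_iff, lt_iff_le_not_ge]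

/-- Distinct gaps are disjoint: if `g` starts before `g'`, it ends before `g'` starts. -/
lemma gap_disj {g g' : Gap C} (h : g.val.1 < g'.val.1) : g.val.2 ≤ g'.val.1 := by
  by_contra hlt
  push_neg at hlt
  have h1 : g'.val.1 ∈ Set.Ioo g.val.1 g.val.2 := ⟨h, hlt⟩
  exact g.prop.notMem_Ioo g'.prop.1 h1

lemma gap_lt_iff_right {g g' : Gap C} : g < g' ↔ g.val.2 < g'.val.2 := by
  rw [Gap.lt_iff]
  constructor
  · intro h
    exact lt_of_le_of_lt (gap_disj h) g'.prop.2.2.1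
  · intro h
    rcases lt_trichotomy g.val.1 g'.val.1 with h1 | h1 | h1
    · exact h1
    · exact absurd (gap_right_unique (h1 ▸ g.prop) g'.prop) h.ne
    · exact absurd (lt_of_le_of_lt (gap_disj h1) g.prop.2.2.1) (not_lt.2 h.le)

lemma gap_le_iff_right {g g' : Gap C} : g ≤ g' ↔ g.val.2 ≤ g'.val.2 := by
  rw [← not_lt, ← not_lt, gap_lt_iff_right]

lemma gap_le_of_right_le_left {g g' : Gap C} (h : g.val.2 ≤ g'.val.1) : g < g' :=
  Gap.lt_iff.2 (lt_of_lt_of_le g.prop.2.2.1 h)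

lemma right_le_left_of_lt {g g' : Gap C} (h : g < g') : g.val.2 ≤ g'.val.1 :=
  gap_disj (Gap.lt_iff.1 h)

noncomputable def gapRat (g : Gap C) : ℚ := (exists_rat_btwn g.prop.2.2.1).choose

lemma gapRat_mem (g : Gap C) : (gapRat g : ℝ) ∈ Set.Ioo g.val.1 g.val.2 := by
  have := (exists_rat_btwn g.prop.2.2.1).choose_spec
  exact ⟨this.1, this.2⟩

instance : Countable (Gap C) := by
  have hinj : Function.Injective (gapRat (C := C)) := by
    intro g g' h
    have h1 := gapRat_mem g
    have h2 := gapRat_mem g'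
    rw [h] at h1
    -- the rational lies in both gaps, so the gaps coincide
    apply gap_fst_injective
    by_contra hne
    rcases lt_or_gt_of_ne hne with hlt | hlt
    · have := gap_disj hlt
      exact absurd (lt_of_lt_of_le h1.2 this) (not_lt.2 h2.1.le)
    · have := gap_disj hlt
      exact absurd (lt_of_lt_of_le h2.2 this) (not_lt.2 h1.1.le)
  exact hinj.countable


lemma acc_pts (hperf : Perfect C) {x : ℝ} (hx : x ∈ C) {ε : ℝ} (hε : 0 < ε) :
    ∃ c ∈ C, c ≠ x ∧ |c - x| < ε := by
  have h := hperf.acc x hx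
  rw [accPt_iff_nhds] at h
  obtain ⟨y, ⟨hy1, hy2⟩, hy3⟩ := h (Metric.ball x ε) (Metric.ball_mem_nhds x hε)
  exact ⟨y, hy2, hy3, by rwa [Metric.mem_ball, Real.dist_eq] at hy1⟩

lemma gap_around (hcomp : IsCompact C) {z : ℝ} (hz : z ∉ C)
    (hbelow : ∃ x ∈ C, x ≤ z) (habove : ∃ y ∈ C, z ≤ y) :
    ∃ g : Gap C, g.val.1 < z ∧ z < g.val.2 ∧
      (∀ c ∈ C, c ≤ z → c ≤ g.val.1) ∧ (∀ c ∈ C, z ≤ c → g.val.2 ≤ c) := by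
  obtain ⟨x, hxC, hxz⟩ := hbelow
  obtain ⟨y, hyC, hzy⟩ := habove
  set p := sSup (C ∩ Iic z) with hp
  set q := sInf (C ∩ Ici z) with hq
  have hCl : IsClosed (C ∩ Iic z) := hcomp.isClosed.inter isClosed_Iic
  have hCr : IsClosed (C ∩ Ici z) := hcomp.isClosed.inter isClosed_Ici
  have hnl : (C ∩ Iic z).Nonempty := ⟨x, hxC, hxz⟩
  have hnr : (C ∩ Ici z).Nonempty := ⟨y, hyC, hzy⟩
  have hbl : BddAbove (C ∩ Iic z) := ⟨z, fun c hc => hc.2⟩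
  have hbr : BddBelow (C ∩ Ici z) := ⟨z, fun c hc => hc.2⟩
  have hpmem : p ∈ C ∩ Iic z := hCl.csSup_mem hnl hbl
  have hqmem : q ∈ C ∩ Ici z := hCr.csInf_mem hnr hbr
  have hpz : p < z := lt_of_le_of_ne hpmem.2 (fun h => hz (h ▸ hpmem.1))
  have hzq : z < q := lt_of_le_of_ne hqmem.2 (fun h => hz (h.symm ▸ hqmem.1))
  have hgap : IsGap C p q := by
    refine ⟨hpmem.1, hqmem.1, hpz.trans hzq, ?_⟩
    ext c
    simp only [mem_inter_iff, mem_Ioo, mem_empty_iff_false, iff_false, not_and]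
    rintro ⟨hc1, hc2⟩ hcC
    rcases le_or_gt c z with hcz | hcz
    · exact absurd (le_csSup hbl ⟨hcC, hcz⟩) (not_le.2 hc1)
    · exact absurd (csInf_le hbr ⟨hcC, hcz.le⟩) (not_le.2 hc2)
  refine ⟨⟨(p, q), hgap⟩, hpz, hzq, ?_, ?_⟩
  · exact fun c hc hcz => le_csSup hbl ⟨hc, hcz⟩
  · exact fun c hc hcz => csInf_le hbr ⟨hc, hcz⟩

lemma gap_between (hcomp : IsCompact C) (htd : IsTotallyDisconnected C)
    {x y : ℝ} (hx : x ∈ C) (hy : y ∈ C) (hxy : x < y) :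
    ∃ g : Gap C, x ≤ g.val.1 ∧ g.val.2 ≤ y := by
  have : ¬ Icc x y ⊆ C := by
    intro hsub
    have := htd (Icc x y) hsub isPreconnected_Icc
    exact absurd (this (left_mem_Icc.2 hxy.le) (right_mem_Icc.2 hxy.le)) hxy.ne
  obtain ⟨z, hzI, hzC⟩ := not_subset.1 this
  obtain ⟨g, _, _, h3, h4⟩ := gap_around hcomp hzC ⟨x, hx, hzI.1⟩ ⟨y, hy, hzI.2⟩
  exact ⟨g, h3 x hx hzI.1, h4 y hy hzI.2⟩

lemma no_adjacent (hperf : Perfect C) {p q r : ℝ} (h1 : IsGap C p q) (h2 : IsGap C q r) :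
    False := by
  obtain ⟨c, hcC, hcne, hcd⟩ :=
    acc_pts hperf h1.2.1 (lt_min (sub_pos.2 h1.2.2.1) (sub_pos.2 h2.2.2.1))
  have habs := abs_lt.1 hcd
  rcases lt_or_gt_of_ne hcne with hlt | hgt
  · have : p < c := by linarith [min_le_left (q - p) (r - q)]
    exact h1.notMem_Ioo hcC ⟨this, hlt⟩
  · have : c < r := by linarith [min_le_right (q - p) (r - q)]
    exact h2.notMem_Ioo hcC ⟨hgt, this⟩

lemma exists_left_of_gap (hperf : Perfect C) (g : Gap C) {ε : ℝ} (hε : 0 < ε) :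
    ∃ c ∈ C, g.val.1 - ε < c ∧ c < g.val.1 := by
  obtain ⟨c, hcC, hcne, hcd⟩ := acc_pts hperf g.prop.1 (lt_min hε (sub_pos.2 g.prop.2.2.1))
  have habs := abs_lt.1 hcd
  rcases lt_or_gt_of_ne hcne with hlt | hgt
  · exact ⟨c, hcC, by linarith [min_le_left ε (g.val.2 - g.val.1)], hlt⟩
  · exfalso
    exact g.prop.notMem_Ioo hcC ⟨hgt, by linarith [min_le_right ε (g.val.2 - g.val.1)]⟩

lemma exists_right_of_gap (hperf : Perfect C) (g : Gap C) {ε : ℝ} (hε : 0 < ε) :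
    ∃ c ∈ C, g.val.2 < c ∧ c < g.val.2 + ε := by
  obtain ⟨c, hcC, hcne, hcd⟩ := acc_pts hperf g.prop.2.1 (lt_min hε (sub_pos.2 g.prop.2.2.1))
  have habs := abs_lt.1 hcd
  rcases lt_or_gt_of_ne hcne with hlt | hgt
  · exfalso
    exact g.prop.notMem_Ioo hcC ⟨by linarith [min_le_right ε (g.val.2 - g.val.1)], hlt⟩
  · exact ⟨c, hcC, hgt, by linarith [min_le_left ε (g.val.2 - g.val.1)]⟩

lemma sup_gaps (hne : C.Nonempty) (hcomp : IsCompact C) (htd : IsTotallyDisconnected C)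
    {y : ℝ} (hy : y ∈ C) :
    sSup (insert (sInf C) ((fun g : Gap C => g.val.2) '' {g | g.val.2 ≤ y})) = y := by
  set S := insert (sInf C) ((fun g : Gap C => g.val.2) '' {g | g.val.2 ≤ y}) with hS
  have hSy : ∀ s ∈ S, s ≤ y := by
    rintro s (rfl | ⟨g, hg, rfl⟩)
    · exact csInf_le hcomp.bddBelow hy
    · exact hg
  have hbdd : BddAbove S := ⟨y, hSy⟩
  have hSne : S.Nonempty := ⟨sInf C, mem_insert _ _⟩
  refine le_antisymm (csSup_le hSne hSy) ?_
  by_contra hlt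
  push_neg at hlt
  set s := sSup S with hs
  have hinfle : sInf C ≤ s := le_csSup hbdd (mem_insert _ _)
  by_cases hmid : (C ∩ Ioo s y).Nonempty
  · obtain ⟨c, hcC, hc1, hc2⟩ := hmid
    obtain ⟨g, hg1, hg2⟩ := gap_between hcomp htd hcC hy hc2
    have : g.val.2 ≤ s := le_csSup hbdd (mem_insert_of_mem _ ⟨g, hg2, rfl⟩)
    exact absurd (lt_of_lt_of_le hc1 (le_trans hg1 g.prop.2.2.1.le)) (not_lt.2 this)
  · set z := (s + y) / 2 with hz
    have hsz : s < z := by rw [hz]; linarith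
    have hzy : z < y := by rw [hz]; linarith
    have hzC : z ∉ C := fun h => hmid ⟨z, h, hsz, hzy⟩
    obtain ⟨g, hg1, hg2, _, hg4⟩ := gap_around hcomp hzC
      ⟨sInf C, hcomp.sInf_mem hne, le_of_lt (lt_of_le_of_lt hinfle hsz)⟩ ⟨y, hy, hzy.le⟩
    have hgy : g.val.2 ≤ y := hg4 y hy hzy.le
    have : g.val.2 ≤ s := le_csSup hbdd (mem_insert_of_mem _ ⟨g, hgy, rfl⟩)
    exact absurd (hsz.trans hg2) (not_lt.2 this)


/-! ### The two halves of the gap order -/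

lemma gap_right_ne_acc {a : ℝ} (hacc : TwoSidedAcc C a) (g : Gap C) : g.val.2 ≠ a := by
  intro h
  obtain ⟨c, hc⟩ := (hacc (g.val.2 - g.val.1) (sub_pos.2 g.prop.2.2.1)).2
  rw [h] at hc
  refine g.prop.notMem_Ioo hc.1 ⟨?_, ?_⟩
  · have := hc.2.1; linarith
  · rw [h]; exact hc.2.2

lemma gap_left_ne_acc {a : ℝ} (hacc : TwoSidedAcc C a) (g : Gap C) : g.val.1 ≠ a := by
  intro h
  obtain ⟨c, hc⟩ := (hacc (g.val.2 - g.val.1) (sub_pos.2 g.prop.2.2.1)).1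
  refine g.prop.notMem_Ioo hc.1 ⟨?_, ?_⟩
  · rw [h]; exact hc.2.1
  · have := hc.2.2; linarith

lemma right_of_not_left {a : ℝ} (ha : a ∈ C) (g : Gap C) (h : ¬ g.val.2 ≤ a) :
    a ≤ g.val.1 := by
  push_neg at h
  by_contra hlt
  push_neg at hlt
  exact g.prop.notMem_Ioo ha ⟨hlt, h⟩

/-- Gaps lying to the left of `a`. -/
abbrev LeftGaps (C : Set ℝ) (a : ℝ) := {g : Gap C // g.val.2 ≤ a}
/-- Gaps lying to the right of `a`. -/
abbrev RightGaps (C : Set ℝ) (a : ℝ) := {g : Gap C // a ≤ g.val.1}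

section Instances

variable {a : ℝ}

lemma leftGaps_nonempty (hcomp : IsCompact C) (htd : IsTotallyDisconnected C)
    (ha : a ∈ C) (hacc : TwoSidedAcc C a) : Nonempty (LeftGaps C a) := by
  obtain ⟨c, hcC, _, hca⟩ := (hacc 1 one_pos).2
  obtain ⟨g, _, hg2⟩ := gap_between hcomp htd hcC ha hca
  exact ⟨⟨g, hg2⟩⟩

lemma rightGaps_nonempty (hcomp : IsCompact C) (htd : IsTotallyDisconnected C)
    (ha : a ∈ C) (hacc : TwoSidedAcc C a) : Nonempty (RightGaps C a) := by
  obtain ⟨c, hcC, hca, _⟩ := (hacc 1 one_pos).1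
  obtain ⟨g, hg1, _⟩ := gap_between hcomp htd ha hcC hca
  exact ⟨⟨g, hg1⟩⟩

lemma mid_gap_of_lt (hcomp : IsCompact C) (htd : IsTotallyDisconnected C)
    (hperf : Perfect C) {g g' : Gap C} (h : g < g') :
    ∃ g'' : Gap C, g < g'' ∧ g'' < g' ∧ g.val.2 ≤ g''.val.1 ∧ g''.val.2 ≤ g'.val.1 := by
  have h1 : g.val.2 ≤ g'.val.1 := right_le_left_of_lt h
  have h2 : g.val.2 < g'.val.1 := by
    rcases lt_or_eq_of_le h1 with h' | h'
    · exact h'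
    · exact absurd (no_adjacent hperf g.prop (h' ▸ g'.prop)) not_false
  obtain ⟨g'', hg1, hg2⟩ := gap_between hcomp htd g.prop.2.1 g'.prop.1 h2
  refine ⟨g'', gap_le_of_right_le_left ?_, gap_le_of_right_le_left hg2, hg1, hg2⟩
  exact le_trans (le_refl _) hg1

lemma leftGaps_dense (hcomp : IsCompact C) (htd : IsTotallyDisconnected C)
    (hperf : Perfect C) : DenselyOrdered (LeftGaps C a) := by
  constructor
  rintro ⟨g, hg⟩ ⟨g', hg'⟩ hlt
  rw [Subtype.mk_lt_mk] at hlt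
  obtain ⟨g'', h1, h2, _, h4⟩ := mid_gap_of_lt hcomp htd hperf hlt
  exact ⟨⟨g'', le_trans (le_trans h4 g'.prop.2.2.1.le) hg'⟩, Subtype.mk_lt_mk.2 h1,
    Subtype.mk_lt_mk.2 h2⟩

lemma rightGaps_dense (hcomp : IsCompact C) (htd : IsTotallyDisconnected C)
    (hperf : Perfect C) : DenselyOrdered (RightGaps C a) := by
  constructor
  rintro ⟨g, hg⟩ ⟨g', hg'⟩ hlt
  rw [Subtype.mk_lt_mk] at hlt
  obtain ⟨g'', h1, h2, h3, _⟩ := mid_gap_of_lt hcomp htd hperf hlt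
  exact ⟨⟨g'', le_trans hg (le_trans g.prop.2.2.1.le h3)⟩, Subtype.mk_lt_mk.2 h1,
    Subtype.mk_lt_mk.2 h2⟩

lemma leftGaps_noMax (hcomp : IsCompact C) (htd : IsTotallyDisconnected C)
    (ha : a ∈ C) (hacc : TwoSidedAcc C a) : NoMaxOrder (LeftGaps C a) := by
  constructor
  rintro ⟨g, hg⟩
  have hlt : g.val.2 < a := lt_of_le_of_ne hg (gap_right_ne_acc hacc g)
  obtain ⟨g'', h1, h2⟩ := gap_between hcomp htd g.prop.2.1 ha hlt
  exact ⟨⟨g'', h2⟩, Subtype.mk_lt_mk.2 (gap_le_of_right_le_left h1)⟩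

lemma leftGaps_noMin (hcomp : IsCompact C) (htd : IsTotallyDisconnected C)
    (hperf : Perfect C) : NoMinOrder (LeftGaps C a) := by
  constructor
  rintro ⟨g, hg⟩
  obtain ⟨c, hcC, _, hc2⟩ := exists_left_of_gap hperf g one_pos
  obtain ⟨g'', _, h2⟩ := gap_between hcomp htd hcC g.prop.1 hc2
  refine ⟨⟨g'', le_trans (le_trans h2 g.prop.2.2.1.le) hg⟩, Subtype.mk_lt_mk.2 ?_⟩
  exact Gap.lt_iff.2 (lt_of_lt_of_le g''.prop.2.2.1 h2)

lemma rightGaps_noMax (hcomp : IsCompact C) (htd : IsTotallyDisconnected C)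
    (hperf : Perfect C) : NoMaxOrder (RightGaps C a) := by
  constructor
  rintro ⟨g, hg⟩
  obtain ⟨c, hcC, hc1, _⟩ := exists_right_of_gap hperf g one_pos
  obtain ⟨g'', h1, _⟩ := gap_between hcomp htd g.prop.2.1 hcC hc1
  exact ⟨⟨g'', le_trans hg (le_trans g.prop.2.2.1.le h1)⟩,
    Subtype.mk_lt_mk.2 (gap_le_of_right_le_left h1)⟩

lemma rightGaps_noMin (hcomp : IsCompact C) (htd : IsTotallyDisconnected C)
    (ha : a ∈ C) (hacc : TwoSidedAcc C a) : NoMinOrder (RightGaps C a) := by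
  constructor
  rintro ⟨g, hg⟩
  have hlt : a < g.val.1 := lt_of_le_of_ne hg (Ne.symm (gap_left_ne_acc hacc g))
  obtain ⟨g'', h1, h2⟩ := gap_between hcomp htd ha g.prop.1 hlt
  exact ⟨⟨g'', h1⟩, Subtype.mk_lt_mk.2 (gap_le_of_right_le_left h2)⟩

end Instances

/-! ### The order isomorphism between the gaps -/

lemma exists_psi {C₁ C₂ : Set ℝ} {a₁ a₂ : ℝ}
    (h1 : IsCantorSet C₁) (h2 : IsCantorSet C₂)
    (ha₁ : a₁ ∈ C₁) (ha₂ : a₂ ∈ C₂)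
    (hacc₁ : TwoSidedAcc C₁ a₁) (hacc₂ : TwoSidedAcc C₂ a₂) :
    ∃ ψ : Gap C₁ ≃o Gap C₂, ∀ g : Gap C₁, g.val.2 ≤ a₁ ↔ (ψ g).val.2 ≤ a₂ := by
  obtain ⟨hne₁, hcomp₁, htd₁, hperf₁⟩ := h1
  obtain ⟨hne₂, hcomp₂, htd₂, hperf₂⟩ := h2
  haveI := leftGaps_dense (a := a₁) hcomp₁ htd₁ hperf₁
  haveI := leftGaps_dense (a := a₂) hcomp₂ htd₂ hperf₂
  haveI := rightGaps_dense (a := a₁) hcomp₁ htd₁ hperf₁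
  haveI := rightGaps_dense (a := a₂) hcomp₂ htd₂ hperf₂
  haveI := leftGaps_noMax hcomp₁ htd₁ ha₁ hacc₁
  haveI := leftGaps_noMax hcomp₂ htd₂ ha₂ hacc₂
  haveI := leftGaps_noMin (a := a₁) hcomp₁ htd₁ hperf₁
  haveI := leftGaps_noMin (a := a₂) hcomp₂ htd₂ hperf₂
  haveI := rightGaps_noMax (a := a₁) hcomp₁ htd₁ hperf₁
  haveI := rightGaps_noMax (a := a₂) hcomp₂ htd₂ hperf₂
  haveI := rightGaps_noMin hcomp₁ htd₁ ha₁ hacc₁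
  haveI := rightGaps_noMin hcomp₂ htd₂ ha₂ hacc₂
  haveI := leftGaps_nonempty hcomp₁ htd₁ ha₁ hacc₁
  haveI := leftGaps_nonempty hcomp₂ htd₂ ha₂ hacc₂
  haveI := rightGaps_nonempty hcomp₁ htd₁ ha₁ hacc₁
  haveI := rightGaps_nonempty hcomp₂ htd₂ ha₂ hacc₂
  obtain ⟨φA⟩ := Order.iso_of_countable_dense (LeftGaps C₁ a₁) (LeftGaps C₂ a₂)
  obtain ⟨φB⟩ := Order.iso_of_countable_dense (RightGaps C₁ a₁) (RightGaps C₂ a₂)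
  set f : Gap C₁ → Gap C₂ := fun g =>
    if h : g.val.2 ≤ a₁ then (φA ⟨g, h⟩).val
    else (φB ⟨g, right_of_not_left ha₁ g h⟩).val with hf
  have hfA : ∀ (g : Gap C₁) (h : g.val.2 ≤ a₁), f g = (φA ⟨g, h⟩).val := by
    intro g h; rw [hf]; simp only [dif_pos h]
  have hfB : ∀ (g : Gap C₁) (h : ¬ g.val.2 ≤ a₁),
      f g = (φB ⟨g, right_of_not_left ha₁ g h⟩).val := by
    intro g h; rw [hf]; simp only [dif_neg h]
  have hfprop : ∀ g, (g.val.2 ≤ a₁ ↔ (f g).val.2 ≤ a₂) := by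
    intro g
    by_cases h : g.val.2 ≤ a₁
    · rw [hfA g h]; exact iff_of_true h (φA ⟨g, h⟩).prop
    · rw [hfB g h]
      refine iff_of_false h (not_le.2 ?_)
      exact lt_of_le_of_lt (φB _).prop (φB _).val.prop.2.2.1
  have hmono : StrictMono f := by
    intro g g' hlt
    by_cases h : g.val.2 ≤ a₁ <;> by_cases h' : g'.val.2 ≤ a₁
    · rw [hfA g h, hfA g' h']
      exact Subtype.coe_lt_coe.2 (φA.strictMono (Subtype.mk_lt_mk.2 hlt))
    · rw [hfA g h, hfB g' h']
      exact gap_le_of_right_le_left (le_trans (φA ⟨g, h⟩).prop (φB _).prop)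
    · exfalso
      have hga : a₁ ≤ g.val.1 := right_of_not_left ha₁ g h
      have hlt' := Gap.lt_iff.1 hlt
      have := g'.prop.2.2.1
      have : g'.val.1 < g'.val.2 := this
      linarith
    · rw [hfB g h, hfB g' h']
      exact Subtype.coe_lt_coe.2 (φB.strictMono (Subtype.mk_lt_mk.2 hlt))
  have hsurj : Function.Surjective f := by
    intro G
    by_cases hG : G.val.2 ≤ a₂
    · refine ⟨(φA.symm ⟨G, hG⟩).val, ?_⟩
      rw [hfA _ (φA.symm ⟨G, hG⟩).prop, Subtype.coe_eta, OrderIso.apply_symm_apply]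
    · have hG' : a₂ ≤ G.val.1 := right_of_not_left ha₂ G hG
      refine ⟨(φB.symm ⟨G, hG'⟩).val, ?_⟩
      have hnot : ¬ (φB.symm ⟨G, hG'⟩).val.val.2 ≤ a₁ := by
        have h1 := (φB.symm ⟨G, hG'⟩).prop
        have h2 := (φB.symm ⟨G, hG'⟩).val.prop.2.2.1
        exact not_le.2 (lt_of_le_of_lt h1 h2)
      rw [hfB _ hnot, Subtype.coe_eta, OrderIso.apply_symm_apply]
  exact ⟨StrictMono.orderIsoOfSurjective f hmono hsurj, fun g => hfprop g⟩

/-! ### The induced map on points -/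

variable {C₁ C₂ : Set ℝ}

/-- The map from `C₁` to `C₂` induced by an order isomorphism of gaps. -/
noncomputable def hmap (ψ : Gap C₁ ≃o Gap C₂) (x : ℝ) : ℝ :=
  sSup (insert (sInf C₂) ((fun g : Gap C₁ => (ψ g).val.2) '' {g | g.val.2 ≤ x}))

lemma hmap_subset (ψ : Gap C₁ ≃o Gap C₂) (hne₂ : C₂.Nonempty) (hcomp₂ : IsCompact C₂) (x : ℝ) :
    insert (sInf C₂) ((fun g : Gap C₁ => (ψ g).val.2) '' {g | g.val.2 ≤ x}) ⊆ C₂ := by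
  rintro s (rfl | ⟨g, _, rfl⟩)
  · exact hcomp₂.sInf_mem hne₂
  · exact (ψ g).prop.2.1

lemma hmap_bddAbove (ψ : Gap C₁ ≃o Gap C₂) (hne₂ : C₂.Nonempty) (hcomp₂ : IsCompact C₂) (x : ℝ) :
    BddAbove (insert (sInf C₂) ((fun g : Gap C₁ => (ψ g).val.2) '' {g | g.val.2 ≤ x})) :=
  hcomp₂.bddAbove.mono (hmap_subset ψ hne₂ hcomp₂ x)

lemma hmap_mem (ψ : Gap C₁ ≃o Gap C₂) (hne₂ : C₂.Nonempty) (hcomp₂ : IsCompact C₂) (x : ℝ) :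
    hmap ψ x ∈ C₂ := by
  have h1 := csSup_mem_closure (s := insert (sInf C₂) ((fun g : Gap C₁ => (ψ g).val.2) '' {g | g.val.2 ≤ x}))
    ⟨sInf C₂, mem_insert _ _⟩ (hmap_bddAbove ψ hne₂ hcomp₂ x)
  have h2 := closure_mono (hmap_subset ψ hne₂ hcomp₂ x)
  have := h2 h1
  rwa [hcomp₂.isClosed.closure_eq] at this

lemma le_hmap_of_gap (ψ : Gap C₁ ≃o Gap C₂) (hne₂ : C₂.Nonempty) (hcomp₂ : IsCompact C₂)
    {x : ℝ} {g : Gap C₁} (h : g.val.2 ≤ x) : (ψ g).val.2 ≤ hmap ψ x :=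
  le_csSup (hmap_bddAbove ψ hne₂ hcomp₂ x) (mem_insert_of_mem _ ⟨g, h, rfl⟩)

lemma sInf_le_hmap (ψ : Gap C₁ ≃o Gap C₂) (hne₂ : C₂.Nonempty) (hcomp₂ : IsCompact C₂) (x : ℝ) :
    sInf C₂ ≤ hmap ψ x :=
  le_csSup (hmap_bddAbove ψ hne₂ hcomp₂ x) (mem_insert _ _)

lemma hmap_le_gapleft (ψ : Gap C₁ ≃o Gap C₂) (hne₂ : C₂.Nonempty) (hcomp₂ : IsCompact C₂)
    {x : ℝ} {g : Gap C₁} (hx : x ≤ g.val.1) : hmap ψ x ≤ (ψ g).val.1 := by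
  refine csSup_le ⟨sInf C₂, mem_insert _ _⟩ ?_
  rintro s (rfl | ⟨g', hg', rfl⟩)
  · exact csInf_le hcomp₂.bddBelow (ψ g).prop.1
  · have hlt : g' < g := gap_le_of_right_le_left (le_trans hg' hx)
    exact right_le_left_of_lt (ψ.strictMono hlt)

lemma hmap_gap_right (ψ : Gap C₁ ≃o Gap C₂) (hne₂ : C₂.Nonempty) (hcomp₂ : IsCompact C₂)
    (g : Gap C₁) : hmap ψ g.val.2 = (ψ g).val.2 := by
  refine le_antisymm ?_ (le_hmap_of_gap ψ hne₂ hcomp₂ le_rfl)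
  refine csSup_le ⟨sInf C₂, mem_insert _ _⟩ ?_
  rintro s (rfl | ⟨g', hg', rfl⟩)
  · exact csInf_le hcomp₂.bddBelow (ψ g).prop.2.1
  · have : g' ≤ g := gap_le_iff_right.2 hg'
    exact gap_le_iff_right.1 (ψ.le_iff_le.2 this)

lemma hmap_gap_left (ψ : Gap C₁ ≃o Gap C₂)
    (hne₂ : C₂.Nonempty) (hcomp₂ : IsCompact C₂) (htd₂ : IsTotallyDisconnected C₂)
    (g : Gap C₁) : hmap ψ g.val.1 = (ψ g).val.1 := by
  refine le_antisymm (hmap_le_gapleft ψ hne₂ hcomp₂ le_rfl) ?_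
  conv_lhs => rw [← sup_gaps hne₂ hcomp₂ htd₂ (ψ g).prop.1]
  refine csSup_le_csSup (hmap_bddAbove ψ hne₂ hcomp₂ g.val.1) ⟨sInf C₂, mem_insert _ _⟩ ?_
  rintro s (rfl | ⟨G, hG, rfl⟩)
  · exact mem_insert _ _
  · have hGlt : G < ψ g := gap_le_of_right_le_left hG
    have h1 : ψ.symm G < g := by
      have := ψ.symm.strictMono hGlt
      rwa [ψ.symm_apply_apply] at this
    refine mem_insert_of_mem _ ⟨ψ.symm G, right_le_left_of_lt h1, ?_⟩
    simp only [ψ.apply_symm_apply]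

lemma hmap_strictMonoOn (ψ : Gap C₁ ≃o Gap C₂)
    (hcomp₁ : IsCompact C₁) (htd₁ : IsTotallyDisconnected C₁)
    (hne₂ : C₂.Nonempty) (hcomp₂ : IsCompact C₂)
    {x y : ℝ} (hx : x ∈ C₁) (hy : y ∈ C₁) (hxy : x < y) : hmap ψ x < hmap ψ y := by
  obtain ⟨g, hg1, hg2⟩ := gap_between hcomp₁ htd₁ hx hy hxy
  calc hmap ψ x ≤ (ψ g).val.1 := hmap_le_gapleft ψ hne₂ hcomp₂ hg1
    _ < (ψ g).val.2 := (ψ g).prop.2.2.1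
    _ ≤ hmap ψ y := le_hmap_of_gap ψ hne₂ hcomp₂ hg2

lemma hmap_cut (ψ : Gap C₁ ≃o Gap C₂) (hne₂ : C₂.Nonempty) (hcomp₂ : IsCompact C₂)
    {x : ℝ} (hx : x ∈ C₁) :
    {G : Gap C₂ | G.val.2 ≤ hmap ψ x} = ψ '' {g | g.val.2 ≤ x} := by
  ext G
  constructor
  · intro hG
    refine ⟨ψ.symm G, ?_, ψ.apply_symm_apply G⟩
    by_contra hcon
    rw [mem_setOf_eq, not_le] at hcon
    have hxle : x ≤ (ψ.symm G).val.1 := by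
      by_contra h
      push_neg at h
      exact (ψ.symm G).prop.notMem_Ioo hx ⟨h, hcon⟩
    have := hmap_le_gapleft ψ hne₂ hcomp₂ hxle
    rw [ψ.apply_symm_apply] at this
    have hG2 : G.val.2 ≤ G.val.1 := le_trans hG this
    exact absurd G.prop.2.2.1 (not_lt.2 hG2)
  · rintro ⟨g, hg, rfl⟩
    exact le_hmap_of_gap ψ hne₂ hcomp₂ hg

lemma hmap_hmap (ψ : Gap C₁ ≃o Gap C₂)
    (hne₁ : C₁.Nonempty) (hcomp₁ : IsCompact C₁) (htd₁ : IsTotallyDisconnected C₁)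
    (hne₂ : C₂.Nonempty) (hcomp₂ : IsCompact C₂)
    {x : ℝ} (hx : x ∈ C₁) : hmap ψ.symm (hmap ψ x) = x := by
  rw [hmap, hmap_cut ψ hne₂ hcomp₂ hx]
  have himg : (fun G : Gap C₂ => (ψ.symm G).val.2) '' (ψ '' {g | g.val.2 ≤ x})
      = (fun g : Gap C₁ => g.val.2) '' {g | g.val.2 ≤ x} := by
    rw [image_image]
    simp only [ψ.symm_apply_apply]
  rw [himg]
  exact sup_gaps hne₁ hcomp₁ htd₁ hx

lemma hmap_sInf (ψ : Gap C₁ ≃o Gap C₂) (hcomp₁ : IsCompact C₁) :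
    hmap ψ (sInf C₁) = sInf C₂ := by
  have himg : {g : Gap C₁ | g.val.2 ≤ sInf C₁} = ∅ := by
    ext g
    simp only [mem_setOf_eq, mem_empty_iff_false, iff_false, not_le]
    exact lt_of_le_of_lt (csInf_le hcomp₁.bddBelow g.prop.1) g.prop.2.2.1
  rw [hmap, himg, image_empty, LawfulSingleton.insert_empty_eq, csSup_singleton]

lemma hmap_sSup (ψ : Gap C₁ ≃o Gap C₂)
    (hne₁ : C₁.Nonempty) (hcomp₁ : IsCompact C₁)
    (hne₂ : C₂.Nonempty) (hcomp₂ : IsCompact C₂) (htd₂ : IsTotallyDisconnected C₂) :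
    hmap ψ (sSup C₁) = sSup C₂ := by
  have h1 : {g : Gap C₁ | g.val.2 ≤ sSup C₁} = univ :=
    eq_univ_of_forall fun g => le_csSup hcomp₁.bddAbove g.prop.2.1
  have h2 : {G : Gap C₂ | G.val.2 ≤ sSup C₂} = univ :=
    eq_univ_of_forall fun G => le_csSup hcomp₂.bddAbove G.prop.2.1
  have himg : (fun g : Gap C₁ => (ψ g).val.2) '' univ = (fun G : Gap C₂ => G.val.2) '' univ := by
    rw [image_univ, image_univ]
    exact (Function.Surjective.range_comp ψ.surjective (fun G : Gap C₂ => G.val.2))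
  rw [hmap, h1, himg, ← h2]
  exact sup_gaps hne₂ hcomp₂ htd₂ (hcomp₂.sSup_mem hne₂)

lemma hmap_acc (ψ : Gap C₁ ≃o Gap C₂) {a₁ a₂ : ℝ}
    (hne₂ : C₂.Nonempty) (hcomp₂ : IsCompact C₂) (htd₂ : IsTotallyDisconnected C₂)
    (ha₂ : a₂ ∈ C₂) (hψa : ∀ g : Gap C₁, g.val.2 ≤ a₁ ↔ (ψ g).val.2 ≤ a₂) :
    hmap ψ a₁ = a₂ := by
  have himg : (fun g : Gap C₁ => (ψ g).val.2) '' {g | g.val.2 ≤ a₁}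
      = (fun G : Gap C₂ => G.val.2) '' {G | G.val.2 ≤ a₂} := by
    ext s
    constructor
    · rintro ⟨g, hg, rfl⟩
      exact ⟨ψ g, (hψa g).1 hg, rfl⟩
    · rintro ⟨G, hG, rfl⟩
      refine ⟨ψ.symm G, ?_, by simp only [ψ.apply_symm_apply]⟩
      rw [mem_setOf_eq, hψa (ψ.symm G), ψ.apply_symm_apply]
      exact hG
  rw [hmap, himg]
  exact sup_gaps hne₂ hcomp₂ htd₂ ha₂

/-! ### Extension of the map on `C` to a map on `ℝ` -/

/-- Left endpoint of the gap containing `x` (or `x` itself for `x ∈ C`). -/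
noncomputable def lp (C : Set ℝ) (x : ℝ) : ℝ := sSup (C ∩ Iic x)
/-- Right endpoint of the gap containing `x` (or `x` itself for `x ∈ C`). -/
noncomputable def rq (C : Set ℝ) (x : ℝ) : ℝ := sInf (C ∩ Ici x)

open scoped Classical in
/-- Extension of `h : C → ℝ` to all of `ℝ`, affine on gaps and translations outside. -/
noncomputable def extMap (C : Set ℝ) (h : ℝ → ℝ) (x : ℝ) : ℝ :=
  if x ≤ sInf C then x - sInf C + h (sInf C)
  else if sSup C ≤ x then x - sSup C + h (sSup C)
  else if x ∈ C then h x
  else h (lp C x) + (x - lp C x) * (h (rq C x) - h (lp C x)) / (rq C x - lp C x)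

variable {h : ℝ → ℝ}

lemma lp_mem (hcomp : IsCompact C) {x : ℝ} (hx : sInf C ≤ x) (hne : C.Nonempty) :
    lp C x ∈ C ∧ lp C x ≤ x := by
  have hcl : IsClosed (C ∩ Iic x) := hcomp.isClosed.inter isClosed_Iic
  have hnel : (C ∩ Iic x).Nonempty := ⟨sInf C, hcomp.sInf_mem hne, hx⟩
  have hbl : BddAbove (C ∩ Iic x) := ⟨x, fun c hc => hc.2⟩
  have := hcl.csSup_mem hnel hbl
  exact ⟨this.1, this.2⟩

lemma rq_mem (hcomp : IsCompact C) {x : ℝ} (hx : x ≤ sSup C) (hne : C.Nonempty) :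
    rq C x ∈ C ∧ x ≤ rq C x := by
  have hcl : IsClosed (C ∩ Ici x) := hcomp.isClosed.inter isClosed_Ici
  have hnel : (C ∩ Ici x).Nonempty := ⟨sSup C, hcomp.sSup_mem hne, hx⟩
  have hbl : BddBelow (C ∩ Ici x) := ⟨x, fun c hc => hc.2⟩
  have := hcl.csInf_mem hnel hbl
  exact ⟨this.1, this.2⟩

lemma lp_eq_self {x : ℝ} (hx : x ∈ C) : lp C x = x := by
  have hx' : x ∈ C ∩ Iic x := ⟨hx, mem_Iic.2 le_rfl⟩
  refine le_antisymm (csSup_le ⟨x, hx'⟩ fun c hc => hc.2) ?_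
  exact le_csSup ⟨x, fun c hc => hc.2⟩ hx'

lemma rq_eq_self {x : ℝ} (hx : x ∈ C) : rq C x = x := by
  have hx' : x ∈ C ∩ Ici x := ⟨hx, mem_Ici.2 le_rfl⟩
  refine le_antisymm ?_ (le_csInf ⟨x, hx'⟩ fun c hc => hc.2)
  exact csInf_le ⟨x, fun c hc => hc.2⟩ hx'

lemma gap_lp_rq (hne : C.Nonempty) (hcomp : IsCompact C) {x : ℝ}
    (hx1 : sInf C ≤ x) (hx2 : x ≤ sSup C) (hx : x ∉ C) :
    IsGap C (lp C x) (rq C x) ∧ lp C x < x ∧ x < rq C x := by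
  obtain ⟨hl1, hl2⟩ := lp_mem hcomp hx1 hne
  obtain ⟨hr1, hr2⟩ := rq_mem hcomp hx2 hne
  have hlt1 : lp C x < x := lt_of_le_of_ne hl2 fun he => hx (he ▸ hl1)
  have hlt2 : x < rq C x := lt_of_le_of_ne hr2 fun he => hx (he ▸ hr1)
  refine ⟨⟨hl1, hr1, hlt1.trans hlt2, ?_⟩, hlt1, hlt2⟩
  ext c
  simp only [mem_inter_iff, mem_Ioo, mem_empty_iff_false, iff_false, not_and]
  rintro ⟨hc1, hc2⟩ hcC
  have hbl : BddAbove (C ∩ Iic x) := ⟨x, fun c' hc' => hc'.2⟩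
  have hbr : BddBelow (C ∩ Ici x) := ⟨x, fun c' hc' => hc'.2⟩
  rcases le_or_gt c x with hcx | hcx
  · exact absurd (le_csSup hbl ⟨hcC, mem_Iic.2 hcx⟩) (not_le.2 hc1)
  · exact absurd (csInf_le hbr ⟨hcC, mem_Ici.2 hcx.le⟩) (not_le.2 hc2)

lemma extMap_eq_of_mem (hcomp : IsCompact C) (hne : C.Nonempty) {x : ℝ} (hx : x ∈ C) :
    extMap C h x = h x := by
  rw [extMap]
  by_cases h1 : x ≤ sInf C
  · have : x = sInf C := le_antisymm h1 (csInf_le hcomp.bddBelow hx)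
    rw [if_pos h1, this]; ring
  · rw [if_neg h1]
    by_cases h2 : sSup C ≤ x
    · have : x = sSup C := le_antisymm (le_csSup hcomp.bddAbove hx) h2
      rw [if_pos h2, this]; ring
    · rw [if_neg h2, if_pos hx]

lemma extMap_bounds (hne : C.Nonempty) (hcomp : IsCompact C)
    (hmono : ∀ x ∈ C, ∀ y ∈ C, x < y → h x < h y)
    {x : ℝ} (hx1 : sInf C < x) (hx2 : x < sSup C) (hx : x ∉ C) :
    h (lp C x) < extMap C h x ∧ extMap C h x < h (rq C x) := by
  obtain ⟨hgap, hl, hr⟩ := gap_lp_rq hne hcomp hx1.le hx2.le hx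
  set A := lp C x with hA
  set B := rq C x with hB
  have hΔ : 0 < B - A := by have := hgap.2.2.1; linarith
  have hh : h A < h B := hmono _ hgap.1 _ hgap.2.1 hgap.2.2.1
  have hval : extMap C h x = h A + (x - A) * (h B - h A) / (B - A) := by
    rw [extMap, if_neg (not_le.2 hx1), if_neg (not_le.2 hx2), if_neg hx]
  set t := (x - A) / (B - A) with ht
  have h1 : (x - A) * (h B - h A) / (B - A) = t * (h B - h A) := by rw [ht]; ring
  have ht0 : 0 < t := div_pos (by linarith) hΔ
  have ht1 : t < 1 := (div_lt_one hΔ).2 (by linarith)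
  rw [hval, h1]
  constructor
  · nlinarith [mul_pos ht0 (sub_pos.2 hh)]
  · nlinarith [mul_pos (sub_pos.2 ht1) (sub_pos.2 hh)]

lemma extMap_strictMono (hne : C.Nonempty) (hcomp : IsCompact C)
    (htd : IsTotallyDisconnected C) (hmM : sInf C < sSup C)
    (hmono : ∀ x ∈ C, ∀ y ∈ C, x < y → h x < h y) :
    StrictMono (extMap C h) := by
  have hmono' : ∀ x ∈ C, ∀ y ∈ C, x ≤ y → h x ≤ h y := by
    intro x hx y hy hxy
    rcases eq_or_lt_of_le hxy with rfl | hlt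
    · exact le_rfl
    · exact (hmono x hx y hy hlt).le
  have hmem_inf : sInf C ∈ C := hcomp.sInf_mem hne
  have hmem_sup : sSup C ∈ C := hcomp.sSup_mem hne
  intro x y hxy
  -- useful: value of extMap on C and bounds off C
  by_cases hxm : x ≤ sInf C
  · have hvx : extMap C h x = x - sInf C + h (sInf C) := by rw [extMap, if_pos hxm]
    by_cases hym : y ≤ sInf C
    · rw [hvx, extMap, if_pos hym]; linarith
    · push_neg at hym
      have hle : extMap C h x ≤ h (sInf C) := by rw [hvx]; linarith
      refine lt_of_le_of_lt hle ?_
      -- h (sInf C) < extMap y whenever sInf C < y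
      by_cases hyM : sSup C ≤ y
      · have : extMap C h y = y - sSup C + h (sSup C) := by
          rw [extMap, if_neg (not_le.2 hym), if_pos hyM]
        rw [this]
        have := hmono _ hmem_inf _ hmem_sup hmM
        linarith
      · push_neg at hyM
        by_cases hyC : y ∈ C
        · rw [extMap_eq_of_mem hcomp hne hyC]
          exact hmono _ hmem_inf _ hyC hym
        · obtain ⟨hb1, _⟩ := extMap_bounds hne hcomp hmono hym hyM hyC
          refine lt_of_le_of_lt ?_ hb1
          obtain ⟨hl1, _⟩ := lp_mem hcomp hym.le hne
          exact hmono' _ hmem_inf _ hl1 (csInf_le hcomp.bddBelow hl1)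
  · push_neg at hxm
    have hym : ¬ y ≤ sInf C := not_le.2 (hxm.trans hxy)
    by_cases hxM : sSup C ≤ x
    · have hyM : sSup C ≤ y := hxM.trans hxy.le
      rw [extMap, if_neg (not_le.2 hxm), if_pos hxM, extMap, if_neg hym, if_pos hyM]
      linarith
    · push_neg at hxM
      -- x is in the middle
      have hx_le : extMap C h x ≤ h (rq C x) := by
        by_cases hxC : x ∈ C
        · rw [extMap_eq_of_mem hcomp hne hxC, rq_eq_self hxC]
        · exact (extMap_bounds hne hcomp hmono hxm hxM hxC).2.le
      by_cases hyM : sSup C ≤ y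
      · have hvy : extMap C h y = y - sSup C + h (sSup C) := by
          rw [extMap, if_neg hym, if_pos hyM]
        have hrqx : rq C x ∈ C ∧ x ≤ rq C x := rq_mem hcomp hxM.le hne
        have h1 : h (rq C x) ≤ h (sSup C) :=
          hmono' _ hrqx.1 _ hmem_sup (le_csSup hcomp.bddAbove hrqx.1)
        by_cases hxC : x ∈ C
        · rw [extMap_eq_of_mem hcomp hne hxC, hvy]
          have := hmono _ hxC _ hmem_sup hxM
          linarith
        · have := (extMap_bounds hne hcomp hmono hxm hxM hxC).2
          rw [hvy]
          linarith
      · push_neg at hyM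
        -- both in the middle
        by_cases hcm : (C ∩ Icc x y).Nonempty
        · obtain ⟨c, hcC, hc1, hc2⟩ := hcm
          by_cases hxC : x ∈ C
          · by_cases hyC : y ∈ C
            · rw [extMap_eq_of_mem hcomp hne hxC, extMap_eq_of_mem hcomp hne hyC]
              exact hmono _ hxC _ hyC hxy
            · obtain ⟨hb1, _⟩ := extMap_bounds hne hcomp hmono (hxm.trans hxy) hyM hyC
              rw [extMap_eq_of_mem hcomp hne hxC]
              refine lt_of_le_of_lt ?_ hb1
              obtain ⟨hl1, _⟩ := lp_mem hcomp (hxm.trans hxy).le hne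
              refine hmono' _ hxC _ hl1 ?_
              exact le_csSup ⟨y, fun c' hc' => hc'.2⟩ ⟨hxC, mem_Iic.2 hxy.le⟩
          · obtain ⟨_, hb2⟩ := extMap_bounds hne hcomp hmono hxm hxM hxC
            refine lt_of_lt_of_le hb2 ?_
            have hrqx : rq C x ∈ C ∧ x ≤ rq C x := rq_mem hcomp hxM.le hne
            have hrqc : rq C x ≤ c := csInf_le ⟨x, fun c' hc' => hc'.2⟩ ⟨hcC, mem_Ici.2 hc1⟩
            by_cases hyC : y ∈ C
            · rw [extMap_eq_of_mem hcomp hne hyC]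
              exact hmono' _ hrqx.1 _ hyC (hrqc.trans hc2)
            · obtain ⟨hb1, _⟩ := extMap_bounds hne hcomp hmono (hxm.trans hxy) hyM hyC
              refine le_trans ?_ hb1.le
              obtain ⟨hl1, _⟩ := lp_mem hcomp (hxm.trans hxy).le hne
              refine hmono' _ hrqx.1 _ hl1 ?_
              refine le_trans hrqc ?_
              exact le_csSup ⟨y, fun c' hc' => hc'.2⟩ ⟨hcC, mem_Iic.2 hc2⟩
        · -- same gap
          have hxC : x ∉ C := fun hh => hcm ⟨x, hh, le_rfl, hxy.le⟩
          have hyC : y ∉ C := fun hh => hcm ⟨y, hh, hxy.le, le_rfl⟩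
          have hsets1 : C ∩ Iic x = C ∩ Iic y := by
            ext c
            simp only [mem_inter_iff, mem_Iic]
            constructor
            · rintro ⟨h1, h2⟩; exact ⟨h1, h2.trans hxy.le⟩
            · rintro ⟨h1, h2⟩
              refine ⟨h1, ?_⟩
              by_contra hcon
              push_neg at hcon
              exact hcm ⟨c, h1, hcon.le, h2⟩
          have hsets2 : C ∩ Ici x = C ∩ Ici y := by
            ext c
            simp only [mem_inter_iff, mem_Ici]
            constructor
            · rintro ⟨h1, h2⟩
              refine ⟨h1, ?_⟩
              by_contra hcon
              push_neg at hcon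
              exact hcm ⟨c, h1, h2, hcon.le⟩
            · rintro ⟨h1, h2⟩; exact ⟨h1, hxy.le.trans h2⟩
          have hlp : lp C x = lp C y := by rw [lp, lp, hsets1]
          have hrq : rq C x = rq C y := by rw [rq, rq, hsets2]
          obtain ⟨hgap, hl, hr⟩ := gap_lp_rq hne hcomp hxm.le hxM.le hxC
          have hΔ : 0 < rq C x - lp C x := by have := hgap.2.2.1; linarith
          have hh : h (lp C x) < h (rq C x) := hmono _ hgap.1 _ hgap.2.1 hgap.2.2.1
          rw [extMap, if_neg (not_le.2 hxm), if_neg (not_le.2 hxM), if_neg hxC,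
            extMap, if_neg hym, if_neg (not_le.2 hyM), if_neg hyC, ← hlp, ← hrq]
          have harith : (x - lp C x) * (h (rq C x) - h (lp C x)) / (rq C x - lp C x)
              < (y - lp C x) * (h (rq C x) - h (lp C x)) / (rq C x - lp C x) := by
            rw [div_lt_div_iff_of_pos_right hΔ]
            exact mul_lt_mul_of_pos_right (by linarith) (by linarith)
          linarith

lemma extMap_surjective {D : Set ℝ} (hne : C.Nonempty) (hcomp : IsCompact C)
    (hmM : sInf C < sSup C)
    (hneD : D.Nonempty) (hcompD : IsCompact D)
    (hm : h (sInf C) = sInf D) (hM : h (sSup C) = sSup D)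
    (hsurjD : ∀ z ∈ D, ∃ x ∈ C, extMap C h x = z)
    (hgap : ∀ G : Gap D, ∃ g : Gap C, h g.val.1 = G.val.1 ∧ h g.val.2 = G.val.2) :
    Function.Surjective (extMap C h) := by
  intro z
  by_cases hz1 : z ≤ sInf D
  · refine ⟨z - sInf D + sInf C, ?_⟩
    have hle : z - sInf D + sInf C ≤ sInf C := by linarith
    rw [extMap, if_pos hle, hm]
    ring
  · push_neg at hz1
    by_cases hz2 : sSup D ≤ z
    · refine ⟨z - sSup D + sSup C, ?_⟩
      have hgt : ¬ z - sSup D + sSup C ≤ sInf C := by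
        push_neg
        calc sInf C < sSup C := hmM
          _ ≤ z - sSup D + sSup C := by linarith
      have hge : sSup C ≤ z - sSup D + sSup C := by linarith
      rw [extMap, if_neg hgt, if_pos hge, hM]
      ring
    · push_neg at hz2
      by_cases hzD : z ∈ D
      · obtain ⟨x, _, hx⟩ := hsurjD z hzD
        exact ⟨x, hx⟩
      · -- z is in a gap of D
        obtain ⟨G, hG1, hG2, _, _⟩ := gap_around hcompD hzD
          ⟨sInf D, hcompD.sInf_mem hneD, hz1.le⟩ ⟨sSup D, hcompD.sSup_mem hneD, hz2.le⟩
        obtain ⟨g, hgl, hgr⟩ := hgap G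
        set p := g.val.1 with hp
        set q := g.val.2 with hq
        set P := G.val.1 with hP
        set Q := G.val.2 with hQ
        have hpq : p < q := g.prop.2.2.1
        have hPQ : P < Q := G.prop.2.2.1
        set x := p + (z - P) * (q - p) / (Q - P) with hx
        have hxp : p < x := by
          rw [hx]
          have : 0 < (z - P) * (q - p) / (Q - P) :=
            div_pos (mul_pos (by linarith) (by linarith)) (by linarith)
          linarith
        have hxq : x < q := by
          rw [hx]
          have h1 : (z - P) * (q - p) / (Q - P) < (Q - P) * (q - p) / (Q - P) := by
            rw [div_lt_div_iff_of_pos_right (by linarith : (0:ℝ) < Q - P)]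
            exact mul_lt_mul_of_pos_right (by linarith) (by linarith)
          have h2 : (Q - P) * (q - p) / (Q - P) = q - p :=
            mul_div_cancel_left₀ _ (by linarith)
          linarith
        have hxC : x ∉ C := fun hmem => g.prop.notMem_Ioo hmem ⟨hxp, hxq⟩
        have hxm : ¬ x ≤ sInf C := by
          push_neg
          exact lt_of_le_of_lt (csInf_le hcomp.bddBelow g.prop.1) hxp
        have hxM : ¬ sSup C ≤ x := by
          push_neg
          exact lt_of_lt_of_le hxq (le_csSup hcomp.bddAbove g.prop.2.1)
        have hlpx : lp C x = p := by
          have hbl : BddAbove (C ∩ Iic x) := ⟨x, fun c' hc' => hc'.2⟩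
          refine le_antisymm (csSup_le ⟨p, g.prop.1, mem_Iic.2 hxp.le⟩ ?_)
            (le_csSup hbl ⟨g.prop.1, mem_Iic.2 hxp.le⟩)
          rintro c ⟨hcC, hcx⟩
          rw [mem_Iic] at hcx
          by_contra hcon
          push_neg at hcon
          exact g.prop.notMem_Ioo hcC ⟨hcon, lt_of_le_of_lt hcx hxq⟩
        have hrqx : rq C x = q := by
          have hbr : BddBelow (C ∩ Ici x) := ⟨x, fun c' hc' => hc'.2⟩
          refine le_antisymm (csInf_le hbr ⟨g.prop.2.1, mem_Ici.2 hxq.le⟩)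
            (le_csInf ⟨q, g.prop.2.1, mem_Ici.2 hxq.le⟩ ?_)
          rintro c ⟨hcC, hcx⟩
          rw [mem_Ici] at hcx
          by_contra hcon
          push_neg at hcon
          exact g.prop.notMem_Ioo hcC ⟨lt_of_lt_of_le hxp hcx, hcon⟩
        refine ⟨x, ?_⟩
        rw [extMap, if_neg hxm, if_neg hxM, if_neg hxC, hlpx, hrqx, hgl, hgr]
        have hqp : q - p ≠ 0 := by linarith
        have hQP : Q - P ≠ 0 := by linarith
        have hxp' : x - p = (z - P) * (q - p) / (Q - P) := by rw [hx]; ring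
        have key : (x - p) * (Q - P) = (z - P) * (q - p) := by
          rw [hxp']
          exact div_mul_cancel₀ _ hQP
        have key2 : (x - p) * (Q - P) / (q - p) = z - P := by
          rw [key]
          exact mul_div_cancel_right₀ _ hqp
        linarith

end CantorHomeo

open CantorHomeo in
theorem exists_increasing_homeo_mapping_cantor_sets (C₁ C₂ : Set ℝ) (a₁ a₂ : ℝ)
    (hC₁ : IsCantorSet C₁) (hC₂ : IsCantorSet C₂)
    (ha₁ : a₁ ∈ C₁) (ha₂ : a₂ ∈ C₂)
    (hacc₁ : TwoSidedAcc C₁ a₁) (hacc₂ : TwoSidedAcc C₂ a₂) :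
    ∃ g : ℝ ≃ₜ ℝ, StrictMono ⇑g ∧ g a₁ = a₂ ∧ ⇑g '' C₁ = C₂ := by
  obtain ⟨ψ, hψa⟩ := exists_psi hC₁ hC₂ ha₁ ha₂ hacc₁ hacc₂
  obtain ⟨hne₁, hcomp₁, htd₁, hperf₁⟩ := hC₁
  obtain ⟨hne₂, hcomp₂, htd₂, hperf₂⟩ := hC₂
  set h := hmap ψ with hh
  have hmono : ∀ x ∈ C₁, ∀ y ∈ C₁, x < y → h x < h y := fun x hx y hy hxy =>
    hmap_strictMonoOn ψ hcomp₁ htd₁ hne₂ hcomp₂ hx hy hxy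
  have hmM : sInf C₁ < sSup C₁ := by
    obtain ⟨c, hcC, _, hca⟩ := (hacc₁ 1 one_pos).2
    calc sInf C₁ ≤ c := csInf_le hcomp₁.bddBelow hcC
      _ < a₁ := hca
      _ ≤ sSup C₁ := le_csSup hcomp₁.bddAbove ha₁
  have hsm : StrictMono (extMap C₁ h) := extMap_strictMono hne₁ hcomp₁ htd₁ hmM hmono
  have hmemC : ∀ x ∈ C₁, extMap C₁ h x = h x := fun x hx => extMap_eq_of_mem hcomp₁ hne₁ hx
  have hD : ∀ z ∈ C₂, ∃ x ∈ C₁, extMap C₁ h x = z := by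
    intro z hz
    refine ⟨hmap ψ.symm z, hmap_mem ψ.symm hne₁ hcomp₁ z, ?_⟩
    rw [hmemC _ (hmap_mem ψ.symm hne₁ hcomp₁ z), hh]
    have := hmap_hmap ψ.symm hne₂ hcomp₂ htd₂ hne₁ hcomp₁ hz
    rwa [OrderIso.symm_symm] at this
  have hsurj : Function.Surjective (extMap C₁ h) := by
    refine extMap_surjective hne₁ hcomp₁ hmM hne₂ hcomp₂ ?_ ?_ hD ?_
    · exact hmap_sInf ψ hcomp₁
    · exact hmap_sSup ψ hne₁ hcomp₁ hne₂ hcomp₂ htd₂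
    · intro G
      refine ⟨ψ.symm G, ?_, ?_⟩
      · rw [hh, hmap_gap_left ψ hne₂ hcomp₂ htd₂ (ψ.symm G)]
        simp
      · rw [hh, hmap_gap_right ψ hne₂ hcomp₂ (ψ.symm G)]
        simp
  set e : ℝ ≃o ℝ := StrictMono.orderIsoOfSurjective _ hsm hsurj with he
  have hcoe : ⇑e.toHomeomorph = extMap C₁ h := rfl
  refine ⟨e.toHomeomorph, ?_, ?_, ?_⟩
  · rw [hcoe]; exact hsm
  · show extMap C₁ h a₁ = a₂
    rw [hmemC _ ha₁, hh]
    exact hmap_acc ψ hne₂ hcomp₂ htd₂ ha₂ hψa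
  · rw [hcoe]
    ext z
    constructor
    · rintro ⟨x, hx, rfl⟩
      rw [hmemC _ hx]
      exact hmap_mem ψ hne₂ hcomp₂ x
    · intro hz
      obtain ⟨x, hx1, hx2⟩ := hD z hz
      exact ⟨x, hx1, hx2⟩
end

section
/- Let G be an abelian group, Y ⊆ G an infinite independent subset with no element of order 2, and I an index set with |I| = |G|. Suppose X_i ⊆ Y is nonempty for each i ∈ I, and the set of indices i with |X_i| = |Y| has cardinality |I|. Then there is a map ρ : I → G such that the sets ρ(i) + X_i are pairwise disjoint and their union is G. -/
/-- A subset `Y` of an abelian group is independent if `0 ∉ Y` and every ℤ-linear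
combination of distinct elements of `Y` equaling `0` has all terms `k • x = 0`. -/
def IsIndependentSet {G : Type*} [AddCommGroup G] (Y : Set G) : Prop :=
  0 ∉ Y ∧ ∀ f : G →₀ ℤ, ↑f.support ⊆ Y → (f.sum fun x k => k • x) = 0 →
    ∀ x ∈ f.support, f x • x = 0

open Cardinal Set

namespace TPG

variable {G : Type} [AddCommGroup G] {Y : Set G}

noncomputable def Tsum (f : G →₀ ℤ) : G := Finsupp.linearCombination ℤ id f

lemma Tsum_def (f : G →₀ ℤ) : Tsum f = f.sum fun x k => k • x := by
  simp [Tsum, Finsupp.linearCombination_apply]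

lemma Tsum_single (a : G) (k : ℤ) : Tsum (Finsupp.single a k) = k • a := by
  simp [Tsum]

lemma Tsum_add (f g : G →₀ ℤ) : Tsum (f + g) = Tsum f + Tsum g := by simp [Tsum]

lemma Tsum_sub (f g : G →₀ ℤ) : Tsum (f - g) = Tsum f - Tsum g := by simp [Tsum]

lemma indep_coeff (hYind : IsIndependentSet Y) {f : G →₀ ℤ} (hf : ↑f.support ⊆ Y)
    (h0 : Tsum f = 0) (x : G) : f x • x = 0 := by
  by_cases hx : x ∈ f.support
  · exact hYind.2 f hf ((Tsum_def f) ▸ h0) x hx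
  · simp [Finsupp.notMem_support_iff.1 hx]

lemma coeff_cases (hYind : IsIndependentSet Y) (hY2 : ∀ y ∈ Y, y + y ≠ 0)
    {a : G} (ha : a ∈ Y) {c : ℤ} (hc : c • a = 0)
    (h1 : c = 1 ∨ c = -1 ∨ c = 2 ∨ c = -2) : False := by
  have ha0 : a ≠ 0 := fun h => hYind.1 (h ▸ ha)
  have h2 : a + a ≠ 0 := hY2 a ha
  rcases h1 with rfl | rfl | rfl | rfl
  · exact ha0 (by simpa using hc)
  · exact ha0 (by simpa using hc)
  · exact h2 (by rw [← two_zsmul]; exact hc)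
  · exact h2 (by rw [← two_zsmul, ← neg_eq_zero, ← neg_zsmul]; exact hc)

lemma lemA (hYind : IsIndependentSet Y) (hY2 : ∀ y ∈ Y, y + y ≠ 0)
    {w₁ w₂ x₀ v : G} (hw₁ : w₁ ∈ Y) (hw₂ : w₂ ∈ Y) (hw : w₁ ≠ w₂)
    (hx₀ : x₀ ∈ Y) (hv : v ∈ Y) {f : G →₀ ℤ} (hf : ↑f.support ⊆ Y)
    (h1 : f w₁ = 0) (h2 : f w₂ = 0)
    (heq : w₁ + w₂ + x₀ = Tsum f + v) : False := by
  classical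
  set F : G →₀ ℤ := Finsupp.single w₁ 1 + Finsupp.single w₂ 1 + Finsupp.single x₀ 1
      - f - Finsupp.single v 1 with hF
  have hFsupp : ↑F.support ⊆ Y := by
    intro a ha
    have : a ∈ (((Finsupp.single w₁ 1 + Finsupp.single w₂ 1 + Finsupp.single x₀ 1 : G →₀ ℤ)
        - f).support ∪ (Finsupp.single v (1:ℤ)).support) := Finsupp.support_sub ha
    rcases Finset.mem_union.1 this with h | h
    · rcases Finset.mem_union.1 (Finsupp.support_sub h) with h' | h'
      · rcases Finset.mem_union.1 (Finsupp.support_add h') with h'' | h''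
        · rcases Finset.mem_union.1 (Finsupp.support_add h'') with h3 | h3
          · rw [Finset.mem_singleton.1 (Finsupp.support_single_subset h3)]; exact hw₁
          · rw [Finset.mem_singleton.1 (Finsupp.support_single_subset h3)]; exact hw₂
        · rw [Finset.mem_singleton.1 (Finsupp.support_single_subset h'')]; exact hx₀
      · exact hf h'
    · rw [Finset.mem_singleton.1 (Finsupp.support_single_subset h)]; exact hv
  have hF0 : Tsum F = 0 := by
    rw [hF]
    rw [Tsum_sub, Tsum_sub, Tsum_add, Tsum_add, Tsum_single, Tsum_single, Tsum_single,
      Tsum_single]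
    simp only [one_zsmul]
    rw [heq]
    abel
  have c1 := indep_coeff hYind hFsupp hF0 w₁
  have c2 := indep_coeff hYind hFsupp hF0 w₂
  have e1 : F w₁ = 1 + (if x₀ = w₁ then (1:ℤ) else 0) - (if v = w₁ then 1 else 0) := by
    simp [hF, Finsupp.single_apply, hw.symm, h1]
  have e2 : F w₂ = 1 + (if x₀ = w₂ then (1:ℤ) else 0) - (if v = w₂ then 1 else 0) := by
    simp [hF, Finsupp.single_apply, hw, h2]
  have k1 : v = w₁ := by
    by_cases hx : x₀ = w₁ <;> by_cases hvv : v = w₁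
    · exact hvv
    · rw [if_pos hx, if_neg hvv] at e1; norm_num at e1
      exact absurd (coeff_cases hYind hY2 hw₁ (e1 ▸ c1) (by norm_num)) id
    · exact hvv
    · rw [if_neg hx, if_neg hvv] at e1; norm_num at e1
      exact absurd (coeff_cases hYind hY2 hw₁ (e1 ▸ c1) (by norm_num)) id
  have k2 : v = w₂ := by
    by_cases hx : x₀ = w₂ <;> by_cases hvv : v = w₂
    · exact hvv
    · rw [if_pos hx, if_neg hvv] at e2; norm_num at e2
      exact absurd (coeff_cases hYind hY2 hw₂ (e2 ▸ c2) (by norm_num)) id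
    · exact hvv
    · rw [if_neg hx, if_neg hvv] at e2; norm_num at e2
      exact absurd (coeff_cases hYind hY2 hw₂ (e2 ▸ c2) (by norm_num)) id
  exact hw (k1 ▸ k2)

lemma lemB (hYind : IsIndependentSet Y) (hY2 : ∀ y ∈ Y, y + y ≠ 0)
    {x u v : G} (hx : x ∈ Y) (hu : u ∈ Y) (hv : v ∈ Y)
    {f₁ f₂ : G →₀ ℤ} (hf₁ : ↑f₁.support ⊆ Y) (hf₂ : ↑f₂.support ⊆ Y)
    (h1 : f₁ x = 0) (h2 : f₂ x = 0)
    (heq : Tsum f₁ - x + u = Tsum f₂ + v) : Tsum f₁ = Tsum f₂ + v := by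
  classical
  set F : G →₀ ℤ := f₁ - Finsupp.single x 1 + Finsupp.single u 1 - f₂ - Finsupp.single v 1
    with hF
  have hFsupp : ↑F.support ⊆ Y := by
    intro a ha
    rcases Finset.mem_union.1 (Finsupp.support_sub ha) with h | h
    · rcases Finset.mem_union.1 (Finsupp.support_sub h) with h' | h'
      · rcases Finset.mem_union.1 (Finsupp.support_add h') with h'' | h''
        · rcases Finset.mem_union.1 (Finsupp.support_sub h'') with h3 | h3
          · exact hf₁ h3
          · rw [Finset.mem_singleton.1 (Finsupp.support_single_subset h3)]; exact hx
        · rw [Finset.mem_singleton.1 (Finsupp.support_single_subset h'')]; exact hu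
      · exact hf₂ h'
    · rw [Finset.mem_singleton.1 (Finsupp.support_single_subset h)]; exact hv
  have hF0 : Tsum F = 0 := by
    have h' : Tsum F = (Tsum f₁ - x + u) - Tsum f₂ - v := by
      rw [hF, Tsum_sub, Tsum_sub, Tsum_add, Tsum_sub, Tsum_single, Tsum_single, Tsum_single]
      simp only [one_zsmul]
    rw [h', heq]
    abel
  have c := indep_coeff hYind hFsupp hF0 x
  have e : F x = -1 + (if u = x then (1:ℤ) else 0) - (if v = x then 1 else 0) := by
    simp [hF, Finsupp.single_apply, h1, h2]
  have k : u = x ∧ v ≠ x := by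
    by_cases hu' : u = x <;> by_cases hv' : v = x
    · rw [if_pos hu', if_pos hv'] at e; norm_num at e
      exact absurd (coeff_cases hYind hY2 hx (e ▸ c) (by norm_num)) id
    · exact ⟨hu', hv'⟩
    · rw [if_neg hu', if_pos hv'] at e; norm_num at e
      exact absurd (coeff_cases hYind hY2 hx (e ▸ c) (by norm_num)) id
    · rw [if_neg hu', if_neg hv'] at e; norm_num at e
      exact absurd (coeff_cases hYind hY2 hx (e ▸ c) (by norm_num)) id
  rw [k.1] at heq
  rw [← heq]
  abel

lemma pick_fresh {α : Type} (A bad : Set α) (h : #bad < #A) : (A \ bad).Nonempty := by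
  rw [Set.nonempty_iff_ne_empty]
  intro hcon
  have hsub : A ⊆ bad := by
    intro a ha
    by_contra hb
    exact (Set.eq_empty_iff_forall_notMem.1 hcon a) ⟨ha, hb⟩
  exact absurd (Cardinal.mk_le_mk_of_subset hsub) (not_le.2 h)

lemma small_biUnion {β O : Type} (s : Set O) (L : O → Set β)
    (hL : ∀ o ∈ s, (L o).Finite) {lam : Cardinal} (hlam : ℵ₀ ≤ lam) (hs : #s < lam) :
    #(⋃ o ∈ s, L o) < lam := by
  rcases lt_or_ge (#s) ℵ₀ with h | h
  · have hfin : (⋃ o ∈ s, L o).Finite :=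
      Set.Finite.biUnion (Cardinal.lt_aleph0_iff_set_finite.1 h) hL
    exact lt_of_lt_of_le hfin.lt_aleph0 hlam
  · calc #(⋃ o ∈ s, L o) ≤ #s * ⨆ o : s, #(L o) := Cardinal.mk_biUnion_le L s
      _ ≤ #s * ℵ₀ := by
          apply mul_le_mul_right
          exact ciSup_le' fun o => ((hL o o.2).lt_aleph0).le
      _ = #s := by rw [Cardinal.mul_eq_max h le_rfl, max_eq_left h]
      _ < lam := hs

lemma exists_good_choice {O C : Type} [Inhabited C] {r : O → O → Prop} (wf : WellFounded r)
    (Good : O → (O → C) → C → Prop)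
    (compat : ∀ o p q c, (∀ o', r o' o → p o' = q o') → Good o p c → Good o q c)
    (ex : ∀ o p, ∃ c, Good o p c) : ∃ F : O → C, ∀ o, Good o F (F o) := by
  classical
  set body : ∀ o : O, (∀ o', r o' o → C) → C := fun o ih =>
    (ex o (fun o' => if h : r o' o then ih o' h else default)).choose with hbody
  set F : O → C := wf.fix body with hFdef
  refine ⟨F, fun o => ?_⟩
  have hfix : F o = body o (fun o' _ => F o') := wf.fix_eq body o
  have spec := (ex o (fun o' => if h : r o' o then F o' else default)).choose_spec
  have spec' : Good o (fun o' => if h : r o' o then F o' else default) (F o) := by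
    rw [hfix]; exact spec
  exact compat o _ F (F o) (fun o' h => by simp [h]) spec'

theorem core {G J : Type} [AddCommGroup G] (Y : Set G) (hYinf : Y.Infinite)
    (hYind : IsIndependentSet Y) (hY2 : ∀ y ∈ Y, y + y ≠ 0)
    (hJ : #J = #Y)
    (X : J → Set G) (hXY : ∀ j, X j ⊆ Y) (hXne : ∀ j, (X j).Nonempty)
    (hbig : #{j : J // #(X j) = #Y} = #Y) :
    ∃ σ : J → G, Pairwise (Function.onFun Disjoint (fun j => (fun x => σ j + x) '' X j)) ∧
      (⋃ j, (fun x => σ j + x) '' X j) = (Submodule.span ℤ Y : Set G) := by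
  classical
  have hlamY : ℵ₀ ≤ #↥Y := by
    have := hYinf.to_subtype
    exact Cardinal.aleph0_le_mk ↥Y
  set lam := #↥Y with hlamdef
  set Vs : Set G := (Submodule.span ℤ Y : Set G) with hVsdef
  have hYV : Y ⊆ Vs := Submodule.subset_span
  -- representations
  have hrep0 : ∀ v : ↥Vs, ∃ f : G →₀ ℤ, ↑f.support ⊆ Y ∧ Tsum f = (v : G) := by
    intro v
    obtain ⟨f, hf1, hf2⟩ := Submodule.mem_span_set.1 v.2
    exact ⟨f, hf1, by rw [Tsum_def]; exact hf2⟩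
  choose rep hrepsupp hrepsum using hrep0
  -- cardinality of the span
  have hV : #↥Vs = lam := by
    apply le_antisymm
    · have hinj : Function.Injective (fun v : ↥Vs =>
          (⟨rep v, hrepsupp v⟩ : {f : G →₀ ℤ // ↑f.support ⊆ Y})) := by
        intro v w hvw
        have : rep v = rep w := congrArg Subtype.val hvw
        apply Subtype.ext
        rw [← hrepsum v, ← hrepsum w, this]
      calc #↥Vs ≤ #{f : G →₀ ℤ // ↑f.support ⊆ Y} := Cardinal.mk_le_of_injective hinj
        _ = #(↥Y →₀ ℤ) := Cardinal.mk_congr (Finsupp.restrictSupportEquiv Y ℤ)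
        _ = lam := by
            have := hYinf.to_subtype
            rw [Cardinal.mk_finsupp_of_infinite ↥Y ℤ, Cardinal.mk_int]
            exact max_eq_left hlamY
    · exact Cardinal.mk_le_mk_of_subset hYV
  -- the big indices
  set Bg : Set J := {j | #(X j) = lam} with hBgdef
  have hBg : #↥Bg = lam := hbig
  obtain ⟨eB⟩ : Nonempty ((↥Y ⊕ ↥Y) ≃ ↥Bg) := by
    apply Cardinal.eq.1
    rw [Cardinal.mk_sum, hBg]
    simp only [Cardinal.lift_id]
    exact Cardinal.add_eq_self hlamY
  set B₀ : Set J := Set.range (fun y : ↥Y => (eB (Sum.inl y)).val) with hB₀def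
  have hB₀big : ∀ j ∈ B₀, #(X j) = lam := by
    rintro j ⟨y, rfl⟩
    exact (eB (Sum.inl y)).2
  set Rc : Set J := B₀ᶜ with hRcdef
  have hB₀card : #↥B₀ = lam := by
    rw [hB₀def, Cardinal.mk_range_eq]
    intro a b hab
    exact Sum.inl.inj (eB.injective (Subtype.val_injective hab))
  have hRccard : #↥Rc = lam := by
    apply le_antisymm
    · calc #↥Rc ≤ #J := Cardinal.mk_set_le Rc
        _ = lam := hJ
    · have hinj : Function.Injective (fun y : ↥Y =>
          (⟨(eB (Sum.inr y)).val, by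
            intro hmem
            rw [hB₀def] at hmem
            obtain ⟨y', hy'⟩ := hmem
            exact Sum.inl_ne_inr (eB.injective (Subtype.val_injective hy'))⟩ : ↥Rc)) := by
        intro a b hab
        have := congrArg Subtype.val hab
        exact Sum.inr.inj (eB.injective (Subtype.val_injective this))
      exact Cardinal.mk_le_of_injective hinj
  -- the well-ordered index
  set O := (Cardinal.ord lam).ToType with hOdef
  have hO : #O = lam := by rw [hOdef, Cardinal.mk_toType, Cardinal.card_ord]
  obtain ⟨e⟩ : Nonempty (O ≃ ↥Vs) := Cardinal.eq.1 (by rw [hO, hV])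
  obtain ⟨πr⟩ : Nonempty (O ≃ ↥Rc) := Cardinal.eq.1 (by rw [hO, hRccard])
  obtain ⟨πb⟩ : Nonempty (O ≃ ↥B₀) := Cardinal.eq.1 (by rw [hO, hB₀card])
  -- step data
  set baseB : O → G × G × (G ⊕ G × G) → G :=
    fun o c => Sum.elim (fun x => (e o : G) - x) (fun p => p.1 + p.2) c.2.2 with hbaseB
  set Lset : O → G × G × (G ⊕ G × G) → Set G :=
    fun o c => {c.1, c.2.1} ∪ ↑((rep (e o)).support) ∪
      Sum.elim (fun x => {x}) (fun p => {p.1, p.2}) c.2.2 with hLset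
  set TrA : O → G × G × (G ⊕ G × G) → Set G :=
    fun o c => (fun g => c.1 + c.2.1 + g) '' X (πr o).val with hTrA
  set TrB : O → G × G × (G ⊕ G × G) → Set G :=
    fun o c => (fun g => baseB o c + g) '' X (πb o).val with hTrB
  set W : O → (O → G × G × (G ⊕ G × G)) → Set G :=
    fun o p => ⋃ o' ∈ Set.Iio o, Lset o' (p o') with hW
  set Prior : O → (O → G × G × (G ⊕ G × G)) → Set G :=
    fun o p => ⋃ o' ∈ Set.Iio o, (TrA o' (p o') ∪ TrB o' (p o')) with hPrior
  set Good : O → (O → G × G × (G ⊕ G × G)) → G × G × (G ⊕ G × G) → Prop :=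
    fun o p c =>
      c.1 ∈ Y ∧ c.2.1 ∈ Y ∧ c.1 ≠ c.2.1 ∧
      c.1 ∉ W o p ∪ ↑((rep (e o)).support) ∧
      c.2.1 ∉ W o p ∪ ↑((rep (e o)).support) ∧
      (∀ x, c.2.2 = Sum.inl x → x ∈ X (πb o).val ∧
          x ∉ W o p ∪ ↑((rep (e o)).support) ∪ {c.1, c.2.1} ∧
          (e o : G) ∉ Prior o p ∪ TrA o c) ∧
      (∀ a b, c.2.2 = Sum.inr (a, b) → a ∈ Y ∧ b ∈ Y ∧ a ≠ b ∧
          a ∉ W o p ∪ ↑((rep (e o)).support) ∪ {c.1, c.2.1} ∧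
          b ∉ W o p ∪ ↑((rep (e o)).support) ∪ {c.1, c.2.1, a} ∧
          (e o : G) ∈ Prior o p ∪ TrA o c) with hGood
  have compat : ∀ o p q c, (∀ o', o' < o → p o' = q o') → Good o p c → Good o q c := by
    intro o p q c hpq hg
    have hWpq : W o p = W o q := by
      rw [hW]
      exact Set.iUnion₂_congr fun o' ho' => by rw [hpq o' ho']
    have hPpq : Prior o p = Prior o q := by
      rw [hPrior]
      exact Set.iUnion₂_congr fun o' ho' => by rw [hpq o' ho']
    simp only [hGood] at hg ⊢
    rw [hWpq, hPpq] at hg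
    exact hg
  have hfinsmall : ∀ (s : Set G), s.Finite → #↥s < lam :=
    fun s hs => lt_of_lt_of_le hs.lt_aleph0 hlamY
  have hunion_small : ∀ (s t : Set G), #↥s < lam → #↥t < lam → #↥(s ∪ t) < lam :=
    fun s t hs ht => lt_of_le_of_lt (Cardinal.mk_union_le s t)
      (Cardinal.add_lt_of_lt hlamY hs ht)
  have hLfin : ∀ (o : O) (c : G × G × (G ⊕ G × G)), (Lset o c).Finite := by
    rintro o ⟨c1, c2, x | ab⟩ <;> rw [hLset] <;>
      refine Set.Finite.union (Set.Finite.union ((Set.finite_singleton _).insert _)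
        ((rep (e o)).support.finite_toSet)) ?_
    · exact Set.finite_singleton x
    · exact (Set.finite_singleton _).insert _
  have hWsmall : ∀ o p, #↥(W o p) < lam := by
    intro o p
    rw [hW]
    apply small_biUnion _ _ (fun o' _ => hLfin o' (p o')) hlamY
    exact Cardinal.mk_Iio_ord_toType o
  have ex : ∀ o p, ∃ c, Good o p c := by
    intro o p
    have hbad : #↥(W o p ∪ ↑((rep (e o)).support) : Set G) < lam :=
      hunion_small _ _ (hWsmall o p) (hfinsmall _ (rep (e o)).support.finite_toSet)
    obtain ⟨w₁, hw₁Y, hw₁b⟩ := pick_fresh Y (W o p ∪ ↑((rep (e o)).support)) hbad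
    have hbad1 : #↥((W o p ∪ ↑((rep (e o)).support)) ∪ {w₁} : Set G) < lam :=
      hunion_small _ _ hbad (hfinsmall _ (Set.finite_singleton w₁))
    obtain ⟨w₂, hw₂Y, hw₂b⟩ := pick_fresh Y _ hbad1
    have hne12 : w₁ ≠ w₂ := fun h => hw₂b (Set.mem_union_right _ (h ▸ rfl))
    have hw₂b' : w₂ ∉ W o p ∪ ↑((rep (e o)).support) :=
      fun h => hw₂b (Set.mem_union_left _ h)
    by_cases hcov : (e o : G) ∈ Prior o p ∪ TrA o (w₁, w₂, Sum.inl 0)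
    · have hbad2 : #↥((W o p ∪ ↑((rep (e o)).support)) ∪ {w₁, w₂} : Set G) < lam :=
        hunion_small _ _ hbad (hfinsmall _ ((Set.finite_singleton _).insert _))
      obtain ⟨a, haY, hab⟩ := pick_fresh Y _ hbad2
      have hbad3 : #↥((W o p ∪ ↑((rep (e o)).support)) ∪ {w₁, w₂, a} : Set G) < lam :=
        hunion_small _ _ hbad
          (hfinsmall _ (((Set.finite_singleton _).insert _).insert _))
      obtain ⟨b, hbY, hbb⟩ := pick_fresh Y _ hbad3
      have hanb : a ≠ b := by
        intro h
        exact hbb (Set.mem_union_right _ (by simp [← h]))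
      refine ⟨(w₁, w₂, Sum.inr (a, b)), ?_⟩
      simp only [hGood]
      refine ⟨hw₁Y, hw₂Y, hne12, hw₁b, hw₂b', ?_, ?_⟩
      · intro x h
        exact absurd h (by simp)
      · intro a' b' h
        rw [Sum.inr.injEq, Prod.mk.injEq] at h
        obtain ⟨rfl, rfl⟩ := h
        exact ⟨haY, hbY, hanb, hab, hbb, hcov⟩
    · obtain ⟨x, hxX, hxb⟩ := pick_fresh (X (πb o).val)
        ((W o p ∪ ↑((rep (e o)).support)) ∪ {w₁, w₂})
        (by
          rw [hB₀big _ (πb o).2]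
          exact hunion_small _ _ hbad (hfinsmall _ ((Set.finite_singleton _).insert _)))
      refine ⟨(w₁, w₂, Sum.inl x), ?_⟩
      simp only [hGood]
      refine ⟨hw₁Y, hw₂Y, hne12, hw₁b, hw₂b', ?_, ?_⟩
      · intro x' h
        rw [Sum.inl.injEq] at h
        subst h
        exact ⟨hxX, hxb, hcov⟩
      · intro a b h
        exact absurd h (by simp)
  letI : Inhabited (G × G × (G ⊕ G × G)) := ⟨(0, 0, Sum.inl 0)⟩
  obtain ⟨F, hF⟩ := exists_good_choice (wellFounded_lt (α := O)) Good compat ex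
  simp only [hGood] at hF
  -- accessors
  have hw1Y : ∀ o, (F o).1 ∈ Y := fun o => (hF o).1
  have hw2Y : ∀ o, (F o).2.1 ∈ Y := fun o => (hF o).2.1
  have hwne : ∀ o, (F o).1 ≠ (F o).2.1 := fun o => (hF o).2.2.1
  have hw1W : ∀ o, (F o).1 ∉ W o F ∪ ↑((rep (e o)).support) := fun o => (hF o).2.2.2.1
  have hw2W : ∀ o, (F o).2.1 ∉ W o F ∪ ↑((rep (e o)).support) := fun o => (hF o).2.2.2.2.1
  have hinl := fun o => (hF o).2.2.2.2.2.1
  have hinr := fun o => (hF o).2.2.2.2.2.2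
  -- small subset lemmas
  have hLsub : ∀ {o' o : O}, o' < o → Lset o' (F o') ⊆ W o F := by
    intro o' o ho' g hg
    rw [hW]
    exact Set.mem_biUnion ho' hg
  have hTrsub : ∀ {o' o : O}, o' < o → TrA o' (F o') ∪ TrB o' (F o') ⊆ Prior o F := by
    intro o' o ho' g hg
    rw [hPrior]
    exact Set.mem_biUnion ho' hg
  -- membership in Lset
  have hL1 : ∀ o, (F o).1 ∈ Lset o (F o) := by
    intro o; rw [hLset]; exact Set.mem_union_left _ (Set.mem_union_left _ (by simp))
  have hL2 : ∀ o, (F o).2.1 ∈ Lset o (F o) := by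
    intro o; rw [hLset]; exact Set.mem_union_left _ (Set.mem_union_left _ (by simp))
  have hLsupp : ∀ o, ↑((rep (e o)).support) ⊆ Lset o (F o) := by
    intro o g hg; rw [hLset]; exact Set.mem_union_left _ (Set.mem_union_right _ hg)
  have hLdatl : ∀ o x, (F o).2.2 = Sum.inl x → x ∈ Lset o (F o) := by
    intro o x hx; rw [hLset]; exact Set.mem_union_right _ (by rw [hx]; simp)
  have hLdatr : ∀ o a b, (F o).2.2 = Sum.inr (a, b) →
      a ∈ Lset o (F o) ∧ b ∈ Lset o (F o) := by
    intro o a b hx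
    constructor <;> (rw [hLset]; exact Set.mem_union_right _ (by rw [hx]; simp))
  -- Tsum of a pair
  have hTsum2 : ∀ a b : G, Tsum (Finsupp.single a 1 + Finsupp.single b 1) = a + b := by
    intro a b
    rw [Tsum_add, Tsum_single, Tsum_single, one_zsmul, one_zsmul]
  have hsupp2 : ∀ a b : G, a ∈ Y → b ∈ Y →
      ↑(Finsupp.single a (1:ℤ) + Finsupp.single b 1).support ⊆ Y := by
    intro a b ha hb z hz
    rcases Finset.mem_union.1 (Finsupp.support_add hz) with h | h
    · rw [Finset.mem_singleton.1 (Finsupp.support_single_subset h)]; exact ha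
    · rw [Finset.mem_singleton.1 (Finsupp.support_single_subset h)]; exact hb
  have happ2 : ∀ a b z : G, z ≠ a → z ≠ b →
      ((Finsupp.single a (1:ℤ) + Finsupp.single b 1 : G →₀ ℤ)) z = 0 := by
    intro a b z hza hzb
    rw [Finsupp.add_apply, Finsupp.single_apply, Finsupp.single_apply,
      if_neg (fun h => hza h.symm), if_neg (fun h => hzb h.symm)]
    norm_num
  -- representations of translate bases
  have hrepr : ∀ (o : O) (b : Bool), ∃ f : G →₀ ℤ, ↑f.support ⊆ Y ∧
      Tsum f = (if b then (F o).1 + (F o).2.1 else baseB o (F o)) ∧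
      (∀ z, z ∉ Lset o (F o) → f z = 0) := by
    intro o b
    cases b with
    | true =>
        refine ⟨Finsupp.single (F o).1 1 + Finsupp.single (F o).2.1 1,
          hsupp2 _ _ (hw1Y o) (hw2Y o), by rw [hTsum2]; simp, ?_⟩
        intro z hz
        exact happ2 _ _ _ (fun h => hz (by rw [h]; exact hL1 o)) (fun h => hz (by rw [h]; exact hL2 o))
    | false =>
        cases hdat : (F o).2.2 with
        | inl x =>
            obtain ⟨hxX, hxnb, _⟩ := hinl o x hdat
            refine ⟨rep (e o) - Finsupp.single x 1, ?_, ?_, ?_⟩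
            · intro z hz
              rcases Finset.mem_union.1 (Finsupp.support_sub hz) with h | h
              · exact hrepsupp (e o) h
              · rw [Finset.mem_singleton.1 (Finsupp.support_single_subset h)]
                exact hXY _ hxX
            · rw [Tsum_sub, Tsum_single, one_zsmul, hrepsum]
              simp only [hbaseB]
              rw [hdat]
              simp
            · intro z hz
              rw [Finsupp.sub_apply, Finsupp.single_apply,
                if_neg (fun h => hz (by rw [← h]; exact hLdatl o x hdat)),
                Finsupp.notMem_support_iff.1 (fun h => hz (hLsupp o h))]
              norm_num
        | inr ab =>
            obtain ⟨a, b⟩ := ab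
            obtain ⟨haY, hbY, _, _, _, _⟩ := hinr o a b hdat
            refine ⟨Finsupp.single a 1 + Finsupp.single b 1, hsupp2 _ _ haY hbY, ?_, ?_⟩
            · rw [hTsum2]
              simp only [hbaseB]
              rw [hdat]
              simp
            · intro z hz
              exact happ2 _ _ _ (fun h => hz (by rw [h]; exact (hLdatr o a b hdat).1))
                (fun h => hz (by rw [h]; exact (hLdatr o a b hdat).2))
  -- membership decompositions
  have hmemA : ∀ o g, g ∈ TrA o (F o) → ∃ u, u ∈ X (πr o).val ∧
      g = (F o).1 + (F o).2.1 + u := by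
    intro o g hg
    rw [hTrA] at hg
    obtain ⟨u, hu, hgu⟩ := hg
    exact ⟨u, hu, hgu.symm⟩
  have hmemB : ∀ o g, g ∈ TrB o (F o) → ∃ u, u ∈ X (πb o).val ∧
      g = baseB o (F o) + u := by
    intro o g hg
    rw [hTrB] at hg
    obtain ⟨u, hu, hgu⟩ := hg
    exact ⟨u, hu, hgu.symm⟩
  have hmem' : ∀ (o : O) (b : Bool) (g : G),
      g ∈ (if b then TrA o (F o) else TrB o (F o)) →
      ∃ u, u ∈ X (if b then (πr o).val else (πb o).val) ∧
        g = (if b then (F o).1 + (F o).2.1 else baseB o (F o)) + u := by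
    intro o b g hg
    cases b
    · simpa using hmemB o g (by simpa using hg)
    · simpa using hmemA o g (by simpa using hg)
  have hmem'' : ∀ (o : O) (b : Bool) (u : G), u ∈ X (if b then (πr o).val else (πb o).val) →
      (if b then (F o).1 + (F o).2.1 else baseB o (F o)) + u ∈
        (if b then TrA o (F o) else TrB o (F o)) := by
    intro o b u hu
    cases b
    · simp only [if_false, Bool.false_eq_true] at hu ⊢
      rw [hTrB]
      exact ⟨u, hu, rfl⟩
    · simp only [if_true] at hu ⊢
      rw [hTrA]
      exact ⟨u, hu, rfl⟩
  -- the two clash lemmas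
  have clashA : ∀ (o₂ : O) (b₂ : Bool) (w₁ w₂ x₀ : G), w₁ ∈ Y → w₂ ∈ Y → w₁ ≠ w₂ →
      w₁ ∉ Lset o₂ (F o₂) → w₂ ∉ Lset o₂ (F o₂) → x₀ ∈ Y →
      w₁ + w₂ + x₀ ∈ (if b₂ then TrA o₂ (F o₂) else TrB o₂ (F o₂)) → False := by
    intro o₂ b₂ w₁ w₂ x₀ hw₁ hw₂ hne hw₁L hw₂L hx₀ hmem
    obtain ⟨f, hfsupp, hfsum, hfz⟩ := hrepr o₂ b₂
    obtain ⟨u, hu, hgu⟩ := hmem' o₂ b₂ _ hmem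
    exact lemA hYind hY2 hw₁ hw₂ hne hx₀ (hXY _ hu) hfsupp (hfz w₁ hw₁L) (hfz w₂ hw₂L)
      (by rw [hfsum]; exact hgu)
  have clashB : ∀ (o : O) (x u : G), (F o).2.2 = Sum.inl x → u ∈ X (πb o).val →
      ∀ (o₂ : O) (b₂ : Bool), x ∉ Lset o₂ (F o₂) →
      (e o : G) - x + u ∈ (if b₂ then TrA o₂ (F o₂) else TrB o₂ (F o₂)) →
      (e o : G) ∈ (if b₂ then TrA o₂ (F o₂) else TrB o₂ (F o₂)) := by
    intro o x u hdat hu o₂ b₂ hxL hmem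
    obtain ⟨hxX, hxnb, _⟩ := hinl o x hdat
    obtain ⟨f, hfsupp, hfsum, hfz⟩ := hrepr o₂ b₂
    obtain ⟨v, hv, hgv⟩ := hmem' o₂ b₂ _ hmem
    have hxsupp : (rep (e o)) x = 0 := by
      apply Finsupp.notMem_support_iff.1
      intro h
      exact hxnb (Set.mem_union_left _ (Set.mem_union_right _ h))
    have hconc : Tsum (rep (e o)) = Tsum f + v :=
      lemB hYind hY2 (hXY _ hxX) (hXY _ hu) (hXY _ hv) (hrepsupp (e o)) hfsupp
        hxsupp (hfz x hxL) (by rw [hrepsum, hfsum]; exact hgv)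
    rw [hrepsum, hfsum] at hconc
    rw [hconc]
    exact hmem'' o₂ b₂ v hv
  -- base value of TrB
  have hbaseBl : ∀ (o : O) (x : G), (F o).2.2 = Sum.inl x → baseB o (F o) = (e o : G) - x := by
    intro o x hdat
    simp only [hbaseB]
    rw [hdat]
    simp
  have hbaseBr : ∀ (o : O) (a b : G), (F o).2.2 = Sum.inr (a, b) → baseB o (F o) = a + b := by
    intro o a b hdat
    simp only [hbaseB]
    rw [hdat]
    simp
  -- conflicts between a later step and an earlier step
  have later : ∀ (o o₂ : O), o₂ < o → ∀ (b b₂ : Bool) (g : G),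
      g ∈ (if b then TrA o (F o) else TrB o (F o)) →
      g ∈ (if b₂ then TrA o₂ (F o₂) else TrB o₂ (F o₂)) → False := by
    intro o o₂ ho b b₂ g hg hg₂
    cases b with
    | true =>
        obtain ⟨u, hu, hgu⟩ := hmemA o g (by simpa using hg)
        subst hgu
        exact clashA o₂ b₂ _ _ _ (hw1Y o) (hw2Y o) (hwne o)
          (fun h => hw1W o (Set.mem_union_left _ (hLsub ho h)))
          (fun h => hw2W o (Set.mem_union_left _ (hLsub ho h)))
          (hXY _ hu) hg₂
    | false =>
        have hgB : g ∈ TrB o (F o) := by simpa using hg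
        obtain ⟨u, hu, hgu⟩ := hmemB o g hgB
        cases hdat : (F o).2.2 with
        | inl x =>
            obtain ⟨hxX, hxnb, hecov⟩ := hinl o x hdat
            rw [hbaseBl o x hdat] at hgu
            subst hgu
            have hxL : x ∉ Lset o₂ (F o₂) :=
              fun h => hxnb (Set.mem_union_left _ (Set.mem_union_left _ (hLsub ho h)))
            have := clashB o x u hdat hu o₂ b₂ hxL hg₂
            apply hecov
            apply Set.mem_union_left
            apply hTrsub ho
            cases b₂
            · exact Set.mem_union_right _ (by simpa using this)
            · exact Set.mem_union_left _ (by simpa using this)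
        | inr ab =>
            obtain ⟨a, b'⟩ := ab
            obtain ⟨haY, hbY, hab, hanb, hbnb, _⟩ := hinr o a b' hdat
            rw [hbaseBr o a b' hdat] at hgu
            subst hgu
            exact clashA o₂ b₂ _ _ _ haY hbY hab
              (fun h => hanb (Set.mem_union_left _ (Set.mem_union_left _ (hLsub ho h))))
              (fun h => hbnb (Set.mem_union_left _ (Set.mem_union_left _ (hLsub ho h))))
              (hXY _ hu) hg₂
  -- conflicts within the same step
  have same : ∀ (o : O) (g : G), g ∈ TrB o (F o) → g ∈ TrA o (F o) → False := by
    intro o g hgB hgA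
    obtain ⟨u, hu, hgu⟩ := hmemB o g hgB
    obtain ⟨x₀, hx₀, hgx₀⟩ := hmemA o g hgA
    cases hdat : (F o).2.2 with
    | inl x =>
        obtain ⟨hxX, hxnb, hecov⟩ := hinl o x hdat
        rw [hbaseBl o x hdat] at hgu
        have hx1 : x ≠ (F o).1 := fun h => hxnb (Set.mem_union_right _ (by rw [h]; simp))
        have hx2 : x ≠ (F o).2.1 := fun h => hxnb (Set.mem_union_right _ (by rw [h]; simp))
        have hxsupp : (rep (e o)) x = 0 := by
          apply Finsupp.notMem_support_iff.1
          intro h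
          exact hxnb (Set.mem_union_left _ (Set.mem_union_right _ h))
        have hconc := lemB hYind hY2 (hXY _ hxX) (hXY _ hu) (hXY _ hx₀)
          (hrepsupp (e o)) (hsupp2 _ _ (hw1Y o) (hw2Y o)) hxsupp
          (happ2 _ _ _ hx1 hx2)
          (by rw [hrepsum, hTsum2]; exact hgu.symm.trans hgx₀)
        rw [hrepsum, hTsum2] at hconc
        apply hecov
        apply Set.mem_union_right
        rw [hTrA]
        exact ⟨x₀, hx₀, hconc.symm⟩
    | inr ab =>
        obtain ⟨a, b'⟩ := ab
        obtain ⟨haY, hbY, hab, hanb, hbnb, _⟩ := hinr o a b' hdat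
        rw [hbaseBr o a b' hdat] at hgu
        have ha1 : a ≠ (F o).1 := fun h => hanb (Set.mem_union_right _ (by rw [h]; simp))
        have ha2 : a ≠ (F o).2.1 := fun h => hanb (Set.mem_union_right _ (by rw [h]; simp))
        have hb1 : b' ≠ (F o).1 := fun h => hbnb (Set.mem_union_right _ (by rw [h]; simp))
        have hb2 : b' ≠ (F o).2.1 := fun h => hbnb (Set.mem_union_right _ (by rw [h]; simp))
        exact lemA hYind hY2 haY hbY hab (hXY _ hu) (hXY _ hx₀)
          (hsupp2 _ _ (hw1Y o) (hw2Y o)) (happ2 _ _ _ ha1 ha2) (happ2 _ _ _ hb1 hb2)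
          (by rw [hTsum2]; exact hgu.symm.trans hgx₀)
  -- master disjointness
  have master : ∀ (o o₂ : O) (b b₂ : Bool), ¬(o = o₂ ∧ b = b₂) → ∀ g : G,
      g ∈ (if b then TrA o (F o) else TrB o (F o)) →
      g ∈ (if b₂ then TrA o₂ (F o₂) else TrB o₂ (F o₂)) → False := by
    intro o o₂ b b₂ hne g hg hg₂
    rcases lt_trichotomy o o₂ with h | rfl | h
    · exact later o₂ o h b₂ b g hg₂ hg
    · have hbb : b ≠ b₂ := fun h => hne ⟨rfl, h⟩
      cases b <;> cases b₂
      · exact absurd rfl hbb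
      · exact same o g (by simpa using hg) (by simpa using hg₂)
      · exact same o g (by simpa using hg₂) (by simpa using hg)
      · exact absurd rfl hbb
    · exact later o o₂ h b b₂ g hg hg₂
  -- the assignment
  set σ : J → G := fun j =>
    if h : j ∈ B₀ then baseB (πb.symm ⟨j, h⟩) (F (πb.symm ⟨j, h⟩))
    else (F (πr.symm ⟨j, h⟩)).1 + (F (πr.symm ⟨j, h⟩)).2.1 with hσ
  have hσB : ∀ o : O, σ ((πb o).val) = baseB o (F o) := by
    intro o
    have h : ((πb o : ↥B₀) : J) ∈ B₀ := (πb o).2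
    rw [hσ]
    dsimp only
    rw [dif_pos h]
    have key : ∀ (h' : ((πb o : ↥B₀) : J) ∈ B₀), (⟨(πb o).val, h'⟩ : ↥B₀) = πb o :=
      fun _ => Subtype.ext rfl
    rw [key, Equiv.symm_apply_apply]
  have hσR : ∀ o : O, σ ((πr o).val) = (F o).1 + (F o).2.1 := by
    intro o
    have h : ¬ ((πr o : ↥Rc) : J) ∈ B₀ := (πr o).2
    rw [hσ]
    dsimp only
    rw [dif_neg h]
    have key : ∀ (h' : ((πr o : ↥Rc) : J) ∈ Rc), (⟨(πr o).val, h'⟩ : ↥Rc) = πr o :=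
      fun _ => Subtype.ext rfl
    rw [key, Equiv.symm_apply_apply]
  have hTrAσ : ∀ o : O, ((fun x => σ ((πr o).val) + x) '' X ((πr o).val)) = TrA o (F o) := by
    intro o
    rw [hσR o, hTrA]
  have hTrBσ : ∀ o : O, ((fun x => σ ((πb o).val) + x) '' X ((πb o).val)) = TrB o (F o) := by
    intro o
    rw [hσB o, hTrB]
  refine ⟨σ, ?_, ?_⟩
  · -- pairwise disjoint
    intro i j hij
    simp only [Function.onFun]
    rw [Set.disjoint_left]
    intro g hgi hgj
    by_cases hiB : i ∈ B₀ <;> by_cases hjB : j ∈ B₀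
    · have hi' : ((πb (πb.symm ⟨i, hiB⟩) : ↥B₀) : J) = i := by rw [Equiv.apply_symm_apply]
      have hj' : ((πb (πb.symm ⟨j, hjB⟩) : ↥B₀) : J) = j := by rw [Equiv.apply_symm_apply]
      refine master (πb.symm ⟨i, hiB⟩) (πb.symm ⟨j, hjB⟩) false false ?_ g ?_ ?_
      · rintro ⟨h, -⟩
        exact hij (by rw [← hi', ← hj', h])
      · simp only [Bool.false_eq_true, if_false]
        rw [← hTrBσ, hi']
        exact hgi
      · simp only [Bool.false_eq_true, if_false]
        rw [← hTrBσ, hj']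
        exact hgj
    · have hi' : ((πb (πb.symm ⟨i, hiB⟩) : ↥B₀) : J) = i := by rw [Equiv.apply_symm_apply]
      have hj' : ((πr (πr.symm ⟨j, hjB⟩) : ↥Rc) : J) = j := by rw [Equiv.apply_symm_apply]
      refine master (πb.symm ⟨i, hiB⟩) (πr.symm ⟨j, hjB⟩) false true ?_ g ?_ ?_
      · rintro ⟨-, h⟩
        exact Bool.noConfusion h
      · simp only [Bool.false_eq_true, if_false]
        rw [← hTrBσ, hi']
        exact hgi
      · simp only [if_true]
        rw [← hTrAσ, hj']
        exact hgj
    · have hi' : ((πr (πr.symm ⟨i, hiB⟩) : ↥Rc) : J) = i := by rw [Equiv.apply_symm_apply]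
      have hj' : ((πb (πb.symm ⟨j, hjB⟩) : ↥B₀) : J) = j := by rw [Equiv.apply_symm_apply]
      refine master (πr.symm ⟨i, hiB⟩) (πb.symm ⟨j, hjB⟩) true false ?_ g ?_ ?_
      · rintro ⟨-, h⟩
        exact Bool.noConfusion h
      · simp only [if_true]
        rw [← hTrAσ, hi']
        exact hgi
      · simp only [Bool.false_eq_true, if_false]
        rw [← hTrBσ, hj']
        exact hgj
    · have hi' : ((πr (πr.symm ⟨i, hiB⟩) : ↥Rc) : J) = i := by rw [Equiv.apply_symm_apply]
      have hj' : ((πr (πr.symm ⟨j, hjB⟩) : ↥Rc) : J) = j := by rw [Equiv.apply_symm_apply]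
      refine master (πr.symm ⟨i, hiB⟩) (πr.symm ⟨j, hjB⟩) true true ?_ g ?_ ?_
      · rintro ⟨h, -⟩
        exact hij (by rw [← hi', ← hj', h])
      · simp only [if_true]
        rw [← hTrAσ, hi']
        exact hgi
      · simp only [if_true]
        rw [← hTrAσ, hj']
        exact hgj
  · -- the union
    apply Set.Subset.antisymm
    · apply Set.iUnion_subset
      rintro j g ⟨x, hx, rfl⟩
      have hσV : σ j ∈ Submodule.span ℤ Y := by
        rw [hσ]
        dsimp only
        split_ifs with h
        · set o' := πb.symm ⟨j, h⟩ with ho'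
          cases hdat : (F o').2.2 with
          | inl x' =>
              rw [hbaseBl o' x' hdat]
              exact Submodule.sub_mem _ (e o').2 (Submodule.subset_span
                (hXY _ (hinl o' x' hdat).1))
          | inr ab =>
              obtain ⟨a, b⟩ := ab
              rw [hbaseBr o' a b hdat]
              exact Submodule.add_mem _ (Submodule.subset_span (hinr o' a b hdat).1)
                (Submodule.subset_span (hinr o' a b hdat).2.1)
        · exact Submodule.add_mem _ (Submodule.subset_span (hw1Y _))
            (Submodule.subset_span (hw2Y _))
      exact Submodule.add_mem _ hσV (Submodule.subset_span (hXY _ hx))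
    · intro g hg
      set o := e.symm ⟨g, hg⟩ with ho
      have hge : ((e o : ↥Vs) : G) = g := by rw [ho, Equiv.apply_symm_apply]
      have hsubU : ∀ o' : O, TrA o' (F o') ∪ TrB o' (F o') ⊆
          ⋃ j, (fun x => σ j + x) '' X j := by
        intro o' g' hg'
        cases hg' with
        | inl h => exact Set.mem_iUnion.2 ⟨(πr o').val, by rw [hTrAσ o']; exact h⟩
        | inr h => exact Set.mem_iUnion.2 ⟨(πb o').val, by rw [hTrBσ o']; exact h⟩
      cases hdat : (F o).2.2 with
      | inl x =>
          apply hsubU o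
          apply Set.mem_union_right
          rw [hTrB]
          refine ⟨x, (hinl o x hdat).1, ?_⟩
          show baseB o (F o) + x = g
          rw [hbaseBl o x hdat, ← hge]
          abel
      | inr ab =>
          obtain ⟨a, b⟩ := ab
          have hcov := (hinr o a b hdat).2.2.2.2.2
          rw [← hge]
          cases hcov with
          | inl hP =>
              rw [hPrior] at hP
              obtain ⟨o', ho', hmem⟩ := Set.mem_iUnion₂.1 hP
              exact hsubU o' hmem
          | inr hA => exact hsubU o (Set.mem_union_left _ hA)

end TPG

open TPG Cardinal Set

theorem translates_partition_of_group {G I : Type} [AddCommGroup G]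
    (Y : Set G) (hYinf : Y.Infinite) (hYind : IsIndependentSet Y)
    (hY2 : ∀ y ∈ Y, y + y ≠ 0)
    (hI : Cardinal.mk I = Cardinal.mk G)
    (X : I → Set G) (hXY : ∀ i, X i ⊆ Y) (hXne : ∀ i, (X i).Nonempty)
    (hbig : Cardinal.mk {i : I // Cardinal.mk (X i) = Cardinal.mk Y} = Cardinal.mk I) :
    ∃ ρ : I → G, Pairwise (Function.onFun Disjoint (fun i => (fun x => ρ i + x) '' X i)) ∧
      (⋃ i, (fun x => ρ i + x) '' X i) = Set.univ := by
  classical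
  have hlamY : ℵ₀ ≤ #↥Y := by
    have := hYinf.to_subtype
    exact Cardinal.aleph0_le_mk ↥Y
  set Vs : Set G := (Submodule.span ℤ Y : Set G) with hVsdef
  have hYV : Y ⊆ Vs := Submodule.subset_span
  have hV : #↥Vs = #↥Y := by
    apply le_antisymm
    · have hrep0 : ∀ v : ↥Vs, ∃ f : G →₀ ℤ, ↑f.support ⊆ Y ∧ Tsum f = (v : G) := by
        intro v
        obtain ⟨f, hf1, hf2⟩ := Submodule.mem_span_set.1 v.2
        exact ⟨f, hf1, by rw [Tsum_def]; exact hf2⟩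
      choose rep hrepsupp hrepsum using hrep0
      have hinj : Function.Injective (fun v : ↥Vs =>
          (⟨rep v, hrepsupp v⟩ : {f : G →₀ ℤ // ↑f.support ⊆ Y})) := by
        intro v w hvw
        have : rep v = rep w := congrArg Subtype.val hvw
        apply Subtype.ext
        rw [← hrepsum v, ← hrepsum w, this]
      calc #↥Vs ≤ #{f : G →₀ ℤ // ↑f.support ⊆ Y} := Cardinal.mk_le_of_injective hinj
        _ = #(↥Y →₀ ℤ) := Cardinal.mk_congr (Finsupp.restrictSupportEquiv Y ℤ)
        _ = #↥Y := by
            have := hYinf.to_subtype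
            rw [Cardinal.mk_finsupp_of_infinite ↥Y ℤ, Cardinal.mk_int]
            exact max_eq_left hlamY
    · exact Cardinal.mk_le_mk_of_subset hYV
  set H : AddSubgroup G := (Submodule.span ℤ Y).toAddSubgroup with hHdef
  set Q := G ⧸ H with hQdef
  have hHVs : #↥H = #↥Vs := rfl
  have hGQ : #G = #Q * #↥Y := by
    calc #G = #(Q × ↥H) :=
          Cardinal.mk_congr (AddSubgroup.addGroupEquivQuotientProdAddSubgroup (s := H))
      _ = #Q * #↥H := by
          rw [Cardinal.mk_prod]
          simp only [Cardinal.lift_id]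
      _ = #Q * #↥Y := by rw [hHVs, hV]
  obtain ⟨ebig⟩ : Nonempty ({i : I // #↥(X i) = #↥Y} ≃ Q × ↥Y) := by
    apply Cardinal.eq.1
    rw [hbig, hI, hGQ, Cardinal.mk_prod, Cardinal.lift_id, Cardinal.lift_id]
  obtain ⟨eI⟩ : Nonempty (I ≃ Q × ↥Y) := by
    apply Cardinal.eq.1
    rw [hI, hGQ, Cardinal.mk_prod, Cardinal.lift_id, Cardinal.lift_id]
  set c : I → Q := fun i =>
    if h : #↥(X i) = #↥Y then (ebig ⟨i, h⟩).1 else (eI i).1 with hc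
  -- the fibers
  have hcbig : ∀ (i : I) (h : #↥(X i) = #↥Y), c i = (ebig ⟨i, h⟩).1 := by
    intro i h
    rw [hc]
    dsimp only
    rw [dif_pos h]
  have hcsmall : ∀ (i : I), ¬(#↥(X i) = #↥Y) → c i = (eI i).1 := by
    intro i h
    rw [hc]
    dsimp only
    rw [dif_neg h]
  have hfib_ge : ∀ q : Q, ∃ fmap : ↥Y → {i : I // c i = q}, Function.Injective fmap ∧
      ∀ y, #↥(X (fmap y).val) = #↥Y := by
    intro q
    refine ⟨fun y => ⟨(ebig.symm (q, y)).val, ?_⟩, ?_, fun y => (ebig.symm (q, y)).2⟩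
    · rw [hcbig _ (ebig.symm (q, y)).2]
      have h0 : (⟨(ebig.symm (q, y)).val, (ebig.symm (q, y)).2⟩ :
          {i : I // #↥(X i) = #↥Y}) = ebig.symm (q, y) := Subtype.ext rfl
      rw [h0, Equiv.apply_symm_apply]
    · intro y y' hyy
      have h0 := congrArg (fun z : {i : I // c i = q} => z.val) hyy
      have h0' : (ebig.symm (q, y)).val = (ebig.symm (q, y')).val := h0
      have h2 := ebig.symm.injective (Subtype.ext h0')
      exact (Prod.ext_iff.1 h2).2
  have hfib_card : ∀ q : Q, #{i : I // c i = q} = #↥Y := by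
    intro q
    apply le_antisymm
    · have hinj : Function.Injective (fun j : {i : I // c i = q} =>
          if h : #↥(X j.val) = #↥Y then Sum.inl (ebig ⟨j.val, h⟩).2
          else Sum.inr (eI j.val).2 : {i : I // c i = q} → ↥Y ⊕ ↥Y) := by
        rintro ⟨i, hi⟩ ⟨i', hi'⟩ hii
        dsimp only at hii
        by_cases h : #↥(X i) = #↥Y <;> by_cases h' : #↥(X i') = #↥Y
        · rw [dif_pos h, dif_pos h'] at hii
          have h2 : ebig ⟨i, h⟩ = ebig ⟨i', h'⟩ := by
            apply Prod.ext
            · rw [← hcbig i h, ← hcbig i' h', hi, hi']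
            · exact Sum.inl.inj hii
          have h3 : i = i' := congrArg Subtype.val (ebig.injective h2)
          exact Subtype.ext h3
        · rw [dif_pos h, dif_neg h'] at hii
          exact absurd hii (by simp)
        · rw [dif_neg h, dif_pos h'] at hii
          exact absurd hii (by simp)
        · rw [dif_neg h, dif_neg h'] at hii
          have h2 : eI i = eI i' := by
            apply Prod.ext
            · rw [← hcsmall i h, ← hcsmall i' h', hi, hi']
            · exact Sum.inr.inj hii
          exact Subtype.ext (eI.injective h2)
      calc #{i : I // c i = q} ≤ #(↥Y ⊕ ↥Y) := Cardinal.mk_le_of_injective hinj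
        _ = #↥Y := by
            rw [Cardinal.mk_sum]
            simp only [Cardinal.lift_id]
            exact Cardinal.add_eq_self hlamY
    · obtain ⟨fmap, hfinj, -⟩ := hfib_ge q
      exact Cardinal.mk_le_of_injective hfinj
  have hfib_big : ∀ q : Q,
      #{j : {i : I // c i = q} // #↥(X j.val) = #↥Y} = #↥Y := by
    intro q
    apply le_antisymm
    · calc #{j : {i : I // c i = q} // #↥(X j.val) = #↥Y}
          ≤ #{i : I // c i = q} := Cardinal.mk_set_le _
        _ = #↥Y := hfib_card q
    · obtain ⟨fmap, hfinj, hfbig⟩ := hfib_ge q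
      have hinj : Function.Injective (fun y : ↥Y =>
          (⟨fmap y, hfbig y⟩ : {j : {i : I // c i = q} // #↥(X j.val) = #↥Y})) := by
        intro y y' hyy
        exact hfinj (congrArg Subtype.val hyy)
      exact Cardinal.mk_le_of_injective hinj
  -- apply the core theorem on each fiber
  have hcore : ∀ q : Q, ∃ σ : {i : I // c i = q} → G,
      Pairwise (Function.onFun Disjoint (fun j => (fun x => σ j + x) '' X j.val)) ∧
      (⋃ j, (fun x => σ j + x) '' X j.val) = Vs := by
    intro q
    exact core Y hYinf hYind hY2 (hfib_card q) (fun j => X j.val)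
      (fun j => hXY j.val) (fun j => hXne j.val) (hfib_big q)
  choose σ hdisj hunion using hcore
  set t : Q → G := fun q => Quotient.out q with ht
  have htq : ∀ q : Q, QuotientAddGroup.mk (s := H) (t q) = q := fun q =>
    QuotientAddGroup.out_eq' q
  set τ : I → G := fun i => σ (c i) ⟨i, rfl⟩ with hτdef
  have hτ : ∀ (q : Q) (i : I) (h : c i = q), τ i = σ q ⟨i, h⟩ := by
    intro q i h
    subst h
    rfl
  set ρ : I → G := fun i => t (c i) + τ i with hρ
  have hmemVs : ∀ (q : Q) (j : {i : I // c i = q}) (x : G), x ∈ X j.val →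
      σ q j + x ∈ Vs := by
    intro q j x hx
    rw [← hunion q]
    exact Set.mem_iUnion.2 ⟨j, ⟨x, hx, rfl⟩⟩
  have hclass : ∀ (i : I) (g : G), g ∈ (fun x => ρ i + x) '' X i →
      QuotientAddGroup.mk (s := H) g = c i := by
    intro i g hg
    obtain ⟨x, hx, rfl⟩ := hg
    have h1 : τ i + x ∈ H := hmemVs (c i) ⟨i, rfl⟩ x hx
    have h2 : ρ i + x = t (c i) + (τ i + x) := by
      rw [hρ]
      dsimp only
      rw [add_assoc]
    show QuotientAddGroup.mk (ρ i + x) = c i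
    rw [h2, QuotientAddGroup.mk_add, (QuotientAddGroup.eq_zero_iff _).2 h1, add_zero, htq]
  refine ⟨ρ, ?_, ?_⟩
  · intro i j hij
    simp only [Function.onFun]
    rw [Set.disjoint_left]
    intro g hgi hgj
    have hq : c i = c j := by
      rw [← hclass i g hgi, ← hclass j g hgj]
    have hgi' : g - t (c i) ∈ (fun x => σ (c i) ⟨i, rfl⟩ + x) '' X i := by
      obtain ⟨x, hx, hxe⟩ := hgi
      refine ⟨x, hx, ?_⟩
      dsimp only
      rw [← hxe, hρ]
      dsimp only
      show τ i + x = t (c i) + τ i + x - t (c i)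
      abel
    have hgj' : g - t (c i) ∈ (fun x => σ (c i) ⟨j, hq.symm⟩ + x) '' X j := by
      obtain ⟨x, hx, hxe⟩ := hgj
      refine ⟨x, hx, ?_⟩
      dsimp only
      rw [← hτ (c i) j hq.symm, ← hxe, hρ]
      dsimp only
      show τ j + x = t (c j) + τ j + x - t (c i)
      rw [hq]
      abel
    have hne : (⟨i, rfl⟩ : {a : I // c a = c i}) ≠ ⟨j, hq.symm⟩ :=
      fun h => hij (congrArg Subtype.val h)
    exact Set.disjoint_left.1 (hdisj (c i) hne) hgi' hgj'
  · rw [Set.eq_univ_iff_forall]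
    intro g
    set q : Q := QuotientAddGroup.mk (s := H) g with hqdef
    have hv : g - t q ∈ Vs := by
      have h0 : QuotientAddGroup.mk (s := H) (g - t q) = 0 := by
        rw [QuotientAddGroup.mk_sub, htq, ← hqdef, sub_self]
      exact (QuotientAddGroup.eq_zero_iff _).1 h0
    rw [← hunion q] at hv
    obtain ⟨j, hgS⟩ := Set.mem_iUnion.1 hv
    obtain ⟨x, hx, hxe⟩ := hgS
    refine Set.mem_iUnion.2 ⟨j.val, ⟨x, hx, ?_⟩⟩
    dsimp only
    rw [hρ]
    dsimp only
    have hτj : τ j.val = σ q j := by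
      rw [hτ q j.val j.2, Subtype.coe_eta]
    rw [hτj, j.2, add_assoc]
    dsimp only at hxe
    rw [hxe]
    abel
end

section
/- Let G be an abelian group, A and B subsets of an independent set Y ⊆ G with no elements of order 2, and θ ∈ G with θ ∉ B. Then there are at most 3 elements t ∈ G with θ ∈ t + A and (t + A) ∩ B ≠ ∅. -/
lemma key_pair {G : Type*} [AddCommGroup G] (Y : Set G)
    (hYind : IsIndependentSet Y) (hY2 : ∀ y ∈ Y, y + y ≠ 0)
    {a₁ a₁' b₁ a₂ a₂' b₂ : G}
    (m1 : a₁ ∈ Y) (m2 : a₁' ∈ Y) (m3 : b₁ ∈ Y) (m4 : a₂ ∈ Y) (m5 : a₂' ∈ Y) (m6 : b₂ ∈ Y)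
    (heq : a₁ - a₁' + b₁ = a₂ - a₂' + b₂)
    (h12 : a₁ ≠ a₂) (h11 : a₁ ≠ a₁') :
    b₂ = a₁ ∨ (b₁ = a₁ ∧ a₂' = a₁) := by
  set f : G →₀ ℤ := Finsupp.single a₁ 1 + Finsupp.single b₁ 1 + Finsupp.single a₂' 1
    - Finsupp.single a₁' 1 - Finsupp.single a₂ 1 - Finsupp.single b₂ 1 with hf
  have hsupp : ↑f.support ⊆ Y := by
    intro x hx
    simp only [Finset.mem_coe, Finsupp.mem_support_iff, hf, Finsupp.add_apply,
      Finsupp.sub_apply] at hx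
    by_contra hxY
    apply hx
    rw [Finsupp.single_eq_of_ne' (fun h : a₁ = x => hxY (h ▸ m1)),
      Finsupp.single_eq_of_ne' (fun h : b₁ = x => hxY (h ▸ m3)),
      Finsupp.single_eq_of_ne' (fun h : a₂' = x => hxY (h ▸ m5)),
      Finsupp.single_eq_of_ne' (fun h : a₁' = x => hxY (h ▸ m2)),
      Finsupp.single_eq_of_ne' (fun h : a₂ = x => hxY (h ▸ m4)),
      Finsupp.single_eq_of_ne' (fun h : b₂ = x => hxY (h ▸ m6))]
    ring
  have hsum : (f.sum fun x k => k • x) = 0 := by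
    have : (Finsupp.linearCombination ℤ (id : G → G)) f = 0 := by
      simp only [hf, map_add, map_sub, Finsupp.linearCombination_single, one_smul, id_eq]
      rw [show a₁ + b₁ + a₂' - a₁' - a₂ - b₂ = (a₁ - a₁' + b₁) - (a₂ - a₂' + b₂) by abel,
        heq, sub_self]
    rw [Finsupp.linearCombination_apply] at this
    simpa using this
  have hcoef : f a₁ • a₁ = 0 := by
    by_cases h : a₁ ∈ f.support
    · exact hYind.2 f hsupp hsum a₁ h
    · rw [Finsupp.notMem_support_iff.mp h, zero_smul]
  have hne0 : a₁ ≠ 0 := fun h => hYind.1 (h ▸ m1)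
  have h2t : a₁ + a₁ ≠ 0 := hY2 a₁ m1
  rcases eq_or_ne b₂ a₁ with hr | hr
  · exact Or.inl hr
  by_cases hp : b₁ = a₁ <;> by_cases hq : a₂' = a₁
  · exact Or.inr ⟨hp, hq⟩
  · exfalso
    have hv : f a₁ = 2 := by
      simp only [hf, Finsupp.add_apply, Finsupp.sub_apply, hp, Finsupp.single_eq_same,
        Finsupp.single_eq_of_ne' (Ne.symm h11), Finsupp.single_eq_of_ne' (Ne.symm h12),
        Finsupp.single_eq_of_ne' hr, Finsupp.single_eq_of_ne' hq]
      ring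
    rw [hv, two_zsmul] at hcoef
    exact h2t hcoef
  · exfalso
    have hv : f a₁ = 2 := by
      simp only [hf, Finsupp.add_apply, Finsupp.sub_apply, hq, Finsupp.single_eq_same,
        Finsupp.single_eq_of_ne' (Ne.symm h11), Finsupp.single_eq_of_ne' (Ne.symm h12),
        Finsupp.single_eq_of_ne' hr, Finsupp.single_eq_of_ne' hp]
      ring
    rw [hv, two_zsmul] at hcoef
    exact h2t hcoef
  · exfalso
    have hv : f a₁ = 1 := by
      simp only [hf, Finsupp.add_apply, Finsupp.sub_apply, Finsupp.single_eq_same,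
        Finsupp.single_eq_of_ne' (Ne.symm h11), Finsupp.single_eq_of_ne' (Ne.symm h12),
        Finsupp.single_eq_of_ne' hr, Finsupp.single_eq_of_ne' hp, Finsupp.single_eq_of_ne' hq]
      ring
    rw [hv, one_zsmul] at hcoef
    exact hne0 hcoef

theorem at_most_three_bad_translates {G : Type*} [AddCommGroup G]
    (Y : Set G) (hYind : IsIndependentSet Y) (hY2 : ∀ y ∈ Y, y + y ≠ 0)
    (A B : Set G) (hA : A ⊆ Y) (hB : B ⊆ Y) (θ : G) (hθ : θ ∉ B) :
    Cardinal.mk {t : G // θ ∈ (fun a => t + a) '' A ∧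
      (((fun a => t + a) '' A) ∩ B).Nonempty} ≤ 3 := by
  by_contra hcon
  push_neg at hcon
  have h3 : ((3 : ℕ) : Cardinal) < Cardinal.mk {t : G // θ ∈ (fun a => t + a) '' A ∧
      (((fun a => t + a) '' A) ∩ B).Nonempty} := by exact_mod_cast hcon
  have h4 : Cardinal.mk (ULift (Fin 4)) ≤ Cardinal.mk {t : G // θ ∈ (fun a => t + a) '' A ∧
      (((fun a => t + a) '' A) ∩ B).Nonempty} := by
    rw [Cardinal.mk_fintype]
    simp only [Fintype.card_ulift, Fintype.card_fin]
    rw [show (4:ℕ) = (3:ℕ).succ from rfl, Cardinal.nat_succ]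
    exact Order.succ_le_of_lt h3
  rw [Cardinal.le_def] at h4
  obtain ⟨e0⟩ := h4
  let e := (Equiv.ulift.symm.toEmbedding).trans e0
  -- extract data
  have h1 : ∀ i : Fin 4, ∃ x, x ∈ A ∧ (e i).1 + x = θ := fun i => (e i).2.1
  have h2 : ∀ i : Fin 4, ∃ x, (x ∈ A ∧ ∃ c, c ∈ B ∧ (e i).1 + x = c) := by
    intro i
    obtain ⟨c, ⟨x, hxA, hxc⟩, hcB⟩ := (e i).2.2
    exact ⟨x, hxA, c, hcB, hxc⟩
  choose a haA hta using h1
  choose a' ha'A b hbB htab using h2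
  -- a is injective
  have hainj : Function.Injective a := by
    intro i j hij
    apply e.injective
    apply Subtype.ext
    have h1 := hta i
    rw [hij] at h1
    exact add_right_cancel (h1.trans (hta j).symm)
  -- a i ≠ a' i
  have hne : ∀ i, a i ≠ a' i := by
    intro i h
    apply hθ
    have hb : b i = θ := by rw [← htab i, ← h]; exact hta i
    exact hb ▸ hbB i
  -- key equation
  have hkey : ∀ i, a i - a' i + b i = θ := by
    intro i
    rw [← htab i, show a i - a' i + (↑(e i) + a' i) = ↑(e i) + a i by abel]
    exact hta i
  -- pairwise condition
  have hpair : ∀ i j : Fin 4, i ≠ j →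
      b j = a i ∨ (b i = a i ∧ a' j = a i) := by
    intro i j hij
    exact key_pair Y hYind hY2 (hA (haA i)) (hA (ha'A i)) (hB (hbB i))
      (hA (haA j)) (hA (ha'A j)) (hB (hbB j))
      ((hkey i).trans (hkey j).symm)
      (fun h => hij (hainj h)) (hne i)
  -- derived facts
  have F1 : ∀ i j : Fin 4, i ≠ j → b i ≠ a i → b j = a i := by
    intro i j hij hbi
    exact (hpair i j hij).resolve_right (fun h => hbi h.1)
  have F2 : ∀ i j : Fin 4, i ≠ j → b i = a i → b j = a j → a' j = a i := by
    intro i j hij hbi hbj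
    rcases hpair i j hij with h | h
    · exact absurd (hainj (hbj ▸ h)) (Ne.symm hij)
    · exact h.2
  have L1 : ∀ i j k : Fin 4, i ≠ j → i ≠ k → j ≠ k → b i ≠ a i → b j ≠ a j → False := by
    intro i j k hij hik hjk hbi hbj
    have e1 := F1 i k hik hbi
    have e2 := F1 j k hjk hbj
    exact hij (hainj (e1.symm.trans e2))
  have L2 : ∀ i j k : Fin 4, i ≠ j → i ≠ k → j ≠ k →
      b i = a i → b j = a j → b k = a k → False := by
    intro i j k hij hik hjk hbi hbj hbk
    have e1 := F2 i k hik hbi hbk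
    have e2 := F2 j k hjk hbj hbk
    exact hij (hainj (e1.symm.trans e2))
  by_cases p0 : b 0 = a 0 <;> by_cases p1 : b 1 = a 1 <;>
    by_cases p2 : b 2 = a 2 <;> by_cases p3 : b 3 = a 3
  · exact L2 0 1 2 (by decide) (by decide) (by decide) p0 p1 p2
  · exact L2 0 1 2 (by decide) (by decide) (by decide) p0 p1 p2
  · exact L2 0 1 3 (by decide) (by decide) (by decide) p0 p1 p3
  · exact L1 2 3 0 (by decide) (by decide) (by decide) p2 p3
  · exact L2 0 2 3 (by decide) (by decide) (by decide) p0 p2 p3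
  · exact L1 1 3 0 (by decide) (by decide) (by decide) p1 p3
  · exact L1 1 2 0 (by decide) (by decide) (by decide) p1 p2
  · exact L1 1 2 0 (by decide) (by decide) (by decide) p1 p2
  · exact L2 1 2 3 (by decide) (by decide) (by decide) p1 p2 p3
  · exact L1 0 3 1 (by decide) (by decide) (by decide) p0 p3
  · exact L1 0 2 1 (by decide) (by decide) (by decide) p0 p2
  · exact L1 0 2 1 (by decide) (by decide) (by decide) p0 p2
  · exact L1 0 1 2 (by decide) (by decide) (by decide) p0 p1
  · exact L1 0 1 2 (by decide) (by decide) (by decide) p0 p1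
  · exact L1 0 1 2 (by decide) (by decide) (by decide) p0 p1
  · exact L1 0 1 2 (by decide) (by decide) (by decide) p0 p1
end

section
/- Let G be an abelian group and A a subset of an independent set Y ⊆ G with no elements of order 2. Then for every θ ∈ G, the set of translates {t + A : t ∈ G, θ ∈ t + A} has cardinality |A|. -/
def transSet {G : Type*} [AddCommGroup G] (A : Set G) (θ a : G) : Set G :=
  (fun x => (θ - a) + x) '' A

lemma key_inj {G : Type*} [AddCommGroup G]
    (Y : Set G) (hYind : IsIndependentSet Y) (hY2 : ∀ y ∈ Y, y + y ≠ 0)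
    (A : Set G) (hA : A ⊆ Y) (θ : G) (a₁ a₂ : G) (ha₁ : a₁ ∈ A) (ha₂ : a₂ ∈ A)
    (h : (fun x => (θ - a₁) + x) '' A = (fun x => (θ - a₂) + x) '' A) :
    a₁ = a₂ := by
  classical
  by_contra hne
  have h2 : (θ - a₁) + a₂ ∈ (fun x => (θ - a₂) + x) '' A := by
    rw [← h]; exact ⟨a₂, ha₂, rfl⟩
  obtain ⟨y, hyA, hy⟩ := h2
  have hyval : y = a₂ - a₁ + a₂ := by
    have h3 : (θ - a₂) + y = (θ - a₁) + a₂ := hy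
    have := congrArg (fun z => z - (θ - a₂)) h3
    simpa using this.trans (by abel)
  have hyY : y ∈ Y := hA hyA
  rcases eq_or_ne y a₂ with h1 | h1
  · apply hne
    have h4 : a₂ - a₁ + a₂ = a₂ := hyval ▸ h1
    have h5 : a₂ - a₁ = 0 := by
      have := congrArg (fun z => z - a₂) h4
      simpa using this
    rw [sub_eq_zero] at h5
    exact h5.symm
  rcases eq_or_ne y a₁ with h0 | h0
  · set f : G →₀ ℤ := Finsupp.single a₂ 2 + Finsupp.single a₁ (-2) with hf
    have hfa₂ : f a₂ = 2 := by
      simp [hf, Finsupp.single_apply, hne, Ne.symm hne]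
    have hsupp : ↑f.support ⊆ Y := by
      intro x hx
      rcases Finset.mem_union.mp (Finsupp.support_add (hf ▸ hx)) with hx' | hx'
      · have := Finsupp.support_single_subset hx'
        simp only [Finset.mem_singleton] at this
        exact this ▸ hA ha₂
      · have := Finsupp.support_single_subset hx'
        simp only [Finset.mem_singleton] at this
        exact this ▸ hA ha₁
    have hsum : (f.sum fun x k => k • x) = 0 := by
      rw [hf, Finsupp.sum_add_index' (by simp) (fun _ m n => add_smul m n _)]
      rw [Finsupp.sum_single_index (by simp), Finsupp.sum_single_index (by simp)]
      have h2a : a₂ - a₁ + a₂ = a₁ := hyval ▸ h0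
      have key : (2:ℤ) • a₂ + (-2:ℤ) • a₁ = 0 := by
        simp only [two_smul, neg_smul]
        calc a₂ + a₂ + -(a₁ + a₁) = (a₂ - a₁ + a₂) - a₁ := by abel
          _ = a₁ - a₁ := by rw [h2a]
          _ = 0 := sub_self _
      exact key
    have := hYind.2 f hsupp hsum a₂ (by simp [Finsupp.mem_support_iff, hfa₂])
    rw [hfa₂, two_smul] at this
    exact hY2 a₂ (hA ha₂) this
  · set f : G →₀ ℤ := Finsupp.single y 1 + Finsupp.single a₁ 1 + Finsupp.single a₂ (-2) with hf
    have hfy : f y = 1 := by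
      simp [hf, Finsupp.single_apply, h0, h1, Ne.symm h0, Ne.symm h1]
    have hsupp : ↑f.support ⊆ Y := by
      intro x hx
      rcases Finset.mem_union.mp (Finsupp.support_add (hf ▸ hx)) with hx' | hx'
      · rcases Finset.mem_union.mp (Finsupp.support_add hx') with hx'' | hx''
        · have := Finsupp.support_single_subset hx''
          simp only [Finset.mem_singleton] at this
          exact this ▸ hyY
        · have := Finsupp.support_single_subset hx''
          simp only [Finset.mem_singleton] at this
          exact this ▸ hA ha₁
      · have := Finsupp.support_single_subset hx'
        simp only [Finset.mem_singleton] at this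
        exact this ▸ hA ha₂
    have hsum : (f.sum fun x k => k • x) = 0 := by
      rw [hf, Finsupp.sum_add_index' (by simp) (fun _ m n => add_smul m n _),
        Finsupp.sum_add_index' (by simp) (fun _ m n => add_smul m n _)]
      rw [Finsupp.sum_single_index (by simp), Finsupp.sum_single_index (by simp),
        Finsupp.sum_single_index (by simp)]
      rw [hyval]
      simp only [one_smul, neg_smul, two_smul]
      abel
    have := hYind.2 f hsupp hsum y (by simp [Finsupp.mem_support_iff, hfy])
    rw [hfy, one_smul] at this
    exact hYind.1 (this ▸ hyY)

theorem card_of_translates_containing_point {G : Type*} [AddCommGroup G]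
    (Y : Set G) (hYind : IsIndependentSet Y) (hY2 : ∀ y ∈ Y, y + y ≠ 0)
    (A : Set G) (hA : A ⊆ Y) (θ : G) :
    Cardinal.mk {T : Set G // (∃ t : G, T = (fun a => t + a) '' A) ∧ θ ∈ T} =
      Cardinal.mk A := by
  let F : A → {T : Set G // (∃ t : G, T = (fun a => t + a) '' A) ∧ θ ∈ T} :=
    fun a => ⟨transSet A θ a.1, ⟨θ - a.1, rfl⟩,
      ⟨a.1, a.2, by simp⟩⟩
  have hinj : Function.Injective F := by
    rintro ⟨a₁, ha₁⟩ ⟨a₂, ha₂⟩ hFa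
    have : (fun x => (θ - a₁) + x) '' A = (fun x => (θ - a₂) + x) '' A := by
      have h' : transSet A θ a₁ = transSet A θ a₂ := congrArg Subtype.val hFa
      exact h'
    exact Subtype.ext (key_inj Y hYind hY2 A hA θ a₁ a₂ ha₁ ha₂ this)
  have hsurj : Function.Surjective F := by
    rintro ⟨T, ⟨t, rfl⟩, hθ⟩
    obtain ⟨a, haA, ha⟩ := hθ
    refine ⟨⟨a, haA⟩, Subtype.ext ?_⟩
    have ht : t = θ - a := by
      have ha' : t + a = θ := ha
      rw [← ha']; abel
    show transSet A θ a = (fun x => t + x) '' A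
    rw [transSet, ht]
  exact Cardinal.mk_congr (Equiv.ofBijective F ⟨hinj, hsurj⟩).symm
end
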